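/- arXiv:1912.09548 — 5 statements merged into one kernel-verified Lean document; each statement's English description precedes it below -/
import Mathlib

section
/- Let R, r be positive real numbers and a, b real numbers such that the three real numbers π·log R, π·log r, and a·log r − b·log R are linearly independent over ℚ. Set z = R·e^{ia} and w = r·e^{ib}. Then the set X = { z^m · w^n : m, n ∈ ℤ } is dense in ℂ. -/
open Complex Real Filter

noncomputable section

namespace DenseZpowAux

/-- The real-linear functional `x ↦ x.im * v.re - x.re * v.im` as an `AddMonoidHom`. -/
def fv (v : ℂ) : ℂ →+ ℝ where
  toFun x := x.im * v.re - x.re * v.im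
  map_zero' := by simp
  map_add' x y := by simp; ring

lemma fv_apply (v x : ℂ) : fv v x = x.im * v.re - x.re * v.im := rfl

lemma perp_decomp (u y : ℂ) (hu : ‖u‖ = 1) :
    y - (y.re * u.re + y.im * u.im) • u = (fv u y) • (Complex.I * u) := by
  have h : ‖u‖ = 1 := hu
  have h2 : Complex.normSq u = 1 := by rw [← Complex.sq_norm, h]; norm_num
  have hu' : u.re * u.re + u.im * u.im = 1 := by
    simpa [Complex.normSq_apply] using h2
  apply Complex.ext
  · simp only [Complex.sub_re, Complex.real_smul, Complex.mul_re, Complex.ofReal_re,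
      Complex.ofReal_im, Complex.I_re, Complex.I_im, fv_apply]
    ring_nf
    linear_combination -y.re * hu'
  · simp only [Complex.sub_im, Complex.real_smul, Complex.mul_im, Complex.ofReal_re,
      Complex.ofReal_im, Complex.I_re, Complex.I_im, fv_apply]
    ring_nf
    linear_combination -y.im * hu'

/-- A subgroup of `ℂ` whose image under every nonzero functional is dense in `ℝ`, and which
has arbitrarily small nonzero elements, is dense. -/
lemma dense_addSubgroup (Γ : AddSubgroup ℂ)
    (hA : ∀ v : ℂ, v ≠ 0 → Dense ((Γ.map (fv v)) : Set ℝ))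
    (hB : ∀ ε : ℝ, 0 < ε → ∃ δ ∈ Γ, δ ≠ 0 ∧ ‖δ‖ < ε) :
    Dense (Γ : Set ℂ) := by
  obtain ⟨u, hu1, huline⟩ : ∃ u : ℂ, ‖u‖ = 1 ∧ ∀ t : ℝ, t • u ∈ closure (Γ : Set ℂ) := by
    have h : ∀ j : ℕ, ∃ δ, δ ∈ Γ ∧ δ ≠ 0 ∧ ‖δ‖ < 1 / (j + 1) := by
      intro j
      obtain ⟨δ, h1, h2, h3⟩ := hB (1 / (j + 1)) (by positivity)
      exact ⟨δ, h1, h2, h3⟩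
    choose δ hδΓ hδne hδlt using h
    have hpos : ∀ j, (0 : ℝ) < ‖δ j‖ := fun j => norm_pos_iff.mpr (hδne j)
    have humem : ∀ j, ‖δ j‖⁻¹ • δ j ∈ Metric.sphere (0 : ℂ) 1 := by
      intro j
      simp only [Metric.mem_sphere, dist_zero_right, norm_smul, norm_inv, norm_norm]
      exact inv_mul_cancel₀ (hpos j).ne'
    obtain ⟨u, hu, φ, hφ, hlim⟩ := (isCompact_sphere (0 : ℂ) 1).tendsto_subseq humem
    refine ⟨u, by simpa using hu, fun t => ?_⟩
    have hnle : ∀ j : ℕ, ‖δ (φ j)‖ ≤ 1 / (j + 1) := by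
      intro j
      refine (hδlt (φ j)).le.trans ?_
      have h1 : (j : ℝ) + 1 ≤ (φ j : ℝ) + 1 := by
        have h0 : j ≤ φ j := hφ.le_apply
        have : (j : ℝ) ≤ (φ j : ℝ) := by exact_mod_cast h0
        linarith
      exact one_div_le_one_div_of_le (by positivity) h1
    have hn0 : Tendsto (fun j => ‖δ (φ j)‖) atTop (nhds 0) :=
      squeeze_zero (fun j => (hpos _).le) hnle tendsto_one_div_add_atTop_nhds_zero_nat
    have hsc : Tendsto (fun j => (⌊t / ‖δ (φ j)‖⌋ : ℝ) * ‖δ (φ j)‖) atTop (nhds t) := by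
      apply tendsto_of_tendsto_of_tendsto_of_le_of_le
        (g := fun j => t - ‖δ (φ j)‖) (h := fun _ => t)
      · simpa using tendsto_const_nhds.sub hn0
      · exact tendsto_const_nhds
      · intro j
        have h1 : t / ‖δ (φ j)‖ - 1 < (⌊t / ‖δ (φ j)‖⌋ : ℝ) := Int.sub_one_lt_floor _
        have h2 := hpos (φ j)
        have h3 : (t / ‖δ (φ j)‖ - 1) * ‖δ (φ j)‖ < (⌊t / ‖δ (φ j)‖⌋ : ℝ) * ‖δ (φ j)‖ :=
          mul_lt_mul_of_pos_right h1 h2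
        have h4 : (t / ‖δ (φ j)‖ - 1) * ‖δ (φ j)‖ = t - ‖δ (φ j)‖ := by
          rw [sub_mul, div_mul_cancel₀ _ (hpos (φ j)).ne', one_mul]
        linarith
      · intro j
        have h2 := hpos (φ j)
        have h1 : (⌊t / ‖δ (φ j)‖⌋ : ℝ) ≤ t / ‖δ (φ j)‖ := Int.floor_le _
        have h3 : (⌊t / ‖δ (φ j)‖⌋ : ℝ) * ‖δ (φ j)‖ ≤ (t / ‖δ (φ j)‖) * ‖δ (φ j)‖ :=
          mul_le_mul_of_nonneg_right h1 h2.le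
        have h4 : (t / ‖δ (φ j)‖) * ‖δ (φ j)‖ = t := div_mul_cancel₀ _ (hpos (φ j)).ne'
        linarith
    have key : Tendsto (fun j => (⌊t / ‖δ (φ j)‖⌋ : ℤ) • δ (φ j)) atTop (nhds (t • u)) := by
      have heq : ∀ j, ((⌊t / ‖δ (φ j)‖⌋ : ℝ) * ‖δ (φ j)‖) • (‖δ (φ j)‖⁻¹ • δ (φ j))
          = (⌊t / ‖δ (φ j)‖⌋ : ℤ) • δ (φ j) := by
        intro j
        rw [smul_smul, ← Int.cast_smul_eq_zsmul ℝ (⌊t / ‖δ (φ j)‖⌋) (δ (φ j))]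
        congr 1
        rw [mul_assoc, mul_inv_cancel₀ (hpos (φ j)).ne', mul_one]
      exact Tendsto.congr heq (hsc.smul hlim)
    refine mem_closure_of_tendsto key (Eventually.of_forall fun j => ?_)
    exact Γ.zsmul_mem (hδΓ (φ j)) _
  intro x
  have hclosed : IsClosed (closure (Γ : Set ℂ)) := isClosed_closure
  rw [← hclosed.closure_eq]
  rw [Metric.mem_closure_iff]
  intro ε hε
  have hune : u ≠ 0 := by
    intro h
    rw [h] at hu1
    simp at hu1
  obtain ⟨s, hsb, hsm⟩ := Metric.dense_iff.mp (hA u hune) (fv u x) ε hε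
  obtain ⟨g, hgΓ, hgs⟩ := AddSubgroup.mem_map.mp hsm
  refine ⟨g + ((x - g).re * u.re + (x - g).im * u.im) • u, ?_, ?_⟩
  · have h1 : g ∈ closure (Γ : Set ℂ) := subset_closure hgΓ
    have h2 := huline ((x - g).re * u.re + (x - g).im * u.im)
    exact AddSubgroup.add_mem Γ.topologicalClosure h1 h2
  · have hdec := perp_decomp u (x - g) hu1
    rw [dist_eq_norm]
    have heq : x - (g + ((x - g).re * u.re + (x - g).im * u.im) • u)
        = (fv u (x - g)) • (Complex.I * u) := by
      rw [← hdec]; abel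
    rw [heq, norm_smul]
    have hIu : ‖Complex.I * u‖ = 1 := by
      rw [norm_mul, Complex.norm_I, one_mul, hu1]
    rw [hIu, mul_one]
    have hfv : fv u (x - g) = fv u x - s := by rw [map_sub, hgs]
    rw [Real.norm_eq_abs, hfv, abs_sub_comm]
    rw [Metric.mem_ball, Real.dist_eq] at hsb
    exact hsb

end DenseZpowAux

open DenseZpowAux

/-- If `π·log R`, `π·log r`, `a·log r − b·log R` are linearly independent
over `ℚ`, then with `z = R·e^{ia}`, `w = r·e^{ib}` the set
`X = { z^m · w^n : m, n ∈ ℤ }` is dense in `ℂ`. -/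
theorem dense_zpow_mul_zpow
    (R r a b : ℝ) (hR : 0 < R) (hr : 0 < r)
    (hli : LinearIndependent ℚ
      ![Real.pi * Real.log R, Real.pi * Real.log r,
        a * Real.log r - b * Real.log R]) :
    Dense {u : ℂ | ∃ m n : ℤ,
      u = ((R : ℂ) * Complex.exp (a * Complex.I)) ^ m *
          ((r : ℂ) * Complex.exp (b * Complex.I)) ^ n} := by
  set L : ℝ := Real.log R with hLdef
  set l : ℝ := Real.log r with hldef
  -- linear independence, restated
  have hcomb : ∀ x y z : ℚ, (x : ℝ) * (π * L) + (y : ℝ) * (π * l)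
      + (z : ℝ) * (a * l - b * L) = 0 → x = 0 ∧ y = 0 ∧ z = 0 := by
    intro x y z h
    have h2 := Fintype.linearIndependent_iff.mp hli ![x, y, z] ?_
    · exact ⟨h2 0, h2 1, h2 2⟩
    · show (∑ i : Fin 3, ![x, y, z] i • ![π * L, π * l, a * l - b * L] i) = 0
      simp only [Fin.sum_univ_three, Matrix.cons_val_zero, Matrix.cons_val_one, Matrix.head_cons,
        Matrix.cons_val_two, Matrix.tail_cons, Rat.smul_def]
      push_cast
      linear_combination h
  have hL : L ≠ 0 := by
    intro h
    have := hcomb 1 0 0 (by rw [h]; push_cast; ring)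
    exact one_ne_zero this.1
  -- the generators
  set c1 : ℂ := (L : ℂ) + (a : ℂ) * Complex.I with hc1
  set c2 : ℂ := (l : ℂ) + (b : ℂ) * Complex.I with hc2
  set c3 : ℂ := ((2 * π : ℝ) : ℂ) * Complex.I with hc3
  have hc1re : c1.re = L := by simp [hc1]
  have hc1im : c1.im = a := by simp [hc1]
  have hc2re : c2.re = l := by simp [hc2]
  have hc2im : c2.im = b := by simp [hc2]
  have hc3re : c3.re = 0 := by simp [hc3]
  have hc3im : c3.im = 2 * π := by simp [hc3]
  set Γ : AddSubgroup ℂ := AddSubgroup.closure {c1, c2, c3} with hΓ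
  have hc1Γ : c1 ∈ Γ := AddSubgroup.subset_closure (by simp)
  have hc2Γ : c2 ∈ Γ := AddSubgroup.subset_closure (by simp)
  have hc3Γ : c3 ∈ Γ := AddSubgroup.subset_closure (by simp)
  -- Step A: every nonzero functional maps Γ to a dense subgroup of ℝ
  have hA : ∀ v : ℂ, v ≠ 0 → Dense ((Γ.map (fv v)) : Set ℝ) := by
    intro v hv
    rcases AddSubgroup.dense_or_cyclic (Γ.map (fv v)) with h | ⟨c, hc⟩
    · exact h
    · exfalso
      have hm1 : fv v c1 ∈ Γ.map (fv v) := AddSubgroup.mem_map_of_mem _ hc1Γ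
      have hm2 : fv v c2 ∈ Γ.map (fv v) := AddSubgroup.mem_map_of_mem _ hc2Γ
      have hm3 : fv v c3 ∈ Γ.map (fv v) := AddSubgroup.mem_map_of_mem _ hc3Γ
      rw [hc] at hm1 hm2 hm3
      obtain ⟨n1, hn1⟩ := AddSubgroup.mem_closure_singleton.mp hm1
      obtain ⟨n2, hn2⟩ := AddSubgroup.mem_closure_singleton.mp hm2
      obtain ⟨n3, hn3⟩ := AddSubgroup.mem_closure_singleton.mp hm3
      rw [zsmul_eq_mul] at hn1 hn2 hn3
      have e1 : a * v.re - L * v.im = (n1 : ℝ) * c := by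
        rw [hn1, fv_apply, hc1re, hc1im]
      have e2 : b * v.re - l * v.im = (n2 : ℝ) * c := by
        rw [hn2, fv_apply, hc2re, hc2im]
      have e3 : 2 * π * v.re = (n3 : ℝ) * c := by
        rw [hn3, fv_apply, hc3re, hc3im]; ring
      have hzero : a * v.re - L * v.im = 0 ∧ b * v.re - l * v.im = 0 ∧ 2 * π * v.re = 0 := by
        have key : (2 * π * n1 * l - 2 * π * n2 * L - n3 * (a * l - b * L)) * c = 0 := by
          linear_combination (2 * π * L) * e2 + (a * l - b * L) * e3 - (2 * π * l) * e1
        rcases mul_eq_zero.mp key with h | h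
        · obtain ⟨h1, h2, h3⟩ := hcomb (-2 * n2) (2 * n1) (-n3) (by push_cast; linarith)
          have hn1' : (n1 : ℝ) = 0 := by
            have : (n1 : ℚ) = 0 := by linarith
            exact_mod_cast this
          have hn2' : (n2 : ℝ) = 0 := by
            have : (n2 : ℚ) = 0 := by linarith
            exact_mod_cast this
          have hn3' : (n3 : ℝ) = 0 := by
            have : (n3 : ℚ) = 0 := by linarith
            exact_mod_cast this
          rw [hn1', zero_mul] at e1
          rw [hn2', zero_mul] at e2
          rw [hn3', zero_mul] at e3
          exact ⟨e1, e2, e3⟩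
        · rw [h, mul_zero] at e1 e2 e3
          exact ⟨e1, e2, e3⟩
      obtain ⟨z1, z2, z3⟩ := hzero
      have hvre : v.re = 0 := by
        have hπ : (0:ℝ) < π := Real.pi_pos
        nlinarith
      have hvim : v.im = 0 := by
        rw [hvre] at z1
        rcases mul_eq_zero.mp (by linarith : L * v.im = 0) with h | h
        · exact absurd h hL
        · exact h
      exact hv (Complex.ext hvre hvim)
  -- Step B : arbitrarily small nonzero elements
  have hB : ∀ ε : ℝ, 0 < ε → ∃ δ ∈ Γ, δ ≠ 0 ∧ ‖δ‖ < ε := by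
    intro ε hε
    have hvne : (-Complex.I : ℂ) ≠ 0 := by
      simp
    have hreD : Dense ((Γ.map (fv (-Complex.I))) : Set ℝ) := hA _ hvne
    have hfvI : ∀ x : ℂ, fv (-Complex.I) x = x.re := by
      intro x; rw [fv_apply]; simp
    have hseq : ∀ j : ℕ, ∃ γ, γ ∈ Γ ∧ γ.re ∈ Set.Ioo (1 / ((j : ℝ) + 2)) (1 / ((j : ℝ) + 1))
        ∧ γ.im ∈ Set.Ico 0 (2 * π) := by
      intro j
      have hlt : (1 : ℝ) / ((j : ℝ) + 2) < 1 / ((j : ℝ) + 1) := by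
        apply one_div_lt_one_div_of_lt
        · positivity
        · linarith
      obtain ⟨sval, hsmem, hsIoo⟩ := hreD.exists_between hlt
      obtain ⟨γ0, hγ0Γ, hγ0s⟩ := AddSubgroup.mem_map.mp hsmem
      have hγ0re : γ0.re = sval := by rw [← hγ0s, hfvI]
      set k : ℤ := ⌊γ0.im / (2 * π)⌋ with hk
      refine ⟨γ0 + (-k) • c3, AddSubgroup.add_mem Γ hγ0Γ (Γ.zsmul_mem hc3Γ _), ?_, ?_⟩
      · have : (γ0 + (-k) • c3).re = γ0.re := by
          rw [zsmul_eq_mul, Complex.add_re, Complex.mul_re]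
          simp [hc3re, hc3im]
        rw [this, hγ0re]
        exact hsIoo
      · have him : (γ0 + (-k) • c3).im = γ0.im - k * (2 * π) := by
          rw [zsmul_eq_mul, Complex.add_im, Complex.mul_im]
          simp [hc3re, hc3im]
          ring
        rw [him]
        have hπ : (0:ℝ) < 2 * π := by positivity
        constructor
        · exact Int.sub_floor_div_mul_nonneg γ0.im hπ
        · exact Int.sub_floor_div_mul_lt γ0.im hπ
    choose γ hγΓ hγre hγim using hseq
    have hmem : ∀ j, γ j ∈ Metric.closedBall (0 : ℂ) (1 + 2 * π) := by
      intro j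
      rw [Metric.mem_closedBall, dist_zero_right]
      have h1 := Complex.norm_le_abs_re_add_abs_im (γ j)
      have h2 : |(γ j).re| ≤ 1 := by
        have ha := (hγre j).1
        have hb := (hγre j).2
        have hc : (0:ℝ) < 1 / ((j : ℝ) + 2) := by positivity
        have hd : 1 / ((j : ℝ) + 1) ≤ 1 := by
          rw [div_le_one (by positivity)]
          linarith
        rw [abs_le]
        constructor <;> linarith
      have h3 : |(γ j).im| ≤ 2 * π := by
        have ha := (hγim j).1
        have hb := (hγim j).2
        rw [abs_le]
        constructor <;> linarith
      linarith
    obtain ⟨x0, -, φ, hφ, hlim⟩ := (isCompact_closedBall (0 : ℂ) (1 + 2 * π)).tendsto_subseq hmem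
    have hc := hlim.cauchySeq
    obtain ⟨N, hN⟩ := Metric.cauchySeq_iff'.mp hc ε hε
    refine ⟨γ (φ (N + 1)) - γ (φ N), AddSubgroup.sub_mem Γ (hγΓ _) (hγΓ _), ?_, ?_⟩
    · intro h
      have hre2 : (γ (φ (N + 1))).re = (γ (φ N)).re := by
        have := congrArg Complex.re h
        rw [Complex.sub_re, Complex.zero_re] at this
        linarith
      have h1 : φ N + 1 ≤ φ (N + 1) := hφ (Nat.lt_succ_self N)
      have hlt : (γ (φ (N + 1))).re < (γ (φ N)).re := by
        calc (γ (φ (N + 1))).re < 1 / ((φ (N + 1) : ℝ) + 1) := (hγre _).2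
          _ ≤ 1 / ((φ N : ℝ) + 2) := by
              apply one_div_le_one_div_of_le
              · positivity
              · push_cast
                have : (φ N : ℝ) + 1 ≤ (φ (N + 1) : ℝ) := by exact_mod_cast h1
                linarith
          _ < (γ (φ N)).re := (hγre _).1
      rw [hre2] at hlt
      exact lt_irrefl _ hlt
    · have := hN (N + 1) (Nat.le_succ N)
      rwa [Function.comp_apply, Function.comp_apply, dist_eq_norm] at this
  -- Γ is dense
  have hdense : Dense (Γ : Set ℂ) := dense_addSubgroup Γ hA hB
  -- transfer by exp
  set zc : ℂ := (R : ℂ) * Complex.exp ((a : ℂ) * Complex.I) with hzc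
  set wc : ℂ := (r : ℂ) * Complex.exp ((b : ℂ) * Complex.I) with hwc
  have hzc0 : zc ≠ 0 := mul_ne_zero (by exact_mod_cast hR.ne') (Complex.exp_ne_zero _)
  have hwc0 : wc ≠ 0 := mul_ne_zero (by exact_mod_cast hr.ne') (Complex.exp_ne_zero _)
  set X : Set ℂ := {u : ℂ | ∃ m n : ℤ, u = zc ^ m * wc ^ n} with hX
  have hexp1 : Complex.exp c1 = zc := by
    rw [hc1, Complex.exp_add, hzc]
    congr 1
    rw [← Complex.ofReal_exp, hLdef, Real.exp_log hR]
  have hexp2 : Complex.exp c2 = wc := by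
    rw [hc2, Complex.exp_add, hwc]
    congr 1
    rw [← Complex.ofReal_exp, hldef, Real.exp_log hr]
  have hexp3 : Complex.exp c3 = 1 := by
    rw [hc3]
    push_cast
    exact Complex.exp_two_pi_mul_I
  have hXexp : ∀ γ₀ ∈ Γ, Complex.exp γ₀ ∈ X := by
    intro γ₀ hγ₀
    refine AddSubgroup.closure_induction
      (p := fun g _ => Complex.exp g ∈ X) ?_ ?_ ?_ ?_ hγ₀
    · intro x hx
      rcases hx with rfl | rfl | rfl
      · exact ⟨1, 0, by rw [hexp1]; simp⟩
      · exact ⟨0, 1, by rw [hexp2]; simp⟩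
      · exact ⟨0, 0, by rw [hexp3]; simp⟩
    · exact ⟨0, 0, by simp [Complex.exp_zero]⟩
    · rintro x y hx hy ⟨m1, n1, h1⟩ ⟨m2, n2, h2⟩
      refine ⟨m1 + m2, n1 + n2, ?_⟩
      rw [Complex.exp_add, h1, h2, zpow_add₀ hzc0, zpow_add₀ hwc0]
      ring
    · rintro x hx ⟨m1, n1, h1⟩
      refine ⟨-m1, -n1, ?_⟩
      rw [Complex.exp_neg, h1, zpow_neg, zpow_neg, mul_inv]
  have h0 : {(0 : ℂ)}ᶜ ⊆ closure X := by
    intro x hx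
    have hx0 : x ≠ 0 := hx
    have hlog : Complex.log x ∈ closure (Γ : Set ℂ) := hdense _
    have hmem : x ∈ Complex.exp '' closure (Γ : Set ℂ) :=
      ⟨Complex.log x, hlog, Complex.exp_log hx0⟩
    have hsub : Complex.exp '' closure (Γ : Set ℂ) ⊆ closure (Complex.exp '' (Γ : Set ℂ)) :=
      image_closure_subset_closure_image Complex.continuous_exp
    refine closure_mono ?_ (hsub hmem)
    rintro _ ⟨g, hg, rfl⟩
    exact hXexp g hg
  have hXc : Dense (closure X) := Dense.mono h0 (dense_compl_singleton 0)
  rw [← dense_closure]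
  exact hXc
end
end

section
/- Let R, r be positive real numbers and a, b real numbers such that the three real numbers π·log R, π·log r, and a·log r − b·log R are linearly independent over ℚ. Then the set X' = { (m·log R − n·log r, m·a − n·b + 2k·π) : m, n, k ∈ ℤ } is dense in ℝ². -/
lemma aux_closed_subgroup_top
    (H : AddSubgroup ℝ) (hH : IsClosed (H : Set ℝ))
    (u w : ℝ) (hu : u ∈ H) (hw : w ∈ H)
    (hrel : ∀ p q : ℤ, (p : ℝ) * u = (q : ℝ) * w → p = 0 ∧ q = 0) :
    ∀ x : ℝ, x ∈ H := by
  rcases AddSubgroup.dense_or_cyclic H with hd | ⟨c, hc⟩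
  · intro x
    have h1 : (H : Set ℝ) = Set.univ := by
      rw [← hH.closure_eq, hd.closure_eq]
    have : x ∈ (H : Set ℝ) := h1 ▸ Set.mem_univ x
    exact this
  · exfalso
    rw [hc] at hu hw
    rcases AddSubgroup.mem_closure_singleton.mp hu with ⟨p, hp⟩
    rcases AddSubgroup.mem_closure_singleton.mp hw with ⟨q, hq⟩
    have hrel1 : (q : ℝ) * u = (p : ℝ) * w := by
      rw [← hp, ← hq]
      push_cast [zsmul_eq_mul]
      ring
    obtain ⟨hq0, hp0⟩ := hrel q p hrel1
    have hu0 : u = 0 := by rw [← hp, hp0]; simp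
    have := hrel 1 0 (by rw [hu0]; simp)
    simp at this

set_option maxHeartbeats 2000000 in
lemma aux_dense_lattice (L1 L2 A B τ : ℝ)
    (key : ∀ p q s : ℤ,
      (p : ℝ) * (τ * L1) + (q : ℝ) * (τ * L2) + (s : ℝ) * (A * L2 - B * L1) = 0 →
      p = 0 ∧ q = 0 ∧ s = 0) :
    Dense {p : ℝ × ℝ | ∃ m n k : ℤ,
      p = ((m : ℝ) * L1 - (n : ℝ) * L2, (m : ℝ) * A - (n : ℝ) * B + (k : ℝ) * τ)} := by
  -- basic facts
  have hτ : τ ≠ 0 := by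
    intro h
    have := key 1 0 0 (by rw [h]; ring)
    simp at this
  have hrelLL : ∀ p q : ℤ, (p : ℝ) * L1 = (q : ℝ) * L2 → p = 0 ∧ q = 0 := by
    intro p q h
    have := key p (-q) 0 (by push_cast; linear_combination τ * h)
    exact ⟨this.1, by simpa using this.2.1⟩
  -- the subgroup S with carrier X
  set X : Set (ℝ × ℝ) := {p : ℝ × ℝ | ∃ m n k : ℤ,
      p = ((m : ℝ) * L1 - (n : ℝ) * L2, (m : ℝ) * A - (n : ℝ) * B + (k : ℝ) * τ)} with hX
  let S : AddSubgroup (ℝ × ℝ) := {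
    carrier := X
    zero_mem' := ⟨0, 0, 0, by norm_num [Prod.ext_iff]⟩
    add_mem' := by
      rintro p q ⟨m, n, k, rfl⟩ ⟨m', n', k', rfl⟩
      exact ⟨m + m', n + n', k + k', by rw [Prod.mk_add_mk]; push_cast; simp only [Prod.mk.injEq]; constructor <;> ring⟩
    neg_mem' := by
      rintro p ⟨m, n, k, rfl⟩
      exact ⟨-m, -n, -k, by rw [Prod.neg_mk]; push_cast; simp only [Prod.mk.injEq]; constructor <;> ring⟩ }
  let C : AddSubgroup (ℝ × ℝ) := S.topologicalClosure
  have hCc : IsClosed (C : Set (ℝ × ℝ)) := S.isClosed_topologicalClosure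
  have hSC : ∀ p ∈ S, p ∈ C := fun p hp => S.le_topologicalClosure hp
  have hv1 : ((L1, A) : ℝ × ℝ) ∈ C := hSC _ ⟨1, 0, 0, by norm_num⟩
  have hv2 : ((L2, B) : ℝ × ℝ) ∈ C := hSC _ ⟨0, -1, 0, by norm_num⟩
  have hv3 : (((0 : ℝ), τ) : ℝ × ℝ) ∈ C := hSC _ ⟨0, 0, 1, by norm_num⟩
  -- it suffices to show C = univ
  suffices hC : ∀ p : ℝ × ℝ, p ∈ C by
    have : Dense (S : Set (ℝ × ℝ)) := by
      rw [dense_iff_closure_eq, ← AddSubgroup.topologicalClosure_coe]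
      exact Set.eq_univ_of_forall hC
    exact this
  -- the vertical subgroup
  let Hy : AddSubgroup ℝ := {
    carrier := {y : ℝ | ((0 : ℝ), y) ∈ C}
    zero_mem' := by exact C.zero_mem
    add_mem' := by
      intro y1 y2 h1 h2
      simpa using C.add_mem h1 h2
    neg_mem' := by
      intro y h
      simpa using C.neg_mem h }
  have hHymem : ∀ y : ℝ, y ∈ Hy ↔ ((0 : ℝ), y) ∈ C := fun _ => Iff.rfl
  have hHyclosed : IsClosed (Hy : Set ℝ) := by
    have : (Hy : Set ℝ) = (fun y : ℝ => ((0 : ℝ), y)) ⁻¹' (C : Set (ℝ × ℝ)) := rfl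
    rw [this]
    exact hCc.preimage (by fun_prop)
  rcases AddSubgroup.dense_or_cyclic Hy with hd | ⟨c₀, hc⟩
  · -- dense vertical case
    have hvert : ∀ y : ℝ, ((0 : ℝ), y) ∈ C := by
      intro y
      have h1 : (Hy : Set ℝ) = Set.univ := by
        rw [← hHyclosed.closure_eq, hd.closure_eq]
      have : y ∈ (Hy : Set ℝ) := h1 ▸ Set.mem_univ y
      exact this
    let Hx : AddSubgroup ℝ := {
      carrier := {x : ℝ | (x, (0 : ℝ)) ∈ C}
      zero_mem' := by exact C.zero_mem
      add_mem' := by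
        intro x1 x2 h1 h2
        simpa using C.add_mem h1 h2
      neg_mem' := by
        intro x h
        simpa using C.neg_mem h }
    have hHxclosed : IsClosed (Hx : Set ℝ) := by
      have : (Hx : Set ℝ) = (fun x : ℝ => (x, (0 : ℝ))) ⁻¹' (C : Set (ℝ × ℝ)) := rfl
      rw [this]
      exact hCc.preimage (by fun_prop)
    have hL1x : L1 ∈ Hx := by
      have := C.add_mem hv1 (hvert (-A))
      exact (by simpa using this : (L1, (0:ℝ)) ∈ C)
    have hL2x : L2 ∈ Hx := by
      have := C.add_mem hv2 (hvert (-B))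
      exact (by simpa using this : (L2, (0:ℝ)) ∈ C)
    have htop := aux_closed_subgroup_top Hx hHxclosed L1 L2 hL1x hL2x hrelLL
    intro p
    have h1 : (p.1, (0 : ℝ)) ∈ C := htop p.1
    have h2 : ((0 : ℝ), p.2) ∈ C := hvert p.2
    have := C.add_mem h1 h2
    simpa using this
  · -- cyclic vertical case : derive a contradiction
    exfalso
    have hτHy : τ ∈ Hy := hv3
    rw [hc] at hτHy
    obtain ⟨q₀, hq₀⟩ := AddSubgroup.mem_closure_singleton.mp hτHy
    have hc0 : c₀ ≠ 0 := by
      rintro rfl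
      simp at hq₀
      exact hτ hq₀.symm
    set c : ℝ := |c₀| with hcdef
    have hcpos : 0 < c := abs_pos.mpr hc0
    have hc₀Hy : c₀ ∈ Hy := by
      rw [hc]
      exact AddSubgroup.mem_closure_singleton.mpr ⟨1, one_smul _ _⟩
    have hvc : ((0 : ℝ), c) ∈ C := by
      rcases abs_choice c₀ with h | h
      · rw [hcdef, h]; exact hc₀Hy
      · rw [hcdef, h]
        have := Hy.neg_mem hc₀Hy
        exact this
    have hvk : ∀ k : ℤ, ((0 : ℝ), (k : ℝ) * c) ∈ C := by
      intro k
      induction k using Int.induction_on with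
      | zero => simp only [Int.cast_zero, zero_mul]; exact C.zero_mem
      | succ i ih =>
        have h2 := C.add_mem ih hvc
        convert h2 using 1
        simp only [Prod.mk_add_mk, Prod.mk.injEq]
        constructor
        · ring
        · push_cast; ring
      | pred i ih =>
        have h2 := C.sub_mem ih hvc
        convert h2 using 1
        simp only [Prod.mk_sub_mk, Prod.mk.injEq]
        constructor
        · ring
        · push_cast; ring
    have hvert_iff : ∀ y : ℝ, ((0 : ℝ), y) ∈ C → ∃ k : ℤ, y = (k : ℝ) * c := by
      intro y hy
      have : y ∈ Hy := hy
      rw [hc] at this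
      obtain ⟨k, hk⟩ := AddSubgroup.mem_closure_singleton.mp this
      rcases abs_choice c₀ with h | h
      · exact ⟨k, by rw [hcdef, h, ← hk, zsmul_eq_mul]⟩
      · exact ⟨-k, by rw [hcdef, h, ← hk, zsmul_eq_mul]; push_cast; ring⟩
    have hsmall : ∀ y : ℝ, ((0 : ℝ), y) ∈ C → |y| < c → y = 0 := by
      intro y hy hlt
      obtain ⟨k, rfl⟩ := hvert_iff y hy
      have hk : |(k : ℝ)| < 1 := by
        rw [abs_mul, abs_of_pos hcpos] at hlt
        by_contra hge
        push_neg at hge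
        nlinarith
      have hk' : |k| < 1 := by exact_mod_cast hk
      have : k = 0 := by have h2 := abs_lt.mp hk'; omega
      rw [this]
      simp
    -- horizontal projection subgroup is all of ℝ
    let PA : AddSubgroup ℝ := {
      carrier := {x : ℝ | ∃ y : ℝ, (x, y) ∈ C}
      zero_mem' := ⟨0, by exact C.zero_mem⟩
      add_mem' := by
        rintro x1 x2 ⟨y1, h1⟩ ⟨y2, h2⟩
        exact ⟨y1 + y2, by simpa using C.add_mem h1 h2⟩
      neg_mem' := by
        rintro x ⟨y, h⟩
        exact ⟨-y, by simpa using C.neg_mem h⟩ }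
    have hPAclosed : IsClosed (PA : Set ℝ) := by
      rw [← isSeqClosed_iff_isClosed]
      intro u x hu hux
      choose Y0 hY0 using hu
      have hnorm : ∀ n : ℕ, ∃ y : ℝ, (u n, y) ∈ C ∧ y ∈ Set.Icc (0 : ℝ) c := by
        intro n
        refine ⟨Y0 n - (⌊Y0 n / c⌋ : ℝ) * c, ?_, ?_, ?_⟩
        · have h2 := C.sub_mem (hY0 n) (hvk ⌊Y0 n / c⌋)
          convert h2 using 1
          simp only [Prod.mk_sub_mk, Prod.mk.injEq]
          exact ⟨by ring, trivial⟩
        · exact Int.sub_floor_div_mul_nonneg (Y0 n) hcpos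
        · exact (Int.sub_floor_div_mul_lt (Y0 n) hcpos).le
      choose y hyC hyI using hnorm
      obtain ⟨y0, _, φ, hφ, hgy⟩ := (isCompact_Icc (a := (0:ℝ)) (b := c)).tendsto_subseq hyI
      have hpair : Filter.Tendsto (fun n => (u (φ n), y (φ n))) Filter.atTop (nhds (x, y0)) :=
        (hux.comp hφ.tendsto_atTop).prodMk_nhds hgy
      exact ⟨y0, hCc.mem_of_tendsto hpair (Filter.Eventually.of_forall fun n => hyC (φ n))⟩
    have hPAtop := aux_closed_subgroup_top PA hPAclosed L1 L2 ⟨A, hv1⟩ ⟨B, hv2⟩ hrelLL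
    choose Y hY using hPAtop
    -- the residue function
    set g : ℝ → ℝ := fun x => Y x - (round (Y x / c) : ℝ) * c with hgdef
    have hgC : ∀ x : ℝ, (x, g x) ∈ C := by
      intro x
      have h2 := C.sub_mem (hY x) (hvk (round (Y x / c)))
      convert h2 using 1
      simp only [Prod.mk_sub_mk, Prod.mk.injEq]
      constructor <;> ring
    have hgbd : ∀ x : ℝ, |g x| ≤ c / 2 := by
      intro x
      have h1 : g x = c * (Y x / c - round (Y x / c)) := by
        rw [hgdef]
        field_simp
      rw [h1, abs_mul, abs_of_pos hcpos]
      have h2 := abs_sub_round (Y x / c)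
      nlinarith
    have hmod : ∀ x y : ℝ, (x, y) ∈ C → ∃ k : ℤ, y - g x = (k : ℝ) * c := by
      intro x y hxy
      have h2 := C.sub_mem hxy (hgC x)
      have he : (x, y) - (x, g x) = ((0 : ℝ), y - g x) := by
        simp [Prod.mk_sub_mk]
      rw [he] at h2
      exact hvert_iff _ h2
    have hgadd : ∀ x x' : ℝ, ∃ k : ℤ, g (x + x') - (g x + g x') = (k : ℝ) * c := by
      intro x x'
      have hsum : (x + x', g x + g x') ∈ C := by
        have h2 := C.add_mem (hgC x) (hgC x')
        rwa [Prod.mk_add_mk] at h2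
      obtain ⟨k, hk⟩ := hmod _ _ hsum
      exact ⟨-k, by push_cast; linarith⟩
    have hcont0 : ∀ ε : ℝ, 0 < ε → ∃ δ : ℝ, 0 < δ ∧ ∀ x : ℝ, |x| ≤ δ → |g x| ≤ ε := by
      intro ε hε
      by_contra hno
      push_neg at hno
      have hseq : ∀ n : ℕ, ∃ x : ℝ, |x| ≤ 1 / ((n : ℝ) + 1) ∧ ε < |g x| :=
        fun n => hno (1 / ((n : ℝ) + 1)) (by positivity)
      choose u hu1 hu2 using hseq
      have hu0 : Filter.Tendsto u Filter.atTop (nhds 0) := by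
        apply squeeze_zero_norm _ tendsto_one_div_add_atTop_nhds_zero_nat
        intro n
        simpa [Real.norm_eq_abs] using hu1 n
      have hmem : ∀ n, g (u n) ∈ Set.Icc (-(c / 2)) (c / 2) := fun n => abs_le.mp (hgbd (u n))
      obtain ⟨y0, hy0mem, φ, hφ, hgy⟩ := (isCompact_Icc).tendsto_subseq hmem
      have hpair : Filter.Tendsto (fun n => (u (φ n), g (u (φ n)))) Filter.atTop (nhds (0, y0)) :=
        (hu0.comp hφ.tendsto_atTop).prodMk_nhds hgy
      have hxy : ((0 : ℝ), y0) ∈ C :=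
        hCc.mem_of_tendsto hpair (Filter.Eventually.of_forall fun n => hgC (u (φ n)))
      have hy00 : y0 = 0 := by
        apply hsmall y0 hxy
        have := abs_le.mpr ⟨hy0mem.1, hy0mem.2⟩
        linarith
      have hge : ε ≤ |y0| := by
        have habs : Filter.Tendsto (fun n => |g (u (φ n))|) Filter.atTop (nhds |y0|) := hgy.abs
        exact ge_of_tendsto habs (Filter.Eventually.of_forall fun n => (hu2 (φ n)).le)
      rw [hy00] at hge
      simp at hge
      linarith
    clear hgdef hcdef
    clear_value g c
    -- integer multiples of c smaller than c vanish
    have hint : ∀ k : ℤ, |(k : ℝ) * c| < c → k = 0 := by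
      intro k hlt
      have hk : |(k : ℝ)| < 1 := by
        rw [abs_mul, abs_of_pos hcpos] at hlt
        by_contra hge
        push_neg at hge
        nlinarith
      have hk' : |k| < 1 := by exact_mod_cast hk
      have h2 := abs_lt.mp hk'
      omega
    -- local additivity
    obtain ⟨δ₀, hδ₀pos, hδ₀⟩ := hcont0 (c / 8) (by linarith)
    have hadd : ∀ x x' : ℝ, |x| ≤ δ₀ → |x'| ≤ δ₀ → |x + x'| ≤ δ₀ →
        g (x + x') = g x + g x' := by
      intro x x' hx hx' hxx
      obtain ⟨k, hk⟩ := hgadd x x'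
      have h1 := abs_le.mp (hδ₀ x hx)
      have h2 := abs_le.mp (hδ₀ x' hx')
      have h3 := abs_le.mp (hδ₀ _ hxx)
      have hk0 : k = 0 := by
        apply hint
        have hb : |g (x + x') - (g x + g x')| < c := by
          rw [abs_lt]
          constructor
          · nlinarith [h1.1, h2.1, h3.1, hcpos]
          · nlinarith [h1.2, h2.2, h3.2, hcpos]
        rwa [hk] at hb
      rw [hk0] at hk
      push_cast at hk
      linarith
    have hg0 : g 0 = 0 := by
      have h2 := hadd 0 0 (by simpa using hδ₀pos.le) (by simpa using hδ₀pos.le)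
        (by simpa using hδ₀pos.le)
      rw [add_zero] at h2
      linarith
    have hgneg : ∀ x : ℝ, |x| ≤ δ₀ → g (-x) = -g x := by
      intro x hx
      have h2 := hadd x (-x) hx (by rwa [abs_neg]) (by simpa using hδ₀pos.le)
      rw [show x + -x = (0 : ℝ) by ring, hg0] at h2
      linarith
    -- natural number scaling
    have hnat : ∀ z : ℝ, |z| ≤ δ₀ → ∀ n : ℕ, 0 < n → ∀ k : ℕ, k ≤ n →
        g ((k : ℝ) * (z / n)) = (k : ℝ) * g (z / n) := by
      intro z hz n hn
      have hbd : ∀ j : ℕ, j ≤ n → |(j : ℝ) * (z / n)| ≤ δ₀ := by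
        intro j hj
        rw [abs_mul, abs_div, Nat.abs_cast, Nat.abs_cast]
        calc (j : ℝ) * (|z| / n) ≤ (n : ℝ) * (|z| / n) := by
              apply mul_le_mul_of_nonneg_right _ (by positivity)
              exact_mod_cast hj
          _ = |z| := by field_simp
          _ ≤ δ₀ := hz
      have h1' : |z / (n : ℝ)| ≤ δ₀ := by
        have := hbd 1 hn
        simpa using this
      intro k
      induction k with
      | zero => intro _; simpa using hg0
      | succ k ih =>
        intro hk1
        have hkn : k ≤ n := by omega
        have he : ((k + 1 : ℕ) : ℝ) * (z / n) = (k : ℝ) * (z / n) + z / n := by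
          push_cast; ring
        have h3 : |(k : ℝ) * (z / n) + z / n| ≤ δ₀ := by
          rw [← he]; exact hbd (k + 1) hk1
        have h2 := hadd ((k : ℝ) * (z / n)) (z / n) (hbd k hkn) h1' h3
        rw [he, h2, ih hkn]
        push_cast; ring
    -- rational scaling
    have hrat : ∀ z : ℝ, |z| ≤ δ₀ → ∀ q : ℚ, 0 ≤ q → q ≤ 1 →
        g ((q : ℝ) * z) = (q : ℝ) * g z := by
      intro z hz q hq0 hq1
      set m : ℕ := q.num.toNat with hm
      set n : ℕ := q.den with hn
      have hnpos : 0 < n := q.pos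
      have hqm : (q : ℝ) = (m : ℝ) / n := by
        rw [Rat.cast_def]
        congr 1
        · rw [hm]
          exact_mod_cast (Int.toNat_of_nonneg (Rat.num_nonneg.mpr hq0)).symm
      have hmn : m ≤ n := by
        have h1 : (q : ℝ) ≤ 1 := by exact_mod_cast hq1
        rw [hqm, div_le_one (by positivity)] at h1
        exact_mod_cast h1
      have h1 := hnat z hz n hnpos m hmn
      have h2 : g z = (n : ℝ) * g (z / n) := by
        have h3 := hnat z hz n hnpos n le_rfl
        have he : (n : ℝ) * (z / n) = z := by field_simp
        rwa [he] at h3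
      have he2 : (q : ℝ) * z = (m : ℝ) * (z / n) := by
        rw [hqm]; field_simp
      rw [he2, h1, h2, hqm]
      have hnne : (n : ℝ) ≠ 0 := by positivity
      field_simp
    -- linearity on a small interval
    set u : ℝ := δ₀ / 2 with hu
    have hupos : 0 < u := by rw [hu]; linarith
    have huδ : |u| ≤ δ₀ := by rw [abs_of_pos hupos, hu]; linarith
    have hlin0 : ∀ x : ℝ, 0 ≤ x → x ≤ u → g x = x / u * g u := by
      intro x hx0 hxu
      have hxδ : |x| ≤ δ₀ := by rw [abs_of_nonneg hx0]; linarith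
      have hkey : ∀ ε : ℝ, 0 < ε → |g x - x / u * g u| ≤ ε := by
        intro ε hε
        obtain ⟨δ', hδ'pos, hδ'⟩ := hcont0 (ε / 2) (by linarith)
        set δ'' : ℝ := min (min δ' δ₀) (ε / 2 * u / (|g u| + 1)) with hδ''
        have hδ''pos : 0 < δ'' := by
          apply lt_min (lt_min hδ'pos hδ₀pos)
          have : 0 < |g u| + 1 := by positivity
          positivity
        obtain ⟨q, hq⟩ := exists_rat_near (x / u) (show (0:ℝ) < δ'' / u by positivity)
        set q' : ℚ := max 0 (min 1 q) with hq'
        have hq'0 : 0 ≤ q' := le_max_left _ _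
        have hq'1 : q' ≤ 1 := by
          rw [hq']
          apply max_le (by norm_num) (min_le_left _ _)
        have hq'cast : ((q' : ℚ) : ℝ) = max 0 (min 1 (q : ℝ)) := by
          rw [hq']
          push_cast
          rfl
        have hxu0 : 0 ≤ x / u := by positivity
        have hxu1 : x / u ≤ 1 := by
          rw [div_le_one hupos]; exact hxu
        have hclamp : |x / u - (q' : ℝ)| ≤ |x / u - (q : ℝ)| := by
          rw [hq'cast]
          rcases le_total ((q : ℝ)) 0 with h | h
          · rw [min_eq_right (le_trans h (by norm_num)), max_eq_left h, sub_zero]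
            rw [abs_of_nonneg hxu0, abs_of_nonneg (by linarith)]
            linarith
          · rcases le_total ((q : ℝ)) 1 with h1 | h1
            · rw [min_eq_right h1, max_eq_right h]
            · rw [min_eq_left h1, max_eq_right (by norm_num)]
              rw [abs_of_nonpos (by linarith), abs_of_nonpos (by linarith)]
              linarith
        have hqdist : |x / u - (q' : ℝ)| < δ'' / u := lt_of_le_of_lt hclamp hq
        have hxdist : |x - (q' : ℝ) * u| < δ'' := by
          have he : x - (q' : ℝ) * u = (x / u - (q' : ℝ)) * u := by
            rw [sub_mul, div_mul_cancel₀ _ (ne_of_gt hupos)]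
          rw [he, abs_mul, abs_of_pos hupos]
          calc |x / u - (q' : ℝ)| * u < δ'' / u * u := by
                apply mul_lt_mul_of_pos_right hqdist hupos
            _ = δ'' := by field_simp
        have hδ''δ' : δ'' ≤ δ' := le_trans (min_le_left _ _) (min_le_left _ _)
        have hδ''δ₀ : δ'' ≤ δ₀ := le_trans (min_le_left _ _) (min_le_right _ _)
        have hδ''ε : δ'' ≤ ε / 2 * u / (|g u| + 1) := min_le_right _ _
        have hq'u : |(q' : ℝ) * u| ≤ δ₀ := by
          rw [abs_mul, abs_of_pos hupos]
          have : |(q' : ℝ)| ≤ 1 := by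
            rw [abs_of_nonneg (by exact_mod_cast hq'0)]
            exact_mod_cast hq'1
          nlinarith
        have hsplit := hadd ((q' : ℝ) * u) (x - (q' : ℝ) * u) hq'u
          (le_trans hxdist.le (by linarith)) (by rw [show (q' : ℝ) * u + (x - (q' : ℝ) * u) = x by ring]; exact hxδ)
        rw [show (q' : ℝ) * u + (x - (q' : ℝ) * u) = x by ring] at hsplit
        have hgq' : g ((q' : ℝ) * u) = (q' : ℝ) * g u := hrat u huδ q' hq'0 hq'1
        have hsmall2 : |g (x - (q' : ℝ) * u)| ≤ ε / 2 :=
          hδ' _ (le_trans hxdist.le hδ''δ')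
        have hterm : |(x / u - (q' : ℝ)) * g u| ≤ ε / 2 := by
          rw [abs_mul]
          have hd : |x / u - (q' : ℝ)| ≤ ε / 2 / (|g u| + 1) := by
            have h5 : δ'' / u ≤ ε / 2 / (|g u| + 1) := by
              rw [div_le_div_iff₀ hupos (by positivity)]
              calc δ'' * (|g u| + 1) ≤ ε / 2 * u / (|g u| + 1) * (|g u| + 1) := by
                    apply mul_le_mul_of_nonneg_right hδ''ε (by positivity)
                _ = ε / 2 * u := by field_simp
            linarith [hqdist.le]
          have h6 : (0:ℝ) < |g u| + 1 := by positivity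
          calc |x / u - (q' : ℝ)| * |g u| ≤ ε / 2 / (|g u| + 1) * |g u| := by
                apply mul_le_mul_of_nonneg_right hd (abs_nonneg _)
            _ ≤ ε / 2 := by
                rw [div_mul_eq_mul_div, div_le_iff₀ h6]
                nlinarith [abs_nonneg (g u), hε.le]
        have hfinal : g x - x / u * g u = g (x - (q' : ℝ) * u) - (x / u - (q' : ℝ)) * g u := by
          rw [hsplit, hgq']; ring
        rw [hfinal]
        calc |g (x - (q' : ℝ) * u) - (x / u - (q' : ℝ)) * g u|
            ≤ |g (x - (q' : ℝ) * u)| + |(x / u - (q' : ℝ)) * g u| := abs_sub _ _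
          _ ≤ ε / 2 + ε / 2 := add_le_add hsmall2 hterm
          _ = ε := by ring
      rcases eq_or_ne (g x - x / u * g u) 0 with h0 | h0
      · exact sub_eq_zero.mp h0
      · exfalso
        have hpos := abs_pos.mpr h0
        have h7 := hkey (|g x - x / u * g u| / 2) (by linarith)
        linarith
    -- g is linear on [-u, u]
    set lam : ℝ := g u / u with hlamdef
    have hlam : ∀ x : ℝ, |x| ≤ u → g x = lam * x := by
      intro x hx
      rcases le_total 0 x with h | h
      · rw [hlin0 x h (le_trans (le_abs_self x) hx), hlamdef]
        ring
      · have h2 := hlin0 (-x) (by linarith) (le_trans (neg_le_abs x) hx)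
        have h3 := hgneg x (le_trans hx (by rw [hu]; linarith))
        have h4 : -g x = -x / u * g u := by rw [← h3, h2]
        have h5 : -x / u = -(x / u) := by ring
        rw [h5] at h4
        rw [hlamdef]
        have : g x = x / u * g u := by linarith
        rw [this]; ring
    -- global congruence g x ≡ lam * x mod c
    have hglobmod : ∀ x : ℝ, ∃ k : ℤ, g x - lam * x = (k : ℝ) * c := by
      intro x
      obtain ⟨N0, hN0⟩ := exists_nat_ge (|x| / u)
      set N : ℕ := N0 + 1 with hN
      have hNpos : (0 : ℝ) < (N : ℝ) := by rw [hN]; positivity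
      set z : ℝ := x / N with hz
      have hzu : |z| ≤ u := by
        rw [hz, abs_div, abs_of_pos hNpos, div_le_iff₀ hNpos]
        have h2 : |x| ≤ (N0 : ℝ) * u := by
          rw [div_le_iff₀ hupos] at hN0; linarith
        have h3 : (N0 : ℝ) ≤ (N : ℝ) := by rw [hN]; push_cast; linarith
        nlinarith
      have hmult : ∀ k : ℕ, ∃ j : ℤ, g ((k : ℝ) * z) - (k : ℝ) * g z = (j : ℝ) * c := by
        intro k
        induction k with
        | zero => exact ⟨0, by simpa using hg0⟩
        | succ k ih =>
          obtain ⟨j, hj⟩ := ih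
          obtain ⟨j2, hj2⟩ := hgadd ((k : ℝ) * z) z
          refine ⟨j + j2, ?_⟩
          have he : ((k + 1 : ℕ) : ℝ) * z = (k : ℝ) * z + z := by push_cast; ring
          rw [he]
          push_cast
          linarith [hj, hj2]
      obtain ⟨j, hj⟩ := hmult N
      have heN : (N : ℝ) * z = x := by
        rw [hz]; field_simp
      rw [heN] at hj
      have hgz : g z = lam * z := hlam z hzu
      refine ⟨j, ?_⟩
      have h8 : lam * x = (N : ℝ) * (lam * z) := by
        rw [hz]; field_simp; try ring
      rw [hgz] at hj
      linarith
    have hglobal : ∀ x y : ℝ, (x, y) ∈ C → ∃ k : ℤ, y - lam * x = (k : ℝ) * c := by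
      intro x y hxy
      obtain ⟨k1, hk1⟩ := hmod x y hxy
      obtain ⟨k2, hk2⟩ := hglobmod x
      exact ⟨k1 + k2, by push_cast; linarith⟩
    -- derive the contradiction with key
    obtain ⟨sψ, hs⟩ := hglobal L1 A hv1
    obtain ⟨tψ, ht⟩ := hglobal L2 B hv2
    obtain ⟨qψ, hqψ⟩ := hglobal 0 τ hv3
    have hτqc : τ = (qψ : ℝ) * c := by
      have h9 : τ - lam * 0 = (qψ : ℝ) * c := hqψ
      simpa using h9
    have hqψ0 : qψ ≠ 0 := by
      rintro rfl
      simp at hτqc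
      exact hτ hτqc
    have hkey2 := key (-tψ) sψ (-qψ) (by
      push_cast
      have hA : A = lam * L1 + (sψ : ℝ) * c := by linarith
      have hB : B = lam * L2 + (tψ : ℝ) * c := by linarith
      rw [hA, hB, hτqc]
      ring)
    exact hqψ0 (neg_eq_zero.mp hkey2.2.2)

/-- If `π·log R`, `π·log r`, `a·log r − b·log R` are linearly independent
over `ℚ`, then `X' = { (m·log R − n·log r, m·a − n·b + 2k·π) : m, n, k ∈ ℤ }` is dense
in `ℝ²`. -/
theorem dense_log_arg_lattice
    (R r a b : ℝ) (hR : 0 < R) (hr : 0 < r)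
    (hli : LinearIndependent ℚ
      ![Real.pi * Real.log R, Real.pi * Real.log r,
        a * Real.log r - b * Real.log R]) :
    Dense {p : ℝ × ℝ | ∃ m n k : ℤ,
      p = ((m : ℝ) * Real.log R - (n : ℝ) * Real.log r,
           (m : ℝ) * a - (n : ℝ) * b + 2 * (k : ℝ) * Real.pi)} := by
  have hli' := Fintype.linearIndependent_iff.mp hli
  have key : ∀ p q s : ℤ,
      (p : ℝ) * (2 * Real.pi * Real.log R) + (q : ℝ) * (2 * Real.pi * Real.log r) +
        (s : ℝ) * (a * Real.log r - b * Real.log R) = 0 →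
      p = 0 ∧ q = 0 ∧ s = 0 := by
    intro p q s h
    have h2 := hli' ![(2 * p : ℚ), (2 * q : ℚ), (s : ℚ)] ?_
    · refine ⟨?_, ?_, ?_⟩
      · have := h2 0
        simp at this
        exact_mod_cast this
      · have := h2 1
        simp at this
        exact_mod_cast this
      · have := h2 2
        simp at this
        exact_mod_cast this
    · simp [Fin.sum_univ_three, Rat.smul_def]
      push_cast
      linear_combination h
  have hdense := aux_dense_lattice (Real.log R) (Real.log r) a b (2 * Real.pi) key
  have hset : {p : ℝ × ℝ | ∃ m n k : ℤ,
      p = ((m : ℝ) * Real.log R - (n : ℝ) * Real.log r,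
           (m : ℝ) * a - (n : ℝ) * b + 2 * (k : ℝ) * Real.pi)} =
      {p : ℝ × ℝ | ∃ m n k : ℤ,
      p = ((m : ℝ) * Real.log R - (n : ℝ) * Real.log r,
           (m : ℝ) * a - (n : ℝ) * b + (k : ℝ) * (2 * Real.pi))} := by
    ext p
    constructor
    · rintro ⟨m, n, k, rfl⟩
      exact ⟨m, n, k, by simp only [Prod.mk.injEq]; exact ⟨by trivial, by ring⟩⟩
    · rintro ⟨m, n, k, rfl⟩
      exact ⟨m, n, k, by simp only [Prod.mk.injEq]; exact ⟨by trivial, by ring⟩⟩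
  rw [hset]
  exact hdense
end

section
/- Let R, r be positive real numbers and a, b real numbers such that the three real numbers π·log R, π·log r, and a·log r − b·log R are linearly independent over ℚ, and set z = R·e^{ia}, w = r·e^{ib}. Then for every v ∈ ℂ and every δ > 0 there exists a natural number M > 0 such that: whenever m, n ∈ ℤ satisfy |z^m·w^n − v| < δ, there exist integers m', n' with m < m' ≤ m + M and |z^{m'}·w^{n'} − v| < δ. -/
open Complex

noncomputable def gv (α β a b : ℝ) (p q k : ℤ) : ℂ :=
  (p : ℂ) * (α + a * I) + (q : ℂ) * (β + b * I) + (k : ℂ) * (2 * Real.pi * I)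

lemma gv_re (α β a b : ℝ) (p q k : ℤ) : (gv α β a b p q k).re = p * α + q * β := by
  simp [gv]

lemma gv_im (α β a b : ℝ) (p q k : ℤ) :
    (gv α β a b p q k).im = p * a + q * b + k * (2 * Real.pi) := by
  simp [gv]

noncomputable def GS (α β a b : ℝ) : AddSubgroup ℂ where
  carrier := {ξ | ∃ p q k : ℤ, ξ = gv α β a b p q k}
  add_mem' := by rintro x y ⟨p,q,k,rfl⟩ ⟨p',q',k',rfl⟩; exact ⟨p+p', q+q', k+k', by simp only [gv]; push_cast; ring⟩
  zero_mem' := ⟨0,0,0, by simp [gv]⟩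
  neg_mem' := by rintro x ⟨p,q,k,rfl⟩; exact ⟨-p,-q,-k, by simp only [gv]; push_cast; ring⟩

lemma mem_GS {α β a b : ℝ} {x : ℂ} : x ∈ GS α β a b ↔ ∃ p q k : ℤ, x = gv α β a b p q k := Iff.rfl

def Wd (x y : ℂ) : ℝ := x.re * y.im - x.im * y.re

lemma parallel {g x : ℂ} (hg : g ≠ 0) (hW : Wd g x = 0) : ∃ c : ℝ, x = c • g := by
  simp only [Wd] at hW
  by_cases hre : g.re = 0
  · have him : g.im ≠ 0 := fun h0 => hg (Complex.ext hre h0)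
    have hxre : x.re = 0 := by
      rw [hre] at hW
      rcases mul_eq_zero.1 (by linarith : g.im * x.re = 0) with h | h
      · exact absurd h him
      · exact h
    refine ⟨x.im / g.im, ?_⟩
    apply Complex.ext <;> simp [Complex.smul_re, Complex.smul_im]
    · rw [hre, hxre]; ring
    · field_simp
  · refine ⟨x.re / g.re, ?_⟩
    apply Complex.ext <;> simp [Complex.smul_re, Complex.smul_im]
    · field_simp
    · field_simp
      linarith [hW]

lemma dense_of_pairs {α β a b : ℝ}
    (h2 : ∀ ε : ℝ, 0 < ε → ∃ x ∈ GS α β a b, ∃ y ∈ GS α β a b,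
      ‖x‖ < ε ∧ ‖y‖ < ε ∧ Wd x y ≠ 0) : Dense ((GS α β a b : Set ℂ)) := by
  rw [Metric.dense_iff]
  intro ξ ε hε
  obtain ⟨x, hx, y, hy, hxs, hys, hW⟩ := h2 (ε/2) (by positivity)
  simp only [Wd] at hW
  set D := x.re * y.im - x.im * y.re with hD
  set sc := (ξ.re * y.im - ξ.im * y.re) / D with hsc
  set tc := (x.re * ξ.im - x.im * ξ.re) / D with htc
  have hsol : ξ = sc • x + tc • y := by
    apply Complex.ext <;>
      simp only [Complex.add_re, Complex.add_im, Complex.smul_re, Complex.smul_im, hsc, htc] <;>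
      (simp only [smul_eq_mul, hD] at hW ⊢; rw [div_mul_eq_mul_div, div_mul_eq_mul_div, ← add_div, eq_div_iff hW]; ring)
  refine ⟨(⌊sc⌋ : ℤ) • x + (⌊tc⌋ : ℤ) • y, ?_, add_mem (zsmul_mem hx _) (zsmul_mem hy _)⟩
  rw [Metric.mem_ball, dist_eq_norm]
  have hrw : ξ - ((⌊sc⌋ : ℤ) • x + (⌊tc⌋ : ℤ) • y)
      = Int.fract sc • x + Int.fract tc • y := by
    rw [← Int.cast_smul_eq_zsmul ℝ (⌊sc⌋) x, ← Int.cast_smul_eq_zsmul ℝ (⌊tc⌋) y]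
    nth_rewrite 1 [hsol]
    rw [Int.fract, Int.fract, sub_smul, sub_smul]
    abel
  rw [norm_sub_rev, hrw]
  calc ‖Int.fract sc • x + Int.fract tc • y‖ ≤ ‖Int.fract sc • x‖ + ‖Int.fract tc • y‖ :=
        norm_add_le _ _
    _ = |Int.fract sc| * ‖x‖ + |Int.fract tc| * ‖y‖ := by rw [norm_smul, norm_smul]; rfl
    _ < ε := by
        have h1 : |Int.fract sc| ≤ 1 := by
          have := Int.fract_nonneg sc; have := Int.fract_lt_one sc
          rw [abs_le]; constructor <;> linarith
        have h2 : |Int.fract tc| ≤ 1 := by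
          have := Int.fract_nonneg tc; have := Int.fract_lt_one tc
          rw [abs_le]; constructor <;> linarith
        have hx0 : 0 ≤ ‖x‖ := norm_nonneg _
        have hy0 : 0 ≤ ‖y‖ := norm_nonneg _
        nlinarith

def RelQ (α β a b : ℝ) : Prop :=
  ∀ p q k : ℤ, (p:ℝ)*(Real.pi*α) + (q:ℝ)*(Real.pi*β) + (k:ℝ)*(a*β - b*α) = 0 →
    p = 0 ∧ q = 0 ∧ k = 0

lemma rel_of_li {α β a b : ℝ}
    (hli : LinearIndependent ℚ ![Real.pi*α, Real.pi*β, a*β - b*α]) : RelQ α β a b := by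
  intro p q k hrel
  rw [Fintype.linearIndependent_iff] at hli
  have := hli ![(p:ℚ), (q:ℚ), (k:ℚ)] (by
    simp [Fin.sum_univ_three, Rat.smul_def]
    push_cast
    linarith)
  refine ⟨?_, ?_, ?_⟩
  · have h0 := this 0; simpa using h0
  · have h1 := this 1; simpa using h1
  · have h2 := this 2; simpa using h2

lemma beta_ne {α β a b : ℝ} (h : RelQ α β a b) : β ≠ 0 := by
  intro hb
  have := h 0 1 0 (by rw [hb]; push_cast; ring)
  simp at this

lemma alpha_ne {α β a b : ℝ} (h : RelQ α β a b) : α ≠ 0 := by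
  intro hb
  have := h 1 0 0 (by rw [hb]; push_cast; ring)
  simp at this

lemma indep2 {α β a b : ℝ} (h : RelQ α β a b) (p q : ℤ) (hpq : (p:ℝ)*α + q*β = 0) :
    p = 0 ∧ q = 0 := by
  have := h p q 0 (by push_cast; nlinarith [Real.pi_pos])
  exact ⟨this.1, this.2.1⟩

lemma abs_sub_lt_one_of_floor_eq {x y : ℝ} (h : ⌊x⌋ = ⌊y⌋) : |x - y| < 1 := by
  have h1 := Int.fract_nonneg x; have h2 := Int.fract_lt_one x
  have h3 := Int.fract_nonneg y; have h4 := Int.fract_lt_one y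
  have ex := Int.floor_add_fract x; have ey := Int.floor_add_fract y
  have hc : ((⌊x⌋:ℤ):ℝ) = ((⌊y⌋:ℤ):ℝ) := by rw [h]
  rw [abs_lt]; constructor <;> linarith

lemma small_elt {α β a b : ℝ} (h : RelQ α β a b) (η : ℝ) (hη : 0 < η) :
    ∃ p q k : ℤ, 0 < p ∧ ‖gv α β a b p q k‖ < η := by
  have hβ := beta_ne h
  have hβ' : (0:ℝ) < |β| := abs_pos.2 hβ
  have h2π : (0:ℝ) < 2 * Real.pi := by positivity
  obtain ⟨N, hN⟩ := exists_nat_gt ((|β| + 2*Real.pi)/η)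
  have hNpos : 0 < N := by
    by_contra hN0
    push_neg at hN0
    interval_cases N
    simp at hN
    nlinarith [div_pos (by positivity : (0:ℝ) < |β| + 2*Real.pi) hη]
  have hNpos' : (0:ℝ) < N := by exact_mod_cast hNpos
  -- reductions
  set t : ℕ → ℝ := fun p => Int.fract ((p:ℝ) * α / β) with ht
  set qq : ℕ → ℤ := fun p => -⌊(p:ℝ) * α / β⌋ with hqq
  have key1 : ∀ p : ℕ, (p:ℝ)*α + (qq p : ℝ)*β = β * t p := by
    intro p
    have hb2 : β * ((p:ℝ) * α / β) = (p:ℝ)*α := by field_simp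
    simp only [ht, hqq, Int.fract]
    push_cast
    rw [mul_sub, hb2]; ring
  set A : ℕ → ℝ := fun p => (p:ℝ)*a + (qq p : ℝ)*b with hA
  set s : ℕ → ℝ := fun p => Int.fract (A p / (2*Real.pi)) with hs
  set kk : ℕ → ℤ := fun p => -⌊A p / (2*Real.pi)⌋ with hkk
  have key2 : ∀ p : ℕ, A p + (kk p : ℝ)*(2*Real.pi) = (2*Real.pi) * s p := by
    intro p
    have hb2 : (2*Real.pi) * (A p / (2*Real.pi)) = A p := by
      field_simp
    simp only [hs, hkk, Int.fract]
    push_cast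
    rw [mul_sub, hb2]; ring
  have tmem : ∀ p : ℕ, 0 ≤ t p ∧ t p < 1 := fun p => ⟨Int.fract_nonneg _, Int.fract_lt_one _⟩
  have smem : ∀ p : ℕ, 0 ≤ s p ∧ s p < 1 := fun p => ⟨Int.fract_nonneg _, Int.fract_lt_one _⟩
  -- cell map
  have cellt : ∀ p : ℕ, ⌊(N:ℝ) * t p⌋.toNat < N := by
    intro p
    have h0 : (0:ℤ) ≤ ⌊(N:ℝ) * t p⌋ := Int.floor_nonneg.2 (by nlinarith [(tmem p).1])
    have h1 : ⌊(N:ℝ) * t p⌋ < (N:ℤ) := Int.floor_lt.2 (by push_cast; nlinarith [(tmem p).2])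
    omega
  have cells : ∀ p : ℕ, ⌊(N:ℝ) * s p⌋.toNat < N := by
    intro p
    have h0 : (0:ℤ) ≤ ⌊(N:ℝ) * s p⌋ := Int.floor_nonneg.2 (by nlinarith [(smem p).1])
    have h1 : ⌊(N:ℝ) * s p⌋ < (N:ℤ) := Int.floor_lt.2 (by push_cast; nlinarith [(smem p).2])
    omega
  set F : Fin (N*N+1) → Fin N × Fin N :=
    fun p => (⟨⌊(N:ℝ) * t p⌋.toNat, cellt p⟩, ⟨⌊(N:ℝ) * s p⌋.toNat, cells p⟩) with hF
  obtain ⟨i, j, hij, hFij⟩ := Fintype.exists_ne_map_eq_of_card_lt F (by simp)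
  -- floors equal
  have ftij : ⌊(N:ℝ) * t i⌋ = ⌊(N:ℝ) * t j⌋ := by
    have := congrArg (fun x => (x.1 : ℕ)) hFij
    simp [hF] at this
    have h0i : (0:ℤ) ≤ ⌊(N:ℝ) * t i⌋ := Int.floor_nonneg.2 (by nlinarith [(tmem i).1])
    have h0j : (0:ℤ) ≤ ⌊(N:ℝ) * t j⌋ := Int.floor_nonneg.2 (by nlinarith [(tmem j).1])
    omega
  have fsij : ⌊(N:ℝ) * s i⌋ = ⌊(N:ℝ) * s j⌋ := by
    have := congrArg (fun x => (x.2 : ℕ)) hFij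
    simp [hF] at this
    have h0i : (0:ℤ) ≤ ⌊(N:ℝ) * s i⌋ := Int.floor_nonneg.2 (by nlinarith [(smem i).1])
    have h0j : (0:ℤ) ≤ ⌊(N:ℝ) * s j⌋ := Int.floor_nonneg.2 (by nlinarith [(smem j).1])
    omega
  have ht1 : |t i - t j| < 1/N := by
    have := abs_sub_lt_one_of_floor_eq ftij
    rw [show (N:ℝ)*t i - (N:ℝ)*t j = N * (t i - t j) by ring, abs_mul, abs_of_pos hNpos'] at this
    rw [lt_div_iff₀ hNpos']
    linarith
  have hs1 : |s i - s j| < 1/N := by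
    have := abs_sub_lt_one_of_floor_eq fsij
    rw [show (N:ℝ)*s i - (N:ℝ)*s j = N * (s i - s j) by ring, abs_mul, abs_of_pos hNpos'] at this
    rw [lt_div_iff₀ hNpos']
    linarith
  -- the element
  have habs : ∀ (P Q K : ℤ), ((P:ℝ) = (i:ℝ) - (j:ℝ)) → (Q = qq i - qq j) → (K = kk i - kk j) →
      ‖gv α β a b P Q K‖ < η := by
    intro P Q K hP hQ hK
    have hre : (gv α β a b P Q K).re = β * (t i - t j) := by
      rw [gv_re, hQ]
      push_cast
      have k1 := key1 i; have k2 := key1 j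
      rw [hP]; linarith [k1, k2]
    have him : (gv α β a b P Q K).im = (2*Real.pi) * (s i - s j) := by
      rw [gv_im, hQ, hK]
      push_cast
      have k1 := key2 i; have k2 := key2 j
      simp only [hA] at k1 k2
      rw [hP]; push_cast; linarith [k1, k2]
    calc ‖gv α β a b P Q K‖ ≤ |(gv α β a b P Q K).re| + |(gv α β a b P Q K).im| :=
          Complex.norm_le_abs_re_add_abs_im _
      _ < |β| * (1/N) + (2*Real.pi) * (1/N) := by
          rw [hre, him]
          gcongr ?_ + ?_
          · rw [abs_mul]
            exact mul_lt_mul_of_pos_left ht1 hβ' |>.trans_le (le_of_eq rfl)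
          · rw [abs_mul, abs_of_pos h2π]
            exact mul_lt_mul_of_pos_left hs1 h2π
      _ < η := by
          rw [div_lt_iff₀ hη] at hN
          have : |β| * (1/N) + (2*Real.pi) * (1/N) = (|β| + 2*Real.pi) / N := by ring
          rw [this, div_lt_iff₀ hNpos']
          nlinarith
  have gvneg : ∀ (P Q K : ℤ), gv α β a b (-P) (-Q) (-K) = - gv α β a b P Q K := by
    intro P Q K; simp only [gv]; push_cast; ring
  have main : ‖gv α β a b (((i:ℕ):ℤ) - ((j:ℕ):ℤ)) (qq i - qq j) (kk i - kk j)‖ < η :=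
    habs _ _ _ (by push_cast; ring) rfl rfl
  have hvne : (i:ℕ) ≠ (j:ℕ) := fun hv => hij (Fin.ext hv)
  rcases lt_or_gt_of_ne hvne with hlt | hgt
  · refine ⟨((j:ℕ):ℤ) - ((i:ℕ):ℤ), qq j - qq i, kk j - kk i, by omega, ?_⟩
    rw [show ((j:ℕ):ℤ) - ((i:ℕ):ℤ) = -(((i:ℕ):ℤ) - ((j:ℕ):ℤ)) by ring,
        show qq j - qq i = -(qq i - qq j) by ring,
        show kk j - kk i = -(kk i - kk j) by ring, gvneg, norm_neg]
    exact main
  · exact ⟨((i:ℕ):ℤ) - ((j:ℕ):ℤ), qq i - qq j, kk i - kk j, by omega, main⟩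

lemma gv_ne {α β a b : ℝ} (h : RelQ α β a b) (p q k : ℤ) (hp : p ≠ 0) :
    gv α β a b p q k ≠ 0 := by
  intro h0
  have hre : (p:ℝ) * α + q * β = 0 := by rw [← gv_re α β a b p q k, h0]; simp
  exact hp (indep2 h p q hre).1


lemma dense_GS {α β a b : ℝ} (h : RelQ α β a b) : Dense ((GS α β a b : Set ℂ)) := by
  by_cases h2 : ∀ ε : ℝ, 0 < ε → ∃ x ∈ GS α β a b, ∃ y ∈ GS α β a b,
      ‖x‖ < ε ∧ ‖y‖ < ε ∧ Wd x y ≠ 0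
  · exact dense_of_pairs h2
  · push_neg at h2
    obtain ⟨ε₀, hε₀, hpar⟩ := h2
    obtain ⟨p₀, q₀, k₀, hp₀, hg₀a⟩ := small_elt h ε₀ hε₀
    set g₀ := gv α β a b p₀ q₀ k₀ with hg₀def
    have hg₀GS : g₀ ∈ GS α β a b := ⟨p₀, q₀, k₀, rfl⟩
    have hg₀ne : g₀ ≠ 0 := gv_ne h _ _ _ (by omega)
    have hg₀n : ‖g₀‖ < ε₀ := by exact hg₀a
    have hg₀pos : 0 < ‖g₀‖ := norm_pos_iff.2 hg₀ne
    set φ : ℝ →+ ℂ := AddMonoidHom.mk' (fun c => c • g₀) (fun c d => add_smul c d g₀) with hφ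
    set S : AddSubgroup ℝ := AddSubgroup.comap φ (GS α β a b).topologicalClosure with hS
    have hSc : IsClosed (S : Set ℝ) := by
      have hcont : Continuous fun c : ℝ => c • g₀ := continuous_id.smul continuous_const
      exact IsClosed.preimage hcont (AddSubgroup.isClosed_topologicalClosure _)
    have hsmallS : ∀ ε : ℝ, 0 < ε → ∃ c : ℝ, c ≠ 0 ∧ |c| < ε ∧ c ∈ S := by
      intro ε hε'
      obtain ⟨p, q, k, hp, habs⟩ := small_elt h (min ε₀ (ε * ‖g₀‖)) (by positivity)
      set x := gv α β a b p q k with hxdef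
      have hxGS : x ∈ GS α β a b := ⟨p, q, k, rfl⟩
      have hxn : ‖x‖ < min ε₀ (ε * ‖g₀‖) := by exact habs
      have hxne : x ≠ 0 := gv_ne h _ _ _ (by omega)
      have hWpar : Wd g₀ x = 0 :=
        hpar g₀ hg₀GS x hxGS hg₀n (lt_of_lt_of_le hxn (min_le_left _ _))
      obtain ⟨c, hc⟩ := parallel hg₀ne hWpar
      have hnx : ‖x‖ = |c| * ‖g₀‖ := by rw [hc, norm_smul]; rfl
      refine ⟨c, ?_, ?_, ?_⟩
      · rintro rfl; rw [zero_smul] at hc; exact hxne hc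
      · have h' := lt_of_lt_of_le hxn (min_le_right _ _)
        rw [hnx] at h'
        exact lt_of_mul_lt_mul_right h' (le_of_lt hg₀pos)
      · show φ c ∈ (GS α β a b).topologicalClosure
        have : φ c = x := by
          rw [hφ]; simp only [AddMonoidHom.mk'_apply]; exact hc.symm
        rw [this]
        exact (GS α β a b).le_topologicalClosure hxGS
    have hlineS : ∀ c : ℝ, c • g₀ ∈ closure ((GS α β a b : Set ℂ)) := by
      rcases AddSubgroup.dense_or_cyclic S with hdense | ⟨a₀, hcyc⟩
      · intro c
        have huniv : (S : Set ℝ) = Set.univ := by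
          rw [← hdense.closure_eq, hSc.closure_eq]
        have hcS : c ∈ S := by
          have : c ∈ (S : Set ℝ) := by rw [huniv]; trivial
          exact this
        have := hcS
        rw [hS, AddSubgroup.mem_comap] at this
        rw [← AddSubgroup.topologicalClosure_coe]
        exact this
      · exfalso
        by_cases ha₀ : a₀ = 0
        · obtain ⟨c, hc0, hcε, hcS⟩ := hsmallS 1 one_pos
          rw [hcyc] at hcS
          obtain ⟨n, hn⟩ := AddSubgroup.mem_closure_singleton.1 hcS
          rw [ha₀] at hn
          simp at hn
          exact hc0 hn.symm
        · obtain ⟨c, hc0, hcε, hcS⟩ := hsmallS |a₀| (abs_pos.2 ha₀)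
          rw [hcyc] at hcS
          obtain ⟨n, hn⟩ := AddSubgroup.mem_closure_singleton.1 hcS
          rw [zsmul_eq_mul] at hn
          rcases eq_or_ne n 0 with rfl | hn0
          · simp at hn; exact hc0 hn.symm
          · have : |a₀| ≤ |c| := by
              rw [← hn, abs_mul]
              have h1 : (1:ℝ) ≤ |(n:ℝ)| := by
                rw [← Int.cast_abs]
                exact_mod_cast Int.one_le_abs hn0
              nlinarith [abs_nonneg a₀]
            linarith
    set fh : ℂ →+ ℝ := AddMonoidHom.mk'
        (fun v : ℂ => g₀.re * v.im - g₀.im * v.re)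
        (by intro u v; simp only [Complex.add_re, Complex.add_im]; ring) with hfh
    have hfh_apply : ∀ v : ℂ, fh v = g₀.re * v.im - g₀.im * v.re := fun v => rfl
    have hfsmul : ∀ (c : ℝ) (u : ℂ), fh (c • u) = c * fh u := by
      intro c u
      simp only [hfh_apply, Complex.smul_re, Complex.smul_im, smul_eq_mul]
      ring
    set T : AddSubgroup ℝ := AddSubgroup.map fh (GS α β a b) with hT
    rcases AddSubgroup.dense_or_cyclic T with hTd | ⟨a₀, hTc⟩
    · -- T dense: conclude density of GS
      rw [Metric.dense_iff]
      intro ξ ε hε'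
      obtain ⟨tv, htb, htT⟩ := Metric.dense_iff.1 hTd (fh ξ) (ε/2 * ‖g₀‖) (by positivity)
      obtain ⟨γ', hγ'GS, rfl⟩ := htT
      set v : ℂ := γ' - ξ with hv
      have hfv : |fh v| < ε/2 * ‖g₀‖ := by
        have : dist (fh γ') (fh ξ) < ε/2 * ‖g₀‖ := Metric.mem_ball.1 htb
        rw [Real.dist_eq] at this
        rw [hv, map_sub]
        exact this
      set e : ℂ := (Complex.normSq g₀)⁻¹ • (Complex.I * g₀) with he
      have hnsq : Complex.normSq g₀ ≠ 0 := (Complex.normSq_pos.2 hg₀ne).ne'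
      have hfe : fh e = 1 := by
        rw [he, hfsmul]
        have : fh (Complex.I * g₀) = Complex.normSq g₀ := by
          simp only [hfh_apply, Complex.mul_re, Complex.mul_im, Complex.I_re, Complex.I_im,
            Complex.normSq_apply]
          ring
        rw [this]
        field_simp
      have hne : ‖e‖ = ‖g₀‖⁻¹ := by
        have h1 : ‖(Complex.I * g₀)‖ = ‖g₀‖ := by rw [norm_mul, Complex.norm_I, one_mul]
        have h2 : Complex.normSq g₀ = ‖g₀‖^2 := by
          rw [Complex.normSq_eq_norm_sq]
        have hn0 : ‖g₀‖ ≠ 0 := ne_of_gt hg₀pos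
        rw [he, norm_smul, Real.norm_eq_abs,
          _root_.abs_of_nonneg (inv_nonneg.2 (Complex.normSq_nonneg g₀)), h1, h2, sq]
        field_simp
      have hker : fh (v - (fh v) • e) = 0 := by
        rw [map_sub, hfsmul, hfe, mul_one, sub_self]
      have hWk : Wd g₀ (v - fh v • e) = 0 := by
        unfold Wd
        rw [← hfh_apply]
        exact hker
      obtain ⟨c, hc⟩ := parallel hg₀ne hWk
      have hbcl : γ' - c • g₀ ∈ closure ((GS α β a b : Set ℂ)) := by
        have h1 : γ' ∈ (GS α β a b).topologicalClosure := (GS α β a b).le_topologicalClosure hγ'GS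
        have h2 : c • g₀ ∈ (GS α β a b).topologicalClosure := by
          have := hlineS c
          rwa [← AddSubgroup.topologicalClosure_coe, SetLike.mem_coe] at this
        have h3 := sub_mem h1 h2
        rwa [← SetLike.mem_coe, AddSubgroup.topologicalClosure_coe] at h3
      have hdist1 : dist ξ (γ' - c • g₀) < ε/2 := by
        have hveq : v - c • g₀ = fh v • e := by
          have : v - fh v • e = c • g₀ := hc
          rw [← this]; abel
        have : ξ - (γ' - c • g₀) = -(v - c • g₀) := by rw [hv]; ring
        rw [dist_eq_norm, this, norm_neg, hveq, norm_smul, Real.norm_eq_abs, hne]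
        calc |fh v| * ‖g₀‖⁻¹ < (ε/2 * ‖g₀‖) * ‖g₀‖⁻¹ := by
              apply mul_lt_mul_of_pos_right hfv
              positivity
          _ = ε/2 := by rw [mul_assoc, mul_inv_cancel₀ (ne_of_gt hg₀pos), mul_one]
      obtain ⟨b'', hb''GS, hdist2⟩ := Metric.mem_closure_iff.1 hbcl (ε/2) (by positivity)
      refine ⟨b'', Metric.mem_ball.2 ?_, hb''GS⟩
      calc dist b'' ξ ≤ dist b'' (γ' - c • g₀) + dist (γ' - c • g₀) ξ := dist_triangle _ _ _
        _ < ε/2 + ε/2 :=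
            add_lt_add (by rw [dist_comm]; exact hdist2) (by rw [dist_comm]; exact hdist1)
        _ = ε := by ring
    · -- T cyclic: contradiction with RelQ
      exfalso
      have hmem : ∀ p q k : ℤ, fh (gv α β a b p q k) ∈ T :=
        fun p q k => ⟨gv α β a b p q k, ⟨p, q, k, rfl⟩, rfl⟩
      have hval : ∀ p q k : ℤ, fh (gv α β a b p q k)
          = g₀.re * ((p:ℝ) * a + q * b + k * (2*Real.pi)) - g₀.im * ((p:ℝ) * α + q * β) := by
        intro p q k
        rw [hfh_apply, gv_im α β a b p q k, gv_re α β a b p q k]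
      obtain ⟨n₁, hn₁⟩ := AddSubgroup.mem_closure_singleton.1 (hTc ▸ hmem 1 0 0)
      obtain ⟨n₂, hn₂⟩ := AddSubgroup.mem_closure_singleton.1 (hTc ▸ hmem 0 1 0)
      obtain ⟨n₃, hn₃⟩ := AddSubgroup.mem_closure_singleton.1 (hTc ▸ hmem 0 0 1)
      rw [zsmul_eq_mul, hval] at hn₁ hn₂ hn₃
      push_cast at hn₁ hn₂ hn₃
      have e₁ : g₀.re * a - g₀.im * α = n₁ * a₀ := by linarith [hn₁]
      have e₂ : g₀.re * b - g₀.im * β = n₂ * a₀ := by linarith [hn₂]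
      have e₃ : g₀.re * (2*Real.pi) = n₃ * a₀ := by linarith [hn₃]
      have hπ := Real.pi_pos
      by_cases ha₀ : a₀ = 0
      · rw [ha₀] at e₃ e₁
        have hw0 : g₀.re = 0 := by
          have : g₀.re * (2*Real.pi) = 0 := by rw [e₃]; ring
          rcases mul_eq_zero.1 this with h' | h'
          · exact h'
          · linarith
        have him : g₀.im ≠ 0 := fun h0 => hg₀ne (Complex.ext hw0 h0)
        have : α = 0 := by
          rw [hw0] at e₁
          have : g₀.im * α = 0 := by linarith [e₁]
          rcases mul_eq_zero.1 this with h' | h'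
          · exact absurd h' him
          · exact h'
        exact alpha_ne h this
      · by_cases hw : g₀.re = 0
        · have him : g₀.im ≠ 0 := fun h0 => hg₀ne (Complex.ext hw h0)
          have hn₃0 : n₃ = 0 := by
            rw [hw] at e₃
            have : (n₃:ℝ) * a₀ = 0 := by linarith [e₃]
            rcases mul_eq_zero.1 this with h' | h'
            · exact_mod_cast h'
            · exact absurd h' ha₀
          have hrel : (n₂:ℝ) * (Real.pi * α) + (-n₁ : ℤ) * (Real.pi * β)
              + (0:ℤ) * (a * β - b * α) = 0 := by
            rw [hw] at e₁ e₂
            have key : g₀.im * ((n₂:ℝ) * α - n₁ * β) = 0 := by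
              linear_combination (-(n₂:ℝ)) * e₁ + (n₁:ℝ) * e₂
            rcases mul_eq_zero.1 key with h' | h'
            · exact absurd h' him
            · push_cast
              linear_combination Real.pi * h'
          obtain ⟨hA, hB, _⟩ := h n₂ (-n₁) 0 hrel
          have hn₁0 : n₁ = 0 := by omega
          rw [hw, hn₁0] at e₁
          push_cast at e₁
          have : α = 0 := by
            have : g₀.im * α = 0 := by linarith [e₁]
            rcases mul_eq_zero.1 this with h' | h'
            · exact absurd h' him
            · exact h'
          exact alpha_ne h this
        · have hn₃0 : n₃ ≠ 0 := by
            intro h0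
            rw [h0] at e₃
            push_cast at e₃
            have : g₀.re * (2*Real.pi) = 0 := by linarith [e₃]
            rcases mul_eq_zero.1 this with h' | h'
            · exact hw h'
            · linarith
          have key : g₀.re * ((n₃:ℝ) * (a*β - b*α) - 2*Real.pi*n₁*β + 2*Real.pi*n₂*α) = 0 := by
            linear_combination (n₃:ℝ) * β * e₁ - (n₃:ℝ) * α * e₂ - ((n₁:ℝ)*β - n₂*α) * e₃
          rcases mul_eq_zero.1 key with h' | h'
          · exact hw h'
          · have hrel : ((2*n₂ : ℤ):ℝ) * (Real.pi * α) + ((-(2*n₁) : ℤ):ℝ) * (Real.pi * β)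
                + ((n₃:ℤ):ℝ) * (a * β - b * α) = 0 := by
              push_cast
              linear_combination h'
            obtain ⟨_, _, hC⟩ := h (2*n₂) (-(2*n₁)) n₃ hrel
            exact hn₃0 hC

lemma z_eq {R a : ℝ} {z : ℂ} (hR : 0 < R) (hz : z = (R:ℂ) * Complex.exp (a * Complex.I)) :
    z = Complex.exp ((Real.log R : ℂ) + a * Complex.I) := by
  rw [Complex.exp_add, hz]
  congr 1
  rw [← Complex.ofReal_exp, Real.exp_log hR]

lemma exp_gv {R r a b : ℝ} {z w : ℂ} (hR : 0 < R) (hr : 0 < r)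
    (hz : z = (R:ℂ) * Complex.exp (a * Complex.I))
    (hw : w = (r:ℂ) * Complex.exp (b * Complex.I)) (p q k : ℤ) :
    Complex.exp (gv (Real.log R) (Real.log r) a b p q k) = z ^ p * w ^ q := by
  rw [gv, Complex.exp_add, Complex.exp_add, Complex.exp_int_mul, Complex.exp_int_mul,
    Complex.exp_int_mul_two_pi_mul_I, mul_one, ← z_eq hR hz, ← z_eq hr hw]

lemma claimA {R r a b : ℝ} {z w : ℂ} (hR : 0 < R) (hr : 0 < r)
    (h : RelQ (Real.log R) (Real.log r) a b)
    (hz : z = (R:ℂ) * Complex.exp (a * Complex.I))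
    (hw : w = (r:ℂ) * Complex.exp (b * Complex.I))
    (η : ℝ) (hη : 0 < η) : ∃ p q : ℤ, 1 ≤ p ∧ ‖z^p * w^q - 1‖ < η := by
  obtain ⟨ρ, hρ, hcont⟩ : ∃ ρ > 0, ∀ ξ : ℂ, ‖ξ‖ < ρ → ‖Complex.exp ξ - 1‖ < η := by
    have hct := Complex.continuous_exp.continuousAt (x := 0)
    rw [Metric.continuousAt_iff] at hct
    obtain ⟨ρ, hρ, hb⟩ := hct η hη
    refine ⟨ρ, hρ, fun ξ hξ => ?_⟩
    have := hb (x := ξ) (by rwa [dist_zero_right])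
    rwa [Complex.exp_zero, dist_eq_norm] at this
  obtain ⟨p, q, k, hp, habs⟩ := small_elt h ρ hρ
  refine ⟨p, q, by omega, ?_⟩
  rw [← exp_gv hR hr hz hw p q k]
  exact hcont _ (by exact habs)

lemma zw_prod {z w : ℂ} (hz0 : z ≠ 0) (hw0 : w ≠ 0) (p₀ q₀ p₁ q₁ : ℤ) (K : ℕ) :
    z^p₀ * w^q₀ * (z^p₁ * w^q₁)^K = z^(p₀ + p₁ * K) * w^(q₀ + q₁ * K) := by
  rw [mul_pow, ← zpow_natCast (z^p₁) K, ← zpow_natCast (w^q₁) K, ← zpow_mul, ← zpow_mul,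
    zpow_add₀ hz0, zpow_add₀ hw0]
  ring

lemma approx_prod {R r a b : ℝ} {z w : ℂ} (hR : 0 < R) (hr : 0 < r)
    (h : RelQ (Real.log R) (Real.log r) a b)
    (hz : z = (R:ℂ) * Complex.exp (a * Complex.I))
    (hw : w = (r:ℂ) * Complex.exp (b * Complex.I))
    (hz0 : z ≠ 0) (hw0 : w ≠ 0)
    (u : ℂ) (hu : u ≠ 0) (ρ : ℝ) (hρ : 0 < ρ) :
    ∃ P Q : ℤ, 1 ≤ P ∧ ‖z^P * w^Q - u‖ < ρ := by
  obtain ⟨ρ₁, hρ₁, hc⟩ : ∃ ρ₁ > 0, ∀ ξ : ℂ, dist ξ (Complex.log u) < ρ₁ →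
      ‖Complex.exp ξ - u‖ < ρ/2 := by
    have hct := Complex.continuous_exp.continuousAt (x := Complex.log u)
    rw [Metric.continuousAt_iff] at hct
    obtain ⟨ρ₁, h1, h2⟩ := hct (ρ/2) (by positivity)
    refine ⟨ρ₁, h1, fun ξ hξ => ?_⟩
    have := h2 (x := ξ) hξ
    rwa [Complex.exp_log hu, dist_eq_norm] at this
  obtain ⟨γ, hγ, hγd⟩ := Metric.mem_closure_iff.1 (dense_GS h (Complex.log u)) ρ₁ hρ₁
  obtain ⟨p₀, q₀, k₀, rfl⟩ := hγ
  have h₀ : ‖z^p₀ * w^q₀ - u‖ < ρ/2 := by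
    rw [← exp_gv hR hr hz hw p₀ q₀ k₀]
    exact hc _ (by rw [dist_comm]; exact hγd)
  by_cases hp₀ : 1 ≤ p₀
  · exact ⟨p₀, q₀, hp₀, lt_trans h₀ (by linarith)⟩
  · push_neg at hp₀
    set K : ℕ := (1 - p₀).toNat with hK
    have hKz : (K:ℤ) = 1 - p₀ := Int.toNat_of_nonneg (by omega)
    obtain ⟨η, hη, hc2⟩ : ∃ η > 0, ∀ g : ℂ,
        ‖g - 1‖ < η → ‖(z^p₀ * w^q₀) * g^K - z^p₀ * w^q₀‖ < ρ/2 := by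
      have hcont : Continuous fun x : ℂ => (z^p₀ * w^q₀) * x^K := by continuity
      have hct := hcont.continuousAt (x := 1)
      rw [Metric.continuousAt_iff] at hct
      obtain ⟨η, h1, h2⟩ := hct (ρ/2) (by positivity)
      refine ⟨η, h1, fun g hg => ?_⟩
      have := h2 (x := g) (by rwa [dist_eq_norm])
      rw [dist_eq_norm] at this
      simpa using this
    obtain ⟨p₁, q₁, hp₁, hg⟩ := claimA hR hr h hz hw η hη
    refine ⟨p₀ + p₁ * K, q₀ + q₁ * K, ?_, ?_⟩
    · nlinarith [hKz, hp₁, hp₀]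
    · rw [← zw_prod hz0 hw0 p₀ q₀ p₁ q₁ K]
      calc ‖z^p₀ * w^q₀ * (z^p₁ * w^q₁)^K - u‖
          ≤ ‖z^p₀ * w^q₀ * (z^p₁ * w^q₁)^K - z^p₀ * w^q₀‖ + ‖z^p₀ * w^q₀ - u‖ := by
            have := dist_triangle (z^p₀ * w^q₀ * (z^p₁ * w^q₁)^K) (z^p₀ * w^q₀) u
            simpa [dist_eq_norm] using this
        _ < ρ/2 + ρ/2 := add_lt_add (hc2 _ hg) h₀
        _ = ρ := by ring

lemma step_lemma {R r a b : ℝ} {z w : ℂ} (hR : 0 < R) (hr : 0 < r)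
    (h : RelQ (Real.log R) (Real.log r) a b)
    (hz : z = (R:ℂ) * Complex.exp (a * Complex.I))
    (hw : w = (r:ℂ) * Complex.exp (b * Complex.I))
    (hz0 : z ≠ 0) (hw0 : w ≠ 0) (c : ℝ) (hc0 : 0 < c) (hc1 : c < 1) :
    ∀ τ : ℂ, ‖τ‖ = 1 → ∃ P Q : ℤ, 1 ≤ P ∧ 0 < ‖z^P*w^Q - 1‖ ∧ ‖z^P*w^Q - 1‖ < c ∧
      3/4 * ‖z^P*w^Q - 1‖ < ((starRingEnd ℂ) τ * (z^P*w^Q - 1)).re := by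
  intro τ hτ
  set u : ℂ := 1 + ((c:ℂ)/2) * τ with hu
  have hnτ : ‖((c:ℂ)/2) * τ‖ = c/2 := by
    rw [norm_mul, hτ, mul_one, norm_div, Complex.norm_real]
    · simp [abs_of_pos hc0]
  have hu0 : u ≠ 0 := by
    intro h0
    have h1 : ((c:ℂ)/2) * τ = -1 := by
      have : (1 : ℂ) + ((c:ℂ)/2) * τ = 0 := h0
      linear_combination this
    have := congrArg (fun x : ℂ => ‖x‖) h1
    simp only [hnτ, norm_neg, norm_one] at this
    linarith
  obtain ⟨P, Q, hP, hPQ⟩ := approx_prod hR hr h hz hw hz0 hw0 u hu0 (c/100) (by positivity)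
  set ζ : ℂ := z^P*w^Q - 1 with hζ
  have herr : ‖ζ - ((c:ℂ)/2)*τ‖ < c/100 := by
    have : ζ - ((c:ℂ)/2)*τ = z^P*w^Q - u := by rw [hζ, hu]; ring
    rwa [this]
  have habs1 := abs_norm_sub_norm_le ζ (((c:ℂ)/2)*τ)
  rw [hnτ, abs_le] at habs1
  have hζub : ‖ζ‖ < 51/100 * c := by
    have := habs1.2; linarith
  have hζlb : 49/100 * c < ‖ζ‖ := by
    have := habs1.1; linarith
  have hsplit : (starRingEnd ℂ) τ * ζ
      = (starRingEnd ℂ) τ * (((c:ℂ)/2) * τ) + (starRingEnd ℂ) τ * (ζ - ((c:ℂ)/2)*τ) := by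
    ring
  have hre1 : ((starRingEnd ℂ) τ * (((c:ℂ)/2) * τ)).re = c/2 := by
    have h1 : (starRingEnd ℂ) τ * (((c:ℂ)/2) * τ) = ((c/2 : ℝ) : ℂ) * ((starRingEnd ℂ) τ * τ) := by
      push_cast; ring
    rw [h1]
    rw [show (starRingEnd ℂ) τ * τ = (Complex.normSq τ : ℂ) by
      rw [mul_comm, Complex.mul_conj]]
    rw [Complex.re_ofReal_mul]
    have : Complex.normSq τ = 1 := by
      rw [Complex.normSq_eq_norm_sq, hτ]; norm_num
    rw [Complex.ofReal_re, this, mul_one]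
  have hre2 : |((starRingEnd ℂ) τ * (ζ - ((c:ℂ)/2)*τ)).re| ≤ c/100 := by
    calc |((starRingEnd ℂ) τ * (ζ - ((c:ℂ)/2)*τ)).re|
        ≤ ‖(starRingEnd ℂ) τ * (ζ - ((c:ℂ)/2)*τ)‖ := by
          exact Complex.abs_re_le_norm _
      _ = ‖ζ - ((c:ℂ)/2)*τ‖ := by rw [norm_mul, RCLike.norm_conj, hτ, one_mul]
      _ ≤ c/100 := le_of_lt herr
  have hre : 49/100 * c ≤ ((starRingEnd ℂ) τ * ζ).re := by
    rw [hsplit, Complex.add_re, hre1]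
    have := abs_le.1 hre2
    linarith [this.1]
  exact ⟨P, Q, hP, by linarith, by linarith, by linarith⟩

set_option maxHeartbeats 1000000 in
/-- Under the generic independence condition on the eigenvalues
`z = R·e^{ia}`, `w = r·e^{ib}`, for every `v ∈ ℂ` and `δ > 0` there is `M > 0` such
that whenever `|z^m·w^n − v| < δ`, there are `m', n'` with `m < m' ≤ m + M` and
`|z^{m'}·w^{n'} − v| < δ`. -/
theorem recurrence_zpow_mul_zpow
    (R r a b : ℝ) (hR : 0 < R) (hr : 0 < r)
    (hli : LinearIndependent ℚ
      ![Real.pi * Real.log R, Real.pi * Real.log r,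
        a * Real.log r - b * Real.log R])
    (z w : ℂ)
    (hz : z = (R : ℂ) * Complex.exp (a * Complex.I))
    (hw : w = (r : ℂ) * Complex.exp (b * Complex.I)) :
    ∀ v : ℂ, ∀ δ : ℝ, 0 < δ →
      ∃ M : ℕ, 0 < M ∧
        ∀ m n : ℤ, ‖z ^ m * w ^ n - v‖ < δ →
          ∃ m' n' : ℤ, m < m' ∧ m' ≤ m + M ∧
            ‖z ^ m' * w ^ n' - v‖ < δ := by
  intro v δ hδ
  have h : RelQ (Real.log R) (Real.log r) a b := rel_of_li hli
  have hz0 : z ≠ 0 := by rw [z_eq hR hz]; exact Complex.exp_ne_zero _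
  have hw0 : w ≠ 0 := by rw [z_eq hr hw]; exact Complex.exp_ne_zero _
  set B : ℝ := ‖v‖ + δ with hB
  have hBpos : 0 < B := by positivity
  set c : ℝ := δ / (4 * B) with hc
  have hc0 : 0 < c := by positivity
  have hc1 : c < 1 := by
    rw [hc, div_lt_one (by positivity)]
    have : δ ≤ B := by rw [hB]; linarith [norm_nonneg v]
    linarith
  have hBc : B * c = δ/4 := by rw [hc]; field_simp
  have hstep := step_lemma hR hr h hz hw hz0 hw0 c hc0 hc1
  have hstep' : ∀ τ : Metric.sphere (0:ℂ) 1, ∃ P Q : ℤ, 1 ≤ P ∧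
      0 < ‖z^P*w^Q - 1‖ ∧ ‖z^P*w^Q - 1‖ < c ∧
      3/4 * ‖z^P*w^Q - 1‖ < ((starRingEnd ℂ) (τ:ℂ) * (z^P*w^Q - 1)).re :=
    fun τ => hstep τ (mem_sphere_zero_iff_norm.1 τ.2)
  choose Pf Qf hP1 hPpos hPlt hPre using hstep'
  set Wset : Metric.sphere (0:ℂ) 1 → Set ℂ := fun τ =>
    {τ' : ℂ | 1/2 * ‖z^(Pf τ)*w^(Qf τ) - 1‖
      < ((starRingEnd ℂ) τ' * (z^(Pf τ)*w^(Qf τ) - 1)).re} with hWset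
  have hWopen : ∀ τ, IsOpen (Wset τ) := by
    intro τ
    apply isOpen_lt continuous_const
    exact Complex.continuous_re.comp ((Complex.continuous_conj).mul continuous_const)
  have hWcover : (Metric.sphere (0:ℂ) 1) ⊆ ⋃ τ : Metric.sphere (0:ℂ) 1, Wset τ := by
    intro τ' hτ'
    refine Set.mem_iUnion.2 ⟨⟨τ', hτ'⟩, ?_⟩
    have h1 := hPre ⟨τ', hτ'⟩
    have h2 := hPpos ⟨τ', hτ'⟩
    simp only [hWset, Set.mem_setOf_eq]
    linarith
  obtain ⟨t, ht⟩ := (isCompact_sphere (0:ℂ) 1).elim_finite_subcover Wset hWopen hWcover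
  set M : ℕ := t.sup fun τ => (Pf τ).toNat with hM
  have hPM : ∀ τ ∈ t, (Pf τ : ℤ) ≤ M := by
    intro τ hτ
    have h1 : (Pf τ).toNat ≤ M := Finset.le_sup (f := fun τ => (Pf τ).toNat) hτ
    have h2 := hP1 τ
    have h3 := Int.self_le_toNat (Pf τ)
    have h4 : ((Pf τ).toNat : ℤ) ≤ (M : ℤ) := by exact_mod_cast h1
    omega
  obtain ⟨τ0, hτ0t, _⟩ : ∃ τ0 ∈ t, (1:ℂ) ∈ Wset τ0 := by
    have h1 : (1:ℂ) ∈ Metric.sphere (0:ℂ) 1 := by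
      simp [mem_sphere_zero_iff_norm]
    obtain ⟨τ0, hτ0t, h1W⟩ := Set.mem_iUnion₂.1 (ht h1)
    exact ⟨τ0, hτ0t, h1W⟩
  have hM0 : 0 < M := by
    have h1 : (Pf τ0).toNat ≤ M := Finset.le_sup (f := fun τ => (Pf τ).toNat) hτ0t
    have h2 := hP1 τ0
    omega
  refine ⟨M, hM0, ?_⟩
  intro m n hmn
  set x : ℂ := z^m * w^n with hx
  have hxv : ‖x - v‖ < δ := hmn
  have hxB : ‖x‖ < B := by
    have h1 : ‖x‖ = ‖(x - v) + v‖ := by congr 1; ring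
    calc ‖x‖ = ‖(x - v) + v‖ := h1
      _ ≤ ‖x - v‖ + ‖v‖ := norm_add_le _ _
      _ < δ + ‖v‖ := by linarith
      _ = B := by rw [hB]; ring
  have hfinal : ∀ σ : Metric.sphere (0:ℂ) 1, σ ∈ t →
      ‖x * (z^(Pf σ) * w^(Qf σ)) - v‖ < δ →
      ∃ m' n' : ℤ, m < m' ∧ m' ≤ m + M ∧ ‖z ^ m' * w ^ n' - v‖ < δ := by
    intro σ hσ hlt
    refine ⟨m + Pf σ, n + Qf σ, by linarith [hP1 σ], by have := hPM σ hσ; omega, ?_⟩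
    rw [zpow_add₀ hz0, zpow_add₀ hw0]
    calc ‖z^m * z^(Pf σ) * (w^n * w^(Qf σ)) - v‖
        = ‖x * (z^(Pf σ) * w^(Qf σ)) - v‖ := by congr 1; rw [hx]; ring
      _ < δ := hlt
  by_cases hcase : ‖x - v‖ ≤ δ/2
  · refine hfinal τ0 hτ0t ?_
    set ζ : ℂ := z^(Pf τ0)*w^(Qf τ0) - 1 with hζ
    have hPζ : ‖ζ‖ < c := hPlt τ0
    have hid : x * (z^(Pf τ0) * w^(Qf τ0)) - v = (x - v) + x * ζ := by rw [hζ]; ring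
    rw [hid]
    calc ‖(x - v) + x * ζ‖ ≤ ‖x - v‖ + ‖x‖ * ‖ζ‖ := by
          rw [← norm_mul]; exact norm_add_le _ _
      _ < δ/2 + δ/4 := by
          have hm := mul_lt_mul'' hxB hPζ (norm_nonneg x) (norm_nonneg ζ)
          have hm2 : ‖x‖ * ‖ζ‖ < δ/4 := hBc ▸ hm
          exact add_lt_add_of_le_of_lt hcase hm2
      _ < δ := by linarith
  · push_neg at hcase
    set y : ℂ := x - v with hy
    have hyn : δ/2 < ‖y‖ := hcase
    have hy0 : y ≠ 0 := by
      intro h0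
      rw [h0, norm_zero] at hyn
      linarith
    have hx0 : x ≠ 0 := by
      rw [hx]; exact mul_ne_zero (zpow_ne_zero _ hz0) (zpow_ne_zero _ hw0)
    set cst : ℂ := (starRingEnd ℂ) y * x with hcst
    have hcst0 : cst ≠ 0 := mul_ne_zero (by simpa using hy0) hx0
    have hcpos : 0 < ‖cst‖ := norm_pos_iff.2 hcst0
    have hcstn : ‖cst‖ = ‖y‖ * ‖x‖ := by rw [hcst, norm_mul, RCLike.norm_conj]
    set τs : ℂ := -((starRingEnd ℂ) cst) / (‖cst‖ : ℂ) with hτs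
    have hτs1 : ‖τs‖ = 1 := by
      rw [hτs, norm_div, norm_neg, RCLike.norm_conj, Complex.norm_real, Real.norm_eq_abs,
        abs_of_pos hcpos]
      have habsne : ‖cst‖ ≠ 0 := by exact ne_of_gt hcpos
      exact div_self habsne
    have hτsS : τs ∈ Metric.sphere (0:ℂ) 1 := mem_sphere_zero_iff_norm.2 hτs1
    obtain ⟨σ, hσt, hσW⟩ := Set.mem_iUnion₂.1 (ht hτsS)
    set ζ : ℂ := z^(Pf σ)*w^(Qf σ) - 1 with hζ
    have hPζ : ‖ζ‖ < c := hPlt σ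
    have hσW' : 1/2 * ‖ζ‖ < ((starRingEnd ℂ) τs * ζ).re := hσW
    have hkey : (cst * ζ).re < -(1/2) * (‖cst‖ * ‖ζ‖) := by
      have hconj : (starRingEnd ℂ) τs = -cst / (‖cst‖ : ℂ) := by
        rw [hτs, map_div₀, map_neg, Complex.conj_conj, Complex.conj_ofReal]
      rw [hconj] at hσW'
      have hrw : -cst / (‖cst‖ : ℂ) * ζ = ((‖cst‖⁻¹ : ℝ) : ℂ) * (-(cst * ζ)) := by
        push_cast
        rw [div_eq_mul_inv]
        ring
      rw [hrw, Complex.re_ofReal_mul, Complex.neg_re] at hσW'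
      have hprod := mul_lt_mul_of_pos_left hσW' hcpos
      have heq : ‖cst‖ * (‖cst‖⁻¹ * -(cst * ζ).re) = -(cst * ζ).re := by
        rw [← mul_assoc, mul_inv_cancel₀ (ne_of_gt hcpos), one_mul]
      rw [heq] at hprod
      nlinarith
    refine hfinal σ hσt ?_
    have hid : x * (z^(Pf σ) * w^(Qf σ)) - v = y + x * ζ := by rw [hζ, hy]; ring
    rw [hid]
    have hre : (y * (starRingEnd ℂ) (x*ζ)).re = (cst * ζ).re := by
      simp only [hcst, Complex.mul_re, Complex.mul_im, Complex.conj_re, Complex.conj_im]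
      ring
    have hexp : Complex.normSq (y + x*ζ) = ‖y‖^2 + ‖x*ζ‖^2 + 2 * (cst * ζ).re := by
      rw [Complex.normSq_add, hre, Complex.normSq_eq_norm_sq, Complex.normSq_eq_norm_sq]
    have hxζn : ‖x*ζ‖ < δ/4 := by
      rw [norm_mul]
      calc ‖x‖ * ‖ζ‖ < B * c := mul_lt_mul'' hxB hPζ (norm_nonneg x) (norm_nonneg ζ)
        _ = δ/4 := hBc
    have hyδ : ‖y‖ < δ := hxv
    have hxx : ‖x*ζ‖ = ‖x‖ * ‖ζ‖ := norm_mul x ζ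
    have hkey3 : (cst*ζ).re < -(1/2) * (‖y‖ * ‖x*ζ‖) := by
      rw [hcstn] at hkey
      rw [hxx]
      linarith [hkey]
    have hTY : ‖x*ζ‖ ≤ ‖y‖ := by linarith
    have h6 : 0 ≤ ‖x*ζ‖ * (‖y‖ - ‖x*ζ‖) :=
      mul_nonneg (norm_nonneg _) (by linarith)
    have hYsq : ‖y‖^2 < δ^2 := by nlinarith [hyδ, norm_nonneg y]
    have hfin : Complex.normSq (y + x*ζ) < δ^2 := by
      rw [hexp]
      linarith [hkey3, h6, hYsq]
    have h7 : Complex.normSq (y + x*ζ) = ‖y + x*ζ‖^2 := by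
      rw [Complex.normSq_eq_norm_sq]
    have hsq : ‖y + x*ζ‖^2 < δ^2 := by linarith
    exact lt_of_pow_lt_pow_left₀ 2 (le_of_lt hδ) hsq
end

section
/- Let R, r be positive real numbers and a, b real numbers such that the three real numbers π·log R, π·log r, and a·log r − b·log R are linearly independent over ℚ, and set z = R·e^{ia}, w = r·e^{ib}. Then for every v ∈ ℂ, every δ > 0, and every N ∈ ℕ, there exist a natural number M > 0 and sequences of integers (m_i)_{i≥0} and (n_i)_{i≥0} such that N < m_0 < m_1 < m_2 < ⋯, m_{i+1} − m_i ≤ M for all i, and |z^{m_i}·w^{n_i} − v| < δ for all i ≥ 0. -/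
open Real

/-- distance to the nearest integer -/
noncomputable def nid (x : ℝ) : ℝ := |x - round x|

lemma nid_le (x : ℝ) (k : ℤ) : nid x ≤ |x - k| := by
  rcases eq_or_ne k (round x) with h | h
  · simp [nid, h]
  · have h2 : |x - round x| ≤ 1 / 2 := abs_sub_round x
    have h1 : (1 : ℝ) ≤ |(k : ℝ) - round x| := by
      have : k - round x ≠ 0 := sub_ne_zero.mpr h
      have := Int.one_le_abs this
      calc (1:ℝ) = ((1:ℤ):ℝ) := by norm_num
        _ ≤ ((|k - round x| : ℤ) : ℝ) := by exact_mod_cast this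
        _ = |(k:ℝ) - round x| := by push_cast; ring_nf
    have h3 : |(k:ℝ) - round x| ≤ |x - k| + |x - round x| := by
      have := abs_sub_abs_le_abs_sub ((k:ℝ) - round x) 0
      calc |(k:ℝ) - round x| = |(x - round x) - (x - k)| := by ring_nf
        _ ≤ |x - round x| + |x - k| := abs_sub _ _
        _ = |x - k| + |x - round x| := by ring
    have : (1:ℝ)/2 ≤ |x - k| := by linarith
    calc nid x ≤ 1/2 := h2
      _ ≤ |x - k| := this

lemma nid_le' (x : ℝ) (n : ℤ) : nid x ≤ |x + n| := by
  simpa [sub_neg_eq_add] using nid_le x (-n)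

lemma exists_int_of_nid_lt {x ε : ℝ} (h : nid x < ε) : ∃ n : ℤ, |x + n| < ε :=
  ⟨-round x, by simpa [nid, sub_eq_add_neg] using h⟩

lemma nid_add_int (x : ℝ) (k : ℤ) : nid (x + k) = nid x := by
  unfold nid
  rw [round_add_intCast]
  push_cast
  ring_nf

lemma nid_add_le (x y : ℝ) : nid (x + y) ≤ nid x + |y| := by
  calc nid (x + y) ≤ |x + y - round x| := nid_le _ _
    _ = |(x - round x) + y| := by ring_nf
    _ ≤ |x - round x| + |y| := abs_add_le _ _

/-- the subgroup ℤ(β₁,β₂) + ℤ(1,0) + ℤ(0,1) of ℝ² as a set -/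
def lat (β₁ β₂ : ℝ) : Set (ℝ × ℝ) :=
  {p | ∃ m n k : ℤ, p = (m * β₁ + n, m * β₂ + k)}

lemma lat_add {β₁ β₂ : ℝ} {p q : ℝ × ℝ} (hp : p ∈ lat β₁ β₂) (hq : q ∈ lat β₁ β₂) :
    p + q ∈ lat β₁ β₂ := by
  obtain ⟨m, n, k, rfl⟩ := hp
  obtain ⟨m', n', k', rfl⟩ := hq
  refine ⟨m + m', n + n', k + k', ?_⟩
  simp only [Prod.ext_iff, Prod.fst_add, Prod.snd_add]
  push_cast
  constructor <;> ring

lemma lat_zsmul {β₁ β₂ : ℝ} {p : ℝ × ℝ} (hp : p ∈ lat β₁ β₂) (c : ℤ) :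
    (c : ℝ) • p ∈ lat β₁ β₂ := by
  obtain ⟨m, n, k, rfl⟩ := hp
  refine ⟨c * m, c * n, c * k, ?_⟩
  simp only [Prod.ext_iff, Prod.smul_def, smul_eq_mul]
  push_cast
  constructor <;> ring

section
variable {β₁ β₂ : ℝ}
  (hind : ∀ p q s : ℤ, (p : ℝ) * β₁ + (q : ℝ) * β₂ = (s : ℝ) → p = 0 ∧ q = 0)
include hind

lemma exists_small {ε : ℝ} (hε : 0 < ε) :
    ∃ p : ℝ × ℝ, p ∈ lat β₁ β₂ ∧ p.1 ≠ 0 ∧ |p.1| < ε ∧ |p.2| < ε := by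
  obtain ⟨K, hK⟩ := exists_nat_gt (1 / ε)
  have hKpos : 0 < (K : ℝ) := lt_trans (by positivity) hK
  have hKinv : 1 / (K : ℝ) < ε := by
    rw [div_lt_iff₀ hKpos]
    rw [div_lt_iff₀ hε] at hK
    linarith
  -- pigeonhole
  set f : ℕ → ℤ × ℤ := fun m =>
    (⌊(K : ℝ) * Int.fract (m * β₁)⌋, ⌊(K : ℝ) * Int.fract (m * β₂)⌋) with hf
  have hmaps : ∀ m ∈ Finset.range (K * K + 1),
      f m ∈ (Finset.Ico (0:ℤ) K) ×ˢ (Finset.Ico (0:ℤ) K) := by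
    intro m _
    have h1 : ∀ x : ℝ, ⌊(K : ℝ) * Int.fract x⌋ ∈ Finset.Ico (0:ℤ) (K:ℤ) := by
      intro x
      rw [Finset.mem_Ico]
      constructor
      · exact Int.floor_nonneg.mpr (mul_nonneg (le_of_lt hKpos) (Int.fract_nonneg _))
      · rw [Int.floor_lt]
        push_cast
        calc (K:ℝ) * Int.fract x < K * 1 := by
              exact mul_lt_mul_of_pos_left (Int.fract_lt_one x) hKpos
          _ = K := by ring
    exact Finset.mem_product.mpr ⟨h1 _, h1 _⟩
  have hcard : ((Finset.Ico (0:ℤ) K) ×ˢ (Finset.Ico (0:ℤ) K)).card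
      < (Finset.range (K * K + 1)).card := by
    simp [Finset.card_product, Int.card_Ico]
  obtain ⟨m, _, m', _, hne, heq⟩ :=
    Finset.exists_ne_map_eq_of_card_lt_of_maps_to hcard hmaps
  -- build the small element
  have heq1 : ⌊(K : ℝ) * Int.fract (m * β₁)⌋ = ⌊(K : ℝ) * Int.fract (m' * β₁)⌋ := by
    have := congrArg Prod.fst heq; simpa [hf] using this
  have heq2 : ⌊(K : ℝ) * Int.fract (m * β₂)⌋ = ⌊(K : ℝ) * Int.fract (m' * β₂)⌋ := by
    have := congrArg Prod.snd heq; simpa [hf] using this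
  have key : ∀ x y : ℝ, ⌊(K : ℝ) * Int.fract x⌋ = ⌊(K : ℝ) * Int.fract y⌋ →
      |Int.fract x - Int.fract y| < ε := by
    intro x y h
    have h1 : |(K : ℝ) * Int.fract x - (K : ℝ) * Int.fract y| < 1 :=
      Int.abs_sub_lt_one_of_floor_eq_floor h
    have h2 : |Int.fract x - Int.fract y| < 1 / K := by
      rw [lt_div_iff₀ hKpos]
      calc |Int.fract x - Int.fract y| * K
          = |Int.fract x - Int.fract y| * |(K:ℝ)| := by rw [abs_of_pos hKpos]
        _ = |(Int.fract x - Int.fract y) * K| := (abs_mul _ _).symm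
        _ = |(K : ℝ) * Int.fract x - K * Int.fract y| := by ring_nf
        _ < 1 := h1
    exact lt_trans h2 hKinv
  refine ⟨(Int.fract (m * β₁) - Int.fract (m' * β₁), Int.fract (m * β₂) - Int.fract (m' * β₂)),
    ⟨(m : ℤ) - m', ⌊(m' : ℝ) * β₁⌋ - ⌊(m : ℝ) * β₁⌋, ⌊(m' : ℝ) * β₂⌋ - ⌊(m : ℝ) * β₂⌋, ?_⟩,
    ?_, key _ _ heq1, key _ _ heq2⟩
  · rw [Prod.ext_iff]
    constructor <;> · simp only [Int.fract]; push_cast; ring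
  · -- nonzero first coordinate
    intro h0
    have : ((m : ℤ) - m') * β₁ + ((⌊(m' : ℝ) * β₁⌋ - ⌊(m : ℝ) * β₁⌋ : ℤ) : ℝ) * 1 = 0 := by
      simp only [Int.fract] at h0
      push_cast
      push_cast at h0
      linarith
    have h1 : (((m : ℤ) - m' : ℤ) : ℝ) * β₁ + ((0:ℤ) : ℝ) * β₂ =
        ((⌊(m : ℝ) * β₁⌋ - ⌊(m' : ℝ) * β₁⌋ : ℤ) : ℝ) := by
      push_cast
      push_cast at this
      linarith
    have := (hind _ _ _ h1).1
    omega

end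
section
variable {β₁ β₂ : ℝ}
  (hind : ∀ p q s : ℤ, (p : ℝ) * β₁ + (q : ℝ) * β₂ = (s : ℝ) → p = 0 ∧ q = 0)
include hind

lemma exists_line :
    ∃ u : ℝ × ℝ, u ≠ 0 ∧ ∀ (t : ℝ) {ε : ℝ}, 0 < ε →
      ∃ p ∈ lat β₁ β₂, ‖p - t • u‖ < ε := by
  -- a sequence of small nonzero elements
  have hsmall : ∀ j : ℕ, ∃ p : ℝ × ℝ, p ∈ lat β₁ β₂ ∧ p ≠ 0 ∧ ‖p‖ < 1 / (j + 1) := by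
    intro j
    have hpos : (0:ℝ) < 1 / (j + 1) := by positivity
    obtain ⟨p, hp, hp1, hp2, hp3⟩ := exists_small hind hpos
    refine ⟨p, hp, fun h => hp1 (by rw [h]; rfl), ?_⟩
    rw [Prod.norm_def]
    exact max_lt (by rwa [Real.norm_eq_abs]) (by rwa [Real.norm_eq_abs])
  choose g hgmem hgne hgnorm using hsmall
  have hgpos : ∀ j, 0 < ‖g j‖ := fun j => norm_pos_iff.mpr (hgne j)
  set useq : ℕ → ℝ × ℝ := fun j => ‖g j‖⁻¹ • g j with huseq
  have husphere : ∀ j, useq j ∈ Metric.sphere (0 : ℝ × ℝ) 1 := by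
    intro j
    simp only [Metric.mem_sphere, dist_zero_right, huseq, norm_smul, norm_inv, norm_norm]
    exact inv_mul_cancel₀ (ne_of_gt (hgpos j))
  obtain ⟨u, humem, φ, hφmono, hφtends⟩ :=
    (isCompact_sphere (0 : ℝ × ℝ) 1).tendsto_subseq husphere
  have hunorm : ‖u‖ = 1 := by simpa [dist_zero_right] using humem
  refine ⟨u, fun h => by simp [h] at hunorm, ?_⟩
  intro t ε hε
  -- pick an index far along the subsequence
  have hε2 : 0 < ε / (2 * (|t| + 1)) := by positivity
  obtain ⟨n₀, hn₀⟩ := (Metric.tendsto_atTop.mp hφtends) _ hε2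
  obtain ⟨n₁, hn₁⟩ := exists_nat_one_div_lt (show (0:ℝ) < ε / 2 by positivity)
  set j := φ (max n₀ n₁) with hj
  have hja : dist (useq j) u < ε / (2 * (|t| + 1)) := hn₀ _ (le_max_left _ _)
  have hjb : ‖g j‖ < ε / 2 := by
    have h1 : ‖g j‖ < 1 / (j + 1) := hgnorm j
    have h2 : (n₁ : ℝ) + 1 ≤ (j : ℝ) + 1 := by
      have : n₁ ≤ j := le_trans (le_max_right n₀ n₁) (hφmono.le_apply)
      exact_mod_cast Nat.succ_le_succ this
    have h3 : 1 / ((j:ℝ) + 1) ≤ 1 / ((n₁:ℝ) + 1) :=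
      one_div_le_one_div_of_le (by positivity) h2
    calc ‖g j‖ < 1 / (j + 1) := h1
      _ ≤ 1 / ((n₁:ℝ) + 1) := h3
      _ < ε / 2 := hn₁
  -- the approximating lattice point
  set c : ℤ := ⌊t * ‖g j‖⁻¹⌋ with hc
  refine ⟨(c : ℝ) • g j, lat_zsmul (hgmem j) c, ?_⟩
  have key : (c:ℝ) • g j - t • u
      = ((c:ℝ) * ‖g j‖ - t) • useq j + t • (useq j - u) := by
    have hne0 : ‖g j‖ ≠ 0 := ne_of_gt (hgpos j)
    rw [huseq]
    rw [Prod.ext_iff]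
    simp only [Prod.fst_sub, Prod.snd_sub, Prod.fst_add, Prod.snd_add,
      Prod.smul_fst, Prod.smul_snd, smul_eq_mul]
    constructor <;> (field_simp; ring)
  rw [key]
  have hb1 : ‖((c:ℝ) * ‖g j‖ - t) • useq j‖ < ε / 2 := by
    rw [norm_smul]
    have hu1 : ‖useq j‖ = 1 := by
      simpa [dist_zero_right] using husphere j
    rw [hu1, mul_one]
    have hne0 : ‖g j‖ ≠ 0 := ne_of_gt (hgpos j)
    have : |(c:ℝ) * ‖g j‖ - t| = |(c:ℝ) - t * ‖g j‖⁻¹| * ‖g j‖ := by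
      have heq' : ((c:ℝ) - t * ‖g j‖⁻¹) * ‖g j‖ = (c:ℝ) * ‖g j‖ - t := by
        rw [sub_mul, inv_mul_cancel_right₀ hne0]
      rw [← heq', abs_mul, abs_of_pos (hgpos j)]
    rw [Real.norm_eq_abs, this]
    have h6 : |(c:ℝ) - t * ‖g j‖⁻¹| ≤ 1 := by
      rw [abs_sub_comm, hc, Int.self_sub_floor, Int.abs_fract]
      exact le_of_lt (Int.fract_lt_one _)
    calc |(c:ℝ) - t * ‖g j‖⁻¹| * ‖g j‖ ≤ 1 * ‖g j‖ :=
          mul_le_mul_of_nonneg_right h6 (norm_nonneg _)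
      _ = ‖g j‖ := one_mul _
      _ < ε / 2 := hjb
  have hb2 : ‖t • (useq j - u)‖ < ε / 2 := by
    rw [norm_smul, Real.norm_eq_abs]
    have : ‖useq j - u‖ < ε / (2 * (|t| + 1)) := by
      rwa [← dist_eq_norm]
    calc |t| * ‖useq j - u‖ ≤ (|t| + 1) * ‖useq j - u‖ :=
          mul_le_mul_of_nonneg_right (by linarith [abs_nonneg t]) (norm_nonneg _)
      _ < (|t| + 1) * (ε / (2 * (|t| + 1))) := by
          apply mul_lt_mul_of_pos_left this (by positivity)
      _ = ε / 2 := by field_simp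
  calc ‖((c:ℝ) * ‖g j‖ - t) • useq j + t • (useq j - u)‖
      ≤ ‖((c:ℝ) * ‖g j‖ - t) • useq j‖ + ‖t • (useq j - u)‖ := norm_add_le _ _
    _ < ε / 2 + ε / 2 := add_lt_add hb1 hb2
    _ = ε := by ring

lemma lat_dense (x y : ℝ) {ε : ℝ} (hε : 0 < ε) :
    ∃ m n k : ℤ, |m * β₁ + n - x| < ε ∧ |m * β₂ + k - y| < ε := by
  obtain ⟨u, hu0, hu⟩ := exists_line hind
  have hQ : 0 < u.1 ^ 2 + u.2 ^ 2 := by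
    have h1 : u.1 ≠ 0 ∨ u.2 ≠ 0 := by
      by_contra hc
      push_neg at hc
      exact hu0 (Prod.ext hc.1 hc.2)
    rcases h1 with h1 | h1 <;> positivity
  set Q : ℝ := u.1 ^ 2 + u.2 ^ 2 with hQdef
  -- the image subgroup of ℝ
  set S' : AddSubgroup ℝ :=
    { carrier := {s | ∃ m n k : ℤ,
        s = m * (u.1 * β₂ - u.2 * β₁) + n * (-u.2) + k * u.1}
      zero_mem' := ⟨0, 0, 0, by push_cast; ring⟩
      add_mem' := by
        rintro s s' ⟨m, n, k, rfl⟩ ⟨m', n', k', rfl⟩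
        exact ⟨m + m', n + n', k + k', by push_cast; ring⟩
      neg_mem' := by
        rintro s ⟨m, n, k, rfl⟩
        exact ⟨-m, -n, -k, by push_cast; ring⟩ } with hS'def
  rcases S'.dense_or_cyclic with hdense | ⟨a0, ha0⟩
  · -- dense case
    set fw : ℝ := -u.2 * x + u.1 * y with hfw
    have hε' : 0 < ε / 2 * Q / (|u.1| + |u.2| + 1) := by positivity
    have hfwmem : fw ∈ closure (S' : Set ℝ) := hdense fw
    obtain ⟨s, hsmem, hsd⟩ := Metric.mem_closure_iff.mp hfwmem _ hε'
    obtain ⟨m, n, k, rfl⟩ := hsmem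
    set h : ℝ × ℝ := (m * β₁ + n, m * β₂ + k) with hh
    set s : ℝ := m * (u.1 * β₂ - u.2 * β₁) + n * (-u.2) + k * u.1 with hs
    have hfh : -u.2 * h.1 + u.1 * h.2 = s := by rw [hh, hs]; push_cast; ring
    set t : ℝ := (u.1 * (x - h.1) + u.2 * (y - h.2)) / Q with ht
    have key1 : x - h.1 - t * u.1 = (fw - s) / Q * (-u.2) := by
      rw [ht, hfw, ← hfh]
      field_simp
      ring
    have key2 : y - h.2 - t * u.2 = (fw - s) / Q * u.1 := by
      rw [ht, hfw, ← hfh]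
      field_simp
      ring
    obtain ⟨p, hpmem, hpd⟩ := hu t (half_pos hε)
    have hhp : h + p ∈ lat β₁ β₂ := lat_add ⟨m, n, k, rfl⟩ hpmem
    obtain ⟨m', n', k', hm'⟩ := hhp
    have hQne : Q ≠ 0 := ne_of_gt hQ
    set D : ℝ := |u.1| + |u.2| + 1 with hD
    have hDpos : 0 < D := by positivity
    have habs : |fw - s| < ε / 2 * Q / D := by rwa [Real.dist_eq] at hsd
    have hBD : |fw - s| / Q * D < ε / 2 := by
      rw [div_mul_eq_mul_div, div_lt_iff₀ hQ]
      calc |fw - s| * D < ε / 2 * Q / D * D := mul_lt_mul_of_pos_right habs hDpos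
        _ = ε / 2 * Q := by field_simp
    have hsub : ∀ i : Fin 2, True := fun _ => trivial
    have hp1 : |p.1 - t * u.1| < ε / 2 := by
      calc |p.1 - t * u.1| = ‖(p - t • u).1‖ := by
            rfl
        _ ≤ ‖p - t • u‖ := by rw [Prod.norm_def]; exact le_max_left _ _
        _ < ε / 2 := hpd
    have hp2 : |p.2 - t * u.2| < ε / 2 := by
      calc |p.2 - t * u.2| = ‖(p - t • u).2‖ := by
            rfl
        _ ≤ ‖p - t • u‖ := by rw [Prod.norm_def]; exact le_max_right _ _
        _ < ε / 2 := hpd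
    have hk1 : |h.1 + t * u.1 - x| < ε / 2 := by
      have e : h.1 + t * u.1 - x = (fw - s) / Q * u.2 := by
        have := key1; linarith
      rw [e, abs_mul, abs_div, abs_of_pos hQ]
      calc |fw - s| / Q * |u.2| ≤ |fw - s| / Q * D := by
            apply mul_le_mul_of_nonneg_left _ (by positivity)
            rw [hD]
            have := abs_nonneg u.1
            linarith
        _ < ε / 2 := hBD
    have hk2 : |h.2 + t * u.2 - y| < ε / 2 := by
      have e : h.2 + t * u.2 - y = -((fw - s) / Q * u.1) := by
        have := key2; linarith
      rw [e, abs_neg, abs_mul, abs_div, abs_of_pos hQ]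
      calc |fw - s| / Q * |u.1| ≤ |fw - s| / Q * D := by
            apply mul_le_mul_of_nonneg_left _ (by positivity)
            rw [hD]
            have := abs_nonneg u.2
            linarith
        _ < ε / 2 := hBD
    refine ⟨m', n', k', ?_, ?_⟩
    · have e1 : (↑m' * β₁ + ↑n' : ℝ) = (h + p).1 := by rw [hm']
      rw [e1]
      have e2 : (h + p).1 - x = (h.1 + t * u.1 - x) + (p.1 - t * u.1) := by
        simp only [Prod.fst_add]
        ring
      rw [e2]
      calc |(h.1 + t * u.1 - x) + (p.1 - t * u.1)|
          ≤ |h.1 + t * u.1 - x| + |p.1 - t * u.1| := abs_add_le _ _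
        _ < ε / 2 + ε / 2 := add_lt_add hk1 hp1
        _ = ε := by ring
    · have e1 : (↑m' * β₂ + ↑k' : ℝ) = (h + p).2 := by rw [hm']
      rw [e1]
      have e2 : (h + p).2 - y = (h.2 + t * u.2 - y) + (p.2 - t * u.2) := by
        simp only [Prod.snd_add]
        ring
      rw [e2]
      calc |(h.2 + t * u.2 - y) + (p.2 - t * u.2)|
          ≤ |h.2 + t * u.2 - y| + |p.2 - t * u.2| := abs_add_le _ _
        _ < ε / 2 + ε / 2 := add_lt_add hk2 hp2
        _ = ε := by ring
  · -- cyclic case : contradiction with independence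
    exfalso
    have hmem1 : u.1 * β₂ - u.2 * β₁ ∈ S' := ⟨1, 0, 0, by push_cast; ring⟩
    have hmem2 : -u.2 ∈ S' := ⟨0, 1, 0, by push_cast; ring⟩
    have hmem3 : u.1 ∈ S' := ⟨0, 0, 1, by push_cast; ring⟩
    rw [ha0] at hmem1 hmem2 hmem3
    obtain ⟨k₁, hk₁⟩ := AddSubgroup.mem_closure_singleton.mp hmem1
    obtain ⟨k₂, hk₂⟩ := AddSubgroup.mem_closure_singleton.mp hmem2
    obtain ⟨k₃, hk₃⟩ := AddSubgroup.mem_closure_singleton.mp hmem3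
    rw [zsmul_eq_mul] at hk₁ hk₂ hk₃
    rcases eq_or_ne a0 0 with rfl | ha
    · apply hu0
      have h1 : u.1 = 0 := by rw [← hk₃]; ring
      have h2 : u.2 = 0 := by
        have := hk₂; rw [mul_zero] at this
        linarith
      exact Prod.ext h1 h2
    · have hrel : (k₂ : ℝ) * β₁ + (k₃ : ℝ) * β₂ = (k₁ : ℝ) := by
        have h1 : a0 * ((k₂:ℝ) * β₁ + (k₃:ℝ) * β₂ - k₁) = 0 := by
          have e1 : (k₁:ℝ) * a0 = u.1 * β₂ - u.2 * β₁ := hk₁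
          have e2 : (k₂:ℝ) * a0 = -u.2 := hk₂
          have e3 : (k₃:ℝ) * a0 = u.1 := hk₃
          linear_combination β₁ * e2 + β₂ * e3 - e1
        have := mul_eq_zero.mp h1
        rcases this with h | h
        · exact absurd h ha
        · linarith
      obtain ⟨hz2, hz3⟩ := hind _ _ _ hrel
      apply hu0
      have h1 : u.2 = 0 := by
        have := hk₂; rw [hz2] at this; push_cast at this; linarith
      have h2 : u.1 = 0 := by
        have := hk₃; rw [hz3] at this; push_cast at this; linarith
      exact Prod.ext h2 h1
lemma lat_syndetic (x₀ y₀ : ℝ) {ε : ℝ} (hε : 0 < ε) :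
    ∃ M : ℕ, 0 < M ∧ ∀ m₀ : ℤ, ∃ m n k : ℤ, m₀ < m ∧ m ≤ m₀ + M ∧
      |m * β₁ + n - x₀| < ε ∧ |m * β₂ + k - y₀| < ε := by
  obtain ⟨K, hK⟩ := exists_nat_gt (2 / ε)
  have hKpos : 0 < (K : ℝ) := lt_trans (by positivity) hK
  have hKN : 0 < K := by exact_mod_cast hKpos
  have hKinv : 1 / (K : ℝ) < ε / 2 := by
    rw [div_lt_iff₀ hKpos]
    rw [div_lt_iff₀ hε] at hK
    linarith
  have hgrid : ∀ i l : ℕ, ∃ j n k : ℤ,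
      |j * β₁ + n - (i : ℝ) / K| < ε / 2 ∧ |j * β₂ + k - (l : ℝ) / K| < ε / 2 :=
    fun i l => lat_dense hind _ _ (half_pos hε)
  choose jf nf kf hjf1 hjf2 using hgrid
  set J : Finset ℤ := Finset.image (fun il : ℕ × ℕ => jf il.1 il.2)
    (Finset.range K ×ˢ Finset.range K) with hJ
  have hJne : J.Nonempty := by
    refine ⟨jf 0 0, ?_⟩
    rw [hJ]
    exact Finset.mem_image.mpr ⟨(0, 0),
      Finset.mem_product.mpr ⟨Finset.mem_range.mpr hKN, Finset.mem_range.mpr hKN⟩, rfl⟩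
  set jmin := J.min' hJne with hjmin
  set jmax := J.max' hJne with hjmax
  have hminmax : jmin ≤ jmax := by
    obtain ⟨j0, hj0⟩ := hJne
    exact le_trans (J.min'_le j0 hj0) (J.le_max' j0 hj0)
  refine ⟨(jmax - jmin + 1).toNat, by omega, ?_⟩
  intro m₀
  set c : ℤ := m₀ + 1 - jmin with hc
  set θ : ℝ := x₀ - c * β₁ with hθ
  set φ : ℝ := y₀ - c * β₂ with hφ
  have hfloor : ∀ ψ : ℝ, (0 : ℤ) ≤ ⌊(K : ℝ) * Int.fract ψ⌋ ∧ ⌊(K : ℝ) * Int.fract ψ⌋ < K := by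
    intro ψ
    constructor
    · exact Int.floor_nonneg.mpr (mul_nonneg (le_of_lt hKpos) (Int.fract_nonneg _))
    · rw [Int.floor_lt]
      push_cast
      calc (K : ℝ) * Int.fract ψ < K * 1 := mul_lt_mul_of_pos_left (Int.fract_lt_one ψ) hKpos
        _ = K := by ring
  set i : ℕ := (⌊(K : ℝ) * Int.fract θ⌋).toNat with hi
  set l : ℕ := (⌊(K : ℝ) * Int.fract φ⌋).toNat with hl
  have hiz : (i : ℤ) = ⌊(K : ℝ) * Int.fract θ⌋ := Int.toNat_of_nonneg (hfloor θ).1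
  have hlz : (l : ℤ) = ⌊(K : ℝ) * Int.fract φ⌋ := Int.toNat_of_nonneg (hfloor φ).1
  have hiK : i < K := by have := (hfloor θ).2; omega
  have hlK : l < K := by have := (hfloor φ).2; omega
  have hmemJ : jf i l ∈ J := by
    rw [hJ]
    exact Finset.mem_image.mpr ⟨(i, l),
      Finset.mem_product.mpr ⟨Finset.mem_range.mpr hiK, Finset.mem_range.mpr hlK⟩, rfl⟩
  -- the key nid bound
  have hbound : ∀ (β ψ : ℝ) (i' : ℕ) (n' : ℤ), (i' : ℤ) = ⌊(K : ℝ) * Int.fract ψ⌋ →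
      |(jf i l : ℝ) * β + n' - (i' : ℝ) / K| < ε / 2 → nid ((jf i l : ℝ) * β - ψ) < ε := by
    intro β ψ i' n' hi' happ
    have hsplit : (jf i l : ℝ) * β - ψ =
        (((jf i l : ℝ) * β + n' - (i' : ℝ) / K) + ((i' : ℝ) / K - Int.fract ψ)) +
          ((-n' - ⌊ψ⌋ : ℤ) : ℝ) := by
      rw [Int.fract]
      push_cast
      ring
    have hgr : |(i' : ℝ) / K - Int.fract ψ| ≤ 1 / K := by
      rw [div_sub' (ne_of_gt hKpos), abs_div, abs_of_pos hKpos,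
        div_le_div_iff₀ hKpos hKpos]
      have h1 : ((i' : ℝ)) ≤ (K : ℝ) * Int.fract ψ := by
        rw [show ((i' : ℝ)) = ((i' : ℤ) : ℝ) by push_cast; rfl, hi']
        exact Int.floor_le _
      have h2 : (K : ℝ) * Int.fract ψ < (i' : ℝ) + 1 := by
        rw [show ((i' : ℝ)) = ((i' : ℤ) : ℝ) by push_cast; rfl, hi']
        exact Int.lt_floor_add_one _
      have h3 : |(i' : ℝ) - (K : ℝ) * Int.fract ψ| ≤ 1 := by
        rw [abs_le]
        constructor <;> nlinarith
      nlinarith [hKpos]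
    calc nid ((jf i l : ℝ) * β - ψ)
        = nid (((jf i l : ℝ) * β + n' - (i' : ℝ) / K) + ((i' : ℝ) / K - Int.fract ψ)) := by
          rw [hsplit, nid_add_int]
      _ ≤ nid ((jf i l : ℝ) * β + n' - (i' : ℝ) / K) + |(i' : ℝ) / K - Int.fract ψ| :=
          nid_add_le _ _
      _ ≤ |(jf i l : ℝ) * β + n' - (i' : ℝ) / K + 0| + |(i' : ℝ) / K - Int.fract ψ| := by
          have := nid_le' ((jf i l : ℝ) * β + n' - (i' : ℝ) / K) 0
          simp only [Int.cast_zero] at this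
          linarith
      _ < ε / 2 + 1 / K := by
          rw [add_zero]
          exact add_lt_add_of_lt_of_le happ hgr
      _ < ε / 2 + ε / 2 := by linarith
      _ = ε := by ring
  have hb1 : nid ((jf i l : ℝ) * β₁ - θ) < ε := hbound β₁ θ i (nf i l) hiz (hjf1 i l)
  have hb2 : nid ((jf i l : ℝ) * β₂ - φ) < ε := hbound β₂ φ l (kf i l) hlz (hjf2 i l)
  obtain ⟨n, hn⟩ := exists_int_of_nid_lt hb1
  obtain ⟨k, hk⟩ := exists_int_of_nid_lt hb2
  refine ⟨c + jf i l, n, k, ?_, ?_, ?_, ?_⟩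
  · have := J.min'_le _ hmemJ
    rw [← hjmin] at this
    omega
  · have := J.le_max' _ hmemJ
    rw [← hjmax] at this
    rw [Int.toNat_of_nonneg (by omega)]
    omega
  · have e : ((c + jf i l : ℤ) : ℝ) * β₁ + n - x₀ = (jf i l : ℝ) * β₁ - θ + n := by
      rw [hθ]
      push_cast
      ring
    rw [e]
    exact hn
  · have e : ((c + jf i l : ℤ) : ℝ) * β₂ + k - y₀ = (jf i l : ℝ) * β₂ - φ + k := by
      rw [hφ]
      push_cast
      ring
    rw [e]
    exact hk
end

lemma exists_seq {P : ℤ → ℤ → Prop} (M : ℕ) (N : ℕ)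
    (h : ∀ m₀ : ℤ, ∃ m n : ℤ, m₀ < m ∧ m ≤ m₀ + M ∧ P m n) :
    ∃ ms ns : ℕ → ℤ, (N : ℤ) < ms 0 ∧ StrictMono ms ∧
      (∀ i : ℕ, ms (i + 1) - ms i ≤ M) ∧ ∀ i : ℕ, P (ms i) (ns i) := by
  choose F G h1 h2 h3 using h
  set g : ℕ → ℤ × ℤ := fun i =>
    Nat.rec (⟨F N, G N⟩ : ℤ × ℤ) (fun _ p => ⟨F p.1, G p.1⟩) i with hg
  have hsucc : ∀ i : ℕ, g (i + 1) = ⟨F (g i).1, G (g i).1⟩ := fun i => rfl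
  have hform : ∀ i : ℕ, ∃ x : ℤ, g i = ⟨F x, G x⟩ := by
    intro i
    cases i with
    | zero => exact ⟨N, rfl⟩
    | succ j => exact ⟨(g j).1, rfl⟩
  refine ⟨fun i => (g i).1, fun i => (g i).2, h1 N, ?_, ?_, ?_⟩
  · apply strictMono_nat_of_lt_succ
    intro i
    show (g i).1 < (g (i + 1)).1
    rw [hsucc i]
    exact h1 (g i).1
  · intro i
    show (g (i + 1)).1 - (g i).1 ≤ (M : ℤ)
    have e : (g (i + 1)).1 = F (g i).1 := by rw [hsucc i]
    have := h2 (g i).1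
    omega
  · intro i
    show P (g i).1 (g i).2
    obtain ⟨x, hx⟩ := hform i
    rw [hx]
    exact h3 x

/-- Under the generic independence condition on `z = R·e^{ia}`,
`w = r·e^{ib}`, for every `v ∈ ℂ`, `δ > 0` and `N ∈ ℕ` there are `M > 0` and
integer sequences `(m_i)`, `(n_i)` with `N < m_0 < m_1 < ⋯`, `m_{i+1} − m_i ≤ M`,
and `|z^{m_i}·w^{n_i} − v| < δ` for all `i`. -/
theorem bounded_gap_sequence_zpow_mul_zpow
    (R r a b : ℝ) (hR : 0 < R) (hr : 0 < r)
    (hli : LinearIndependent ℚ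
      ![Real.pi * Real.log R, Real.pi * Real.log r,
        a * Real.log r - b * Real.log R])
    (z w : ℂ)
    (hz : z = (R : ℂ) * Complex.exp (a * Complex.I))
    (hw : w = (r : ℂ) * Complex.exp (b * Complex.I)) :
    ∀ v : ℂ, ∀ δ : ℝ, 0 < δ → ∀ N : ℕ,
      ∃ M : ℕ, 0 < M ∧ ∃ ms ns : ℕ → ℤ,
        (N : ℤ) < ms 0 ∧ StrictMono ms ∧
        (∀ i : ℕ, ms (i + 1) - ms i ≤ M) ∧
        (∀ i : ℕ, ‖z ^ ms i * w ^ ns i - v‖ < δ) := by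
  intro v δ hδ N
  have hπ : (0:ℝ) < π := Real.pi_pos
  have hlr : Real.log r ≠ 0 := by
    have h1 := hli.ne_zero 1
    simp only [Matrix.cons_val_one, Matrix.head_cons, Matrix.cons_val_zero] at h1
    intro h
    exact h1 (by rw [h, mul_zero])
  have hzw : ∀ m n : ℤ, z ^ m * w ^ n =
      Complex.exp (((m * Real.log R + n * Real.log r : ℝ) : ℂ)
        + ((m * a + n * b : ℝ) : ℂ) * Complex.I) := by
    intro m n
    have hze : z = Complex.exp ((Real.log R : ℂ) + (a : ℂ) * Complex.I) := by
      rw [hz, Complex.exp_add]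
      congr 1
      rw [← Complex.ofReal_exp, Real.exp_log hR]
    have hwe : w = Complex.exp ((Real.log r : ℂ) + (b : ℂ) * Complex.I) := by
      rw [hw, Complex.exp_add]
      congr 1
      rw [← Complex.ofReal_exp, Real.exp_log hr]
    rw [hze, hwe, ← Complex.exp_int_mul, ← Complex.exp_int_mul, ← Complex.exp_add]
    congr 1
    push_cast
    ring
  rcases eq_or_ne v 0 with rfl | hv0
  · -- target zero
    refine ⟨1, one_pos, ?_⟩
    apply exists_seq (P := fun m n => ‖z ^ m * w ^ n - 0‖ < δ) 1 N
    intro m₀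
    have key : ∃ n : ℤ, ((m₀ + 1 : ℤ) : ℝ) * Real.log R + (n : ℝ) * Real.log r
        < Real.log δ := by
      rcases lt_or_gt_of_ne hlr with hneg | hpos
      · obtain ⟨n, hn⟩ := exists_int_gt
          ((Real.log δ - ((m₀ + 1 : ℤ) : ℝ) * Real.log R) / Real.log r)
        refine ⟨n, ?_⟩
        rw [div_lt_iff_of_neg hneg] at hn
        linarith
      · obtain ⟨n, hn⟩ := exists_int_lt
          ((Real.log δ - ((m₀ + 1 : ℤ) : ℝ) * Real.log R) / Real.log r)
        refine ⟨n, ?_⟩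
        rw [lt_div_iff₀ hpos] at hn
        linarith
    obtain ⟨n, hn⟩ := key
    refine ⟨m₀ + 1, n, by omega, by omega, ?_⟩
    rw [sub_zero, hzw]
    rw [Complex.norm_exp]
    have hre : (((((m₀ + 1 : ℤ) : ℝ) * Real.log R + (n : ℝ) * Real.log r : ℝ) : ℂ)
        + ((((m₀ + 1 : ℤ) : ℝ) * a + (n : ℝ) * b : ℝ) : ℂ) * Complex.I).re
        = ((m₀ + 1 : ℤ) : ℝ) * Real.log R + (n : ℝ) * Real.log r := by simp
    rw [hre]
    calc Real.exp (((m₀ + 1 : ℤ) : ℝ) * Real.log R + (n : ℝ) * Real.log r)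
        < Real.exp (Real.log δ) := Real.exp_lt_exp.mpr hn
      _ = δ := Real.exp_log hδ
  · -- nonzero target
    have hvpos : 0 < ‖v‖ := norm_pos_iff.mpr hv0
    set s₀ := Real.log (‖v‖) with hs₀
    set t₀ := Complex.arg v with ht₀
    set ε : ℝ := min (1/4) (δ / (8 * (‖v‖ + 1))) with hε
    have hεpos : 0 < ε := lt_min (by norm_num) (by positivity)
    set C : ℝ := |Real.log r| + 2 * π + |b| + 1 with hC
    have hCpos : 0 < C := by positivity
    set ε₂ : ℝ := ε / C with hε₂
    have hε₂pos : 0 < ε₂ := by positivity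
    set β₁ : ℝ := Real.log R / Real.log r with hβ₁
    set β₂ : ℝ := (a * Real.log r - b * Real.log R) / (2 * π * Real.log r) with hβ₂
    have hind : ∀ p q s : ℤ, (p : ℝ) * β₁ + (q : ℝ) * β₂ = (s : ℝ) → p = 0 ∧ q = 0 := by
      intro p q s hrel
      rw [hβ₁, hβ₂] at hrel
      field_simp at hrel
      have h5 : ((p : ℝ) * Real.log R * (2 * π) + (q : ℝ) * (a * Real.log r - b * Real.log R))
            * Real.log r = ((s : ℝ) * (2 * π * Real.log r)) * Real.log r := by
        linear_combination (Real.log r) * hrel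
      have h6 := mul_right_cancel₀ hlr h5
      have key := Fintype.linearIndependent_iff.mp hli
        ![2 * (p : ℚ), -(2 * (s : ℚ)), (q : ℚ)] ?_
      · have h0 := key 0
        have h2 := key 2
        simp only [Matrix.cons_val_zero, Matrix.cons_val_two, Matrix.tail_cons,
          Matrix.cons_val_one, Matrix.head_cons] at h0 h2
        constructor
        · have : (p : ℚ) = 0 := by linarith
          exact_mod_cast this
        · exact_mod_cast h2
      · simp only [Fin.sum_univ_three, Matrix.cons_val_zero, Matrix.cons_val_one,
          Matrix.head_cons, Matrix.cons_val_two, Matrix.tail_cons]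
        rw [Rat.smul_def, Rat.smul_def, Rat.smul_def]
        push_cast
        linear_combination h6
    set x₀ : ℝ := s₀ / Real.log r with hx₀
    set y₀ : ℝ := (t₀ - b * s₀ / Real.log r) / (2 * π) with hy₀
    obtain ⟨M, hM, hsyn⟩ := lat_syndetic hind x₀ y₀ hε₂pos
    refine ⟨M, hM, ?_⟩
    apply exists_seq (P := fun m n => ‖z ^ m * w ^ n - v‖ < δ) M N
    intro m₀
    obtain ⟨m, n, k, hm1, hm2, hc1, hc2⟩ := hsyn m₀
    refine ⟨m, n, hm1, hm2, ?_⟩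
    -- from torus coordinates to (log-modulus, argument) coordinates
    have hre : |(m : ℝ) * Real.log R + (n : ℝ) * Real.log r - s₀| < ε := by
      have e : (m : ℝ) * Real.log R + (n : ℝ) * Real.log r - s₀
          = Real.log r * ((m : ℝ) * β₁ + (n : ℝ) - x₀) := by
        rw [hβ₁, hx₀]
        field_simp
      rw [e, abs_mul]
      have h1 : |Real.log r| * |(m : ℝ) * β₁ + (n : ℝ) - x₀| ≤ |Real.log r| * ε₂ :=
        mul_le_mul_of_nonneg_left (le_of_lt hc1) (abs_nonneg _)
      have h2 : |Real.log r| * ε₂ < ε := by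
        have hlt : |Real.log r| < C := by
          rw [hC]
          have := abs_nonneg b
          linarith
        have h4 : |Real.log r| * ε₂ < C * ε₂ := mul_lt_mul_of_pos_right hlt hε₂pos
        have hce : C * ε₂ = ε := by
          rw [hε₂]
          field_simp
        linarith
      linarith
    have him : |(m : ℝ) * a + (n : ℝ) * b + 2 * π * (k : ℝ) - t₀| < ε := by
      have e : (m : ℝ) * a + (n : ℝ) * b + 2 * π * (k : ℝ) - t₀
          = 2 * π * ((m : ℝ) * β₂ + (k : ℝ) - y₀) + b * ((m : ℝ) * β₁ + (n : ℝ) - x₀) := by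
        rw [hβ₁, hβ₂, hx₀, hy₀]
        field_simp
        ring
      rw [e]
      have h1 : |2 * π * ((m : ℝ) * β₂ + (k : ℝ) - y₀)| ≤ 2 * π * ε₂ := by
        rw [abs_mul, abs_of_pos (by positivity : (0:ℝ) < 2 * π)]
        exact mul_le_mul_of_nonneg_left (le_of_lt hc2) (by positivity)
      have h1' : |b * ((m : ℝ) * β₁ + (n : ℝ) - x₀)| ≤ |b| * ε₂ := by
        rw [abs_mul]
        exact mul_le_mul_of_nonneg_left (le_of_lt hc1) (abs_nonneg _)
      have h3 : (2 * π + |b|) * ε₂ < ε := by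
        have hlt : 2 * π + |b| < C := by
          rw [hC]
          have := abs_nonneg (Real.log r)
          linarith
        have h4 := mul_lt_mul_of_pos_right hlt hε₂pos
        have hce : C * ε₂ = ε := by
          rw [hε₂]
          field_simp
        linarith
      calc |2 * π * ((m : ℝ) * β₂ + (k : ℝ) - y₀) + b * ((m : ℝ) * β₁ + (n : ℝ) - x₀)|
          ≤ |2 * π * ((m : ℝ) * β₂ + (k : ℝ) - y₀)| + |b * ((m : ℝ) * β₁ + (n : ℝ) - x₀)| :=
            abs_add_le _ _
        _ ≤ 2 * π * ε₂ + |b| * ε₂ := add_le_add h1 h1'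
        _ = (2 * π + |b|) * ε₂ := by ring
        _ < ε := h3
    -- final complex estimate
    set X : ℝ := (m : ℝ) * Real.log R + (n : ℝ) * Real.log r - s₀ with hX
    set Y : ℝ := (m : ℝ) * a + (n : ℝ) * b + 2 * π * (k : ℝ) - t₀ with hY
    set W : ℂ := (X : ℂ) + (Y : ℂ) * Complex.I with hW
    have hvexp : v = Complex.exp ((s₀ : ℂ) + (t₀ : ℂ) * Complex.I) := by
      rw [Complex.exp_add]
      have h1 : Complex.exp (s₀ : ℂ) = (‖v‖ : ℂ) := by
        rw [← Complex.ofReal_exp, hs₀, Real.exp_log hvpos]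
      rw [h1, ht₀, Complex.norm_mul_exp_arg_mul_I]
    have hkey : z ^ m * w ^ n - v = v * (Complex.exp W - 1) := by
      have h2 : v * Complex.exp W = z ^ m * w ^ n := by
        rw [hzw m n, hvexp, ← Complex.exp_add]
        have h3 : (s₀ : ℂ) + (t₀ : ℂ) * Complex.I + W
            = ((m * Real.log R + n * Real.log r : ℝ) : ℂ)
              + ((m * a + n * b : ℝ) : ℂ) * Complex.I + (k : ℂ) * (2 * (π : ℂ) * Complex.I) := by
          rw [hW, hX, hY]
          push_cast
          ring
        rw [h3, Complex.exp_add, Complex.exp_int_mul_two_pi_mul_I, mul_one]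
      rw [← h2]
      ring
    rw [hkey, norm_mul]
    have habsW : ‖W‖ ≤ |X| + |Y| := by
      calc ‖W‖ ≤ |W.re| + |W.im| := Complex.norm_le_abs_re_add_abs_im W
        _ = |X| + |Y| := by rw [hW]; simp
    have hε14 : ε ≤ 1 / 4 := min_le_left _ _
    have hW1 : ‖W‖ ≤ 1 := by linarith
    have hexp : ‖Complex.exp W - 1‖ ≤ 2 * ‖W‖ :=
      Complex.norm_exp_sub_one_le hW1
    have hεδ : ε ≤ δ / (8 * (‖v‖ + 1)) := min_le_right _ _
    have hεδ' : ε * (8 * (‖v‖ + 1)) ≤ δ := by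
      rw [le_div_iff₀ (by positivity)] at hεδ
      exact hεδ
    calc ‖v‖ * ‖Complex.exp W - 1‖
        ≤ ‖v‖ * (2 * ‖W‖) :=
          mul_le_mul_of_nonneg_left hexp (norm_nonneg _)
      _ ≤ ‖v‖ * (2 * (|X| + |Y|)) := by
          apply mul_le_mul_of_nonneg_left _ (norm_nonneg _)
          linarith
      _ < δ := by nlinarith [hre, him, hvpos, hεδ', hεpos]
end

section
/- Let c, d be real numbers such that 1, c, d are linearly independent over ℚ. Then the set Y = { (m + k·c, n + k·d) : m, n, k ∈ ℤ } is dense in ℝ². -/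
open Filter Topology

private lemma int_zero_of_abs_lt_one {z : ℤ} (h : |(z : ℝ)| < 1) : z = 0 := by
  have h2 : |z| < 1 := by exact_mod_cast h
  have := abs_lt.mp h2
  omega

private lemma indep3 {c d : ℝ} (hli : LinearIndependent ℚ ![(1 : ℝ), c, d])
    (A B E : ℤ) (h : (A : ℝ) + B * c + E * d = 0) : A = 0 ∧ B = 0 ∧ E = 0 := by
  have := Fintype.linearIndependent_iff.mp hli ![(A : ℚ), (B : ℚ), (E : ℚ)]
  have hsum : (∑ i, (![(A : ℚ), (B : ℚ), (E : ℚ)] i) • (![(1 : ℝ), c, d] i)) = 0 := by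
    simp [Fin.sum_univ_three, Rat.smul_def]
    push_cast
    linarith [h]
  have h0 := this hsum 0
  have h1 := this hsum 1
  have h2 := this hsum 2
  simp at h0 h1 h2
  exact ⟨by exact_mod_cast h0, by exact_mod_cast h1, by exact_mod_cast h2⟩

private lemma irr_c {c d : ℝ} (hli : LinearIndependent ℚ ![(1 : ℝ), c, d]) :
    Irrational c := by
  rw [Irrational]
  rintro ⟨q, hq⟩
  have h : ((q.num : ℤ) : ℝ) + ((-(q.den : ℤ) : ℤ) : ℝ) * c + (((0 : ℤ) : ℤ) : ℝ) * d = 0 := by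
    push_cast
    rw [← hq, Rat.cast_def]
    have : ((q.den : ℝ)) ≠ 0 := by exact_mod_cast q.den_nz
    field_simp
    ring
  obtain ⟨-, hB, -⟩ := indep3 hli q.num (-(q.den : ℤ)) 0 h
  have := q.den_nz
  omega

/-- Density of `ℤ + ℤ θ` for irrational `θ`. -/
private lemma dense_int_add {θ : ℝ} (hθ : Irrational θ) (x ε : ℝ) (hε : 0 < ε) :
    ∃ m k : ℤ, |x - ((m : ℝ) + (k : ℝ) * θ)| < ε := by
  set D : AddSubgroup ℝ :=
    { carrier := {y : ℝ | ∃ m k : ℤ, y = (m : ℝ) + (k : ℝ) * θ}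
      add_mem' := by
        rintro p q ⟨m, k, rfl⟩ ⟨m', k', rfl⟩
        exact ⟨m + m', k + k', by push_cast; ring⟩
      zero_mem' := ⟨0, 0, by norm_num⟩
      neg_mem' := by
        rintro p ⟨m, k, rfl⟩
        exact ⟨-m, -k, by push_cast; ring⟩ } with hD
  have hdense : Dense (D : Set ℝ) := by
    rcases D.dense_or_cyclic with h | ⟨a, ha⟩
    · exact h
    · exfalso
      have h1 : (1 : ℝ) ∈ D := ⟨1, 0, by norm_num⟩
      have hθ' : θ ∈ D := ⟨0, 1, by norm_num⟩
      rw [ha, AddSubgroup.mem_closure_singleton] at h1 hθ'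
      obtain ⟨s, hs⟩ := h1
      obtain ⟨t, ht⟩ := hθ'
      have hs0 : s ≠ 0 := by
        rintro rfl
        simp at hs
      refine hθ ⟨(t : ℚ) / (s : ℚ), ?_⟩
      have hsR : ((s : ℝ)) ≠ 0 := by exact_mod_cast hs0
      rw [zsmul_eq_mul] at hs ht
      push_cast
      rw [← ht]
      have ha' : a = 1 / (s : ℝ) := by field_simp; linarith [hs]
      rw [ha']
      field_simp
  have := hdense x
  rw [Metric.mem_closure_iff] at this
  obtain ⟨b, ⟨m, k, rfl⟩, hb⟩ := this ε hε
  exact ⟨m, k, by simpa [Real.dist_eq] using hb⟩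


private lemma abs_sub3 {A B D : ℝ} : |A - B + D| ≤ |A| + |B| + |D| := by
  have h1 := abs_add_le (A - B) D
  have h2 := abs_add_le A (-B)
  rw [← sub_eq_add_neg, abs_neg] at h2
  linarith

private noncomputable def ff (ψ : ℝ) (k : ℤ) : ℝ := (k : ℝ) * ψ - round ((k : ℝ) * ψ)

set_option maxHeartbeats 1000000 in
/-- The core character lemma. -/
private lemma lemma_L {θ ψ δ₀ : ℝ} (hθ : Irrational θ) (hδ : 0 < δ₀) (hδ2 : δ₀ ≤ 1 / 2)
    (H : ∀ k m : ℤ, |(m : ℝ) + (k : ℝ) * θ| < δ₀ → ∃ j : ℤ, |(k : ℝ) * ψ - (j : ℝ)| < 1 / 8) :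
    ∃ u v : ℤ, ψ = (u : ℝ) * θ + (v : ℝ) := by
  classical
  have Hf : ∀ k m : ℤ, |(m : ℝ) + (k : ℝ) * θ| < δ₀ → |ff ψ k| < 1 / 8 := by
    intro k m h
    obtain ⟨j, hj⟩ := H k m h
    exact lt_of_le_of_lt (round_le ((k : ℝ) * ψ) j) hj
  have add_f : ∀ k₁ k₂ : ℤ, |ff ψ k₁| < 1 / 8 → |ff ψ k₂| < 1 / 8 → |ff ψ (k₁ + k₂)| < 1 / 8 →
      ff ψ (k₁ + k₂) = ff ψ k₁ + ff ψ k₂ := by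
    intro k₁ k₂ h1 h2 h3
    have key : ff ψ k₁ + ff ψ k₂ - ff ψ (k₁ + k₂)
        = ((round (((k₁ + k₂ : ℤ) : ℝ) * ψ) - round ((k₁ : ℝ) * ψ) - round ((k₂ : ℝ) * ψ) : ℤ) : ℝ) := by
      simp only [ff]
      push_cast
      ring
    obtain ⟨a1l, a1r⟩ := abs_lt.mp h1
    obtain ⟨a2l, a2r⟩ := abs_lt.mp h2
    obtain ⟨a3l, a3r⟩ := abs_lt.mp h3
    have hz : (round (((k₁ + k₂ : ℤ) : ℝ) * ψ) - round ((k₁ : ℝ) * ψ) - round ((k₂ : ℝ) * ψ) : ℤ) = 0 := by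
      apply int_zero_of_abs_lt_one
      rw [← key, abs_lt]
      refine ⟨by linarith, by linarith⟩
    rw [hz] at key
    push_cast at key
    linarith
  -- ff on multiples
  have mult_f : ∀ (k m : ℤ) (x : ℝ), x = (m : ℝ) + (k : ℝ) * θ →
      ∀ j : ℕ, 1 ≤ j → (j : ℝ) * |x| < δ₀ → ff ψ ((j : ℤ) * k) = (j : ℝ) * ff ψ k := by
    intro k m x hx j
    have mem : ∀ i : ℕ, (i : ℝ) * |x| < δ₀ → |ff ψ ((i : ℤ) * k)| < 1 / 8 := by
      intro i hi
      apply Hf ((i : ℤ) * k) ((i : ℤ) * m)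
      have he : ((((i : ℤ) * m : ℤ) : ℝ)) + (((i : ℤ) * k : ℤ) : ℝ) * θ = (i : ℝ) * x := by
        rw [hx]; push_cast; ring
      rw [he, abs_mul, Nat.abs_cast]
      exact hi
    induction j with
    | zero => intro h; exact absurd h (by norm_num)
    | succ n ih =>
      intro _ hlt
      rcases Nat.eq_zero_or_pos n with rfl | hn
      · norm_num
      · have hnx : (n : ℝ) * |x| < δ₀ := by
          have : (n : ℝ) * |x| ≤ ((n + 1 : ℕ) : ℝ) * |x| := by
            have := abs_nonneg x
            push_cast
            nlinarith
          linarith [hlt]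
        have h1x : (1 : ℝ) * |x| < δ₀ := by
          have : (1 : ℝ) * |x| ≤ ((n + 1 : ℕ) : ℝ) * |x| := by
            have := abs_nonneg x
            push_cast
            nlinarith
          linarith [hlt]
        have hrec := ih hn hnx
        have hsplit : ((n + 1 : ℕ) : ℤ) * k = (n : ℤ) * k + k := by push_cast; ring
        have h8a : |ff ψ ((n : ℤ) * k)| < 1 / 8 := mem n hnx
        have h8b : |ff ψ k| < 1 / 8 := by
          have := mem 1 (by push_cast; linarith [h1x])
          simpa using this
        have h8c : |ff ψ ((n : ℤ) * k + k)| < 1 / 8 := by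
          rw [← hsplit]
          exact mem (n + 1) hlt
        rw [hsplit, add_f _ _ h8a h8b h8c, hrec]
        push_cast
        ring
  -- the fundamental bound
  have bound_f : ∀ (k m : ℤ) (x : ℝ), x = (m : ℝ) + (k : ℝ) * θ → x ≠ 0 → |x| ≤ δ₀ / 4 →
      |ff ψ k| ≤ |x| / δ₀ := by
    intro k m x hx hx0 hxle
    have hax : 0 < |x| := abs_pos.mpr hx0
    have h2 : (2 : ℝ) ≤ δ₀ / (2 * |x|) := by
      rw [le_div_iff₀ (by positivity)]
      linarith
    have hN2 : 2 ≤ ⌊δ₀ / (2 * |x|)⌋₊ := Nat.le_floor (by exact_mod_cast h2)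
    have hN1 : 1 ≤ ⌊δ₀ / (2 * |x|)⌋₊ := by omega
    have hNle : ((⌊δ₀ / (2 * |x|)⌋₊ : ℕ) : ℝ) ≤ δ₀ / (2 * |x|) := Nat.floor_le (by positivity)
    have hNgt : δ₀ / (2 * |x|) - 1 < ((⌊δ₀ / (2 * |x|)⌋₊ : ℕ) : ℝ) := Nat.sub_one_lt_floor _
    have hNx : ((⌊δ₀ / (2 * |x|)⌋₊ : ℕ) : ℝ) * |x| < δ₀ := by
      have hid : δ₀ / (2 * |x|) * |x| = δ₀ / 2 := by field_simp
      have h5 := mul_le_mul_of_nonneg_right hNle (le_of_lt hax)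
      rw [hid] at h5
      linarith
    have hmf := mult_f k m x hx ⌊δ₀ / (2 * |x|)⌋₊ hN1 hNx
    have hfN : |ff ψ ((⌊δ₀ / (2 * |x|)⌋₊ : ℤ) * k)| < 1 / 8 := by
      apply Hf ((⌊δ₀ / (2 * |x|)⌋₊ : ℤ) * k) ((⌊δ₀ / (2 * |x|)⌋₊ : ℤ) * m)
      have he : ((((⌊δ₀ / (2 * |x|)⌋₊ : ℤ) * m : ℤ) : ℝ)) + (((⌊δ₀ / (2 * |x|)⌋₊ : ℤ) * k : ℤ) : ℝ) * θ
          = ((⌊δ₀ / (2 * |x|)⌋₊ : ℕ) : ℝ) * x := by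
        rw [hx]; push_cast; ring
      rw [he, abs_mul, Nat.abs_cast]
      exact hNx
    rw [hmf, abs_mul, Nat.abs_cast] at hfN
    have hNge : δ₀ / (4 * |x|) ≤ ((⌊δ₀ / (2 * |x|)⌋₊ : ℕ) : ℝ) := by
      have e1 : (1 : ℝ) ≤ δ₀ / (4 * |x|) := by
        rw [le_div_iff₀ (by positivity)]
        linarith
      have e2 : δ₀ / (2 * |x|) = 2 * (δ₀ / (4 * |x|)) := by
        field_simp
        ring
      linarith
    have hNpos : (0 : ℝ) < ((⌊δ₀ / (2 * |x|)⌋₊ : ℕ) : ℝ) := by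
      have : (1:ℝ) ≤ ((⌊δ₀ / (2 * |x|)⌋₊ : ℕ) : ℝ) := by exact_mod_cast hN1
      linarith
    have hid4 : δ₀ / (4 * |x|) * |x| = δ₀ / 4 := by field_simp
    have hNge' : δ₀ / 4 ≤ ((⌊δ₀ / (2 * |x|)⌋₊ : ℕ) : ℝ) * |x| := by
      have := mul_le_mul_of_nonneg_right hNge (le_of_lt hax)
      rw [hid4] at this
      linarith
    -- N * |ff ψ k| < 1/8 and δ₀/4 ≤ N*|x| ⇒ |ff ψ k| ≤ |x|/δ₀
    rw [le_div_iff₀ hδ]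
    nlinarith [abs_nonneg (ff ψ k), mul_le_mul_of_nonneg_right (le_of_lt hfN) (le_of_lt hax)]
  have hθf_def : Int.fract θ = θ - (⌊θ⌋ : ℝ) := (Int.self_sub_floor θ).symm
  have hirrθf : Irrational (Int.fract θ) := by
    rw [hθf_def]
    exact hθ.sub_intCast ⌊θ⌋
  have hθf0 : 0 < Int.fract θ := lt_of_le_of_ne (Int.fract_nonneg θ) (Ne.symm hirrθf.ne_zero)
  have hθf1 : Int.fract θ < 1 := Int.fract_lt_one θ
  -- the main computation at a given small positive x = m + k θ
  have compute : ∀ (k m : ℤ) (x : ℝ), x = (m : ℝ) + (k : ℝ) * θ → 0 < x → x ≤ δ₀ / 8 →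
      x ≤ Int.fract θ / 3 →
      ∃ Z W : ℤ, |(Z : ℝ)| ≤ 1 / δ₀ + 1 ∧ |ψ + (W : ℝ) - Int.fract θ * (Z : ℝ)| ≤ 4 * x / δ₀ := by
    intro k m x hx hx0 hx8 hx3
    have hk0 : k ≠ 0 := by
      rintro rfl
      have hxm : x = (m : ℝ) := by simpa using hx
      have h1 : 0 < m := by exact_mod_cast hxm ▸ hx0
      have h2' : (m : ℝ) < 1 := by rw [← hxm]; linarith
      have h3 : m < 1 := by exact_mod_cast h2'
      omega
    have hxirr : Irrational x := by
      rw [hx]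
      exact (hθ.intCast_mul hk0).intCast_add m
    -- first auxiliary integer a₁ = ⌊1/x⌋
    have ha1le : ((⌊1/x⌋ : ℤ) : ℝ) ≤ 1/x := Int.floor_le _
    have ha1gt : 1/x < ((⌊1/x⌋ : ℤ) : ℝ) + 1 := Int.lt_floor_add_one _
    have ha11 : 1 ≤ ⌊1/x⌋ := by
      apply Int.le_floor.mpr
      rw [le_div_iff₀ hx0]
      push_cast
      linarith
    have ha1R : (1 : ℝ) ≤ ((⌊1/x⌋ : ℤ) : ℝ) := by exact_mod_cast ha11
    have hxne : x ≠ 0 := ne_of_gt hx0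
    have e3 : ((⌊1/x⌋ : ℤ) : ℝ) * x ≤ 1 := by
      have := mul_le_mul_of_nonneg_right ha1le (le_of_lt hx0)
      rwa [div_mul_cancel₀ _ hxne] at this
    have e4 : 1 < ((⌊1/x⌋ : ℤ) : ℝ) * x + x := by
      have := mul_lt_mul_of_pos_right ha1gt hx0
      rw [div_mul_cancel₀ _ hxne] at this
      nlinarith
    have hy'0 : ((⌊1/x⌋ : ℤ) : ℝ) * x - 1 ≠ 0 := by
      intro h0
      apply hxirr
      refine ⟨1 / ((⌊1/x⌋ : ℤ) : ℚ), ?_⟩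
      have hane : ((⌊1/x⌋ : ℤ) : ℝ) ≠ 0 := by linarith
      push_cast
      rw [div_eq_iff hane]
      linarith
    have hpos' : ((⌊1/x⌋ : ℤ) : ℝ) * x - 1 = ((⌊1/x⌋ * m - 1 : ℤ) : ℝ) + ((⌊1/x⌋ * k : ℤ) : ℝ) * θ := by
      rw [hx]; push_cast; ring
    have hy'abs : |((⌊1/x⌋ : ℤ) : ℝ) * x - 1| ≤ x := by
      rw [abs_le]; constructor <;> linarith
    have hfk' : |ff ψ (⌊1/x⌋ * k)| ≤ x / δ₀ := by
      have h := bound_f (⌊1/x⌋ * k) (⌊1/x⌋ * m - 1) (((⌊1/x⌋ : ℤ) : ℝ) * x - 1) hpos' hy'0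
        (by linarith [hy'abs])
      exact le_trans h ((div_le_div_iff_of_pos_right hδ).mpr hy'abs)
    have hfk : |ff ψ k| ≤ x / δ₀ := by
      have h := bound_f k m x hx hxne (by rw [abs_of_pos hx0]; linarith)
      rwa [abs_of_pos hx0] at h
    -- second auxiliary integer a₂ = ⌊fract θ / x⌋
    have ha2le : ((⌊Int.fract θ / x⌋ : ℤ) : ℝ) ≤ Int.fract θ / x := Int.floor_le _
    have ha2gt : Int.fract θ / x < ((⌊Int.fract θ / x⌋ : ℤ) : ℝ) + 1 := Int.lt_floor_add_one _
    have ha23 : 3 ≤ ⌊Int.fract θ / x⌋ := by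
      apply Int.le_floor.mpr
      rw [le_div_iff₀ hx0]
      push_cast
      linarith
    have ha2R : (3 : ℝ) ≤ ((⌊Int.fract θ / x⌋ : ℤ) : ℝ) := by exact_mod_cast ha23
    have e1 : ((⌊Int.fract θ / x⌋ : ℤ) : ℝ) * x ≤ Int.fract θ := by
      have := mul_le_mul_of_nonneg_right ha2le (le_of_lt hx0)
      rwa [div_mul_cancel₀ _ hxne] at this
    have e2 : Int.fract θ < ((⌊Int.fract θ / x⌋ : ℤ) : ℝ) * x + x := by
      have := mul_lt_mul_of_pos_right ha2gt hx0
      rw [div_mul_cancel₀ _ hxne] at this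
      nlinarith
    have hak1 : ⌊Int.fract θ / x⌋ * k - 1 ≠ 0 := by
      intro h0
      have h1 : ⌊Int.fract θ / x⌋ * k = 1 := by omega
      rcases Int.eq_one_or_neg_one_of_mul_eq_one' h1 with ⟨ha, -⟩ | ⟨ha, -⟩ <;> omega
    have hy0 : ((⌊Int.fract θ / x⌋ : ℤ) : ℝ) * x - Int.fract θ ≠ 0 := by
      intro h0
      apply Int.not_irrational (-(⌊Int.fract θ / x⌋ * m) - ⌊θ⌋)
      have heq : ((⌊Int.fract θ / x⌋ * k - 1 : ℤ) : ℝ) * θ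
          = ((-(⌊Int.fract θ / x⌋ * m) - ⌊θ⌋ : ℤ) : ℝ) := by
        push_cast
        linear_combination h0 - ((⌊Int.fract θ / x⌋ : ℤ) : ℝ) * hx + hθf_def
      rw [← heq]
      exact hθ.intCast_mul hak1
    have hpos'' : ((⌊Int.fract θ / x⌋ : ℤ) : ℝ) * x - Int.fract θ
        = ((⌊Int.fract θ / x⌋ * m + ⌊θ⌋ : ℤ) : ℝ) + ((⌊Int.fract θ / x⌋ * k - 1 : ℤ) : ℝ) * θ := by
      rw [hx, hθf_def]; push_cast; ring
    have hyabs : |((⌊Int.fract θ / x⌋ : ℤ) : ℝ) * x - Int.fract θ| ≤ x := by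
      rw [abs_le]; constructor <;> linarith
    have hfk'' : |ff ψ (⌊Int.fract θ / x⌋ * k - 1)| ≤ x / δ₀ := by
      have h := bound_f (⌊Int.fract θ / x⌋ * k - 1) (⌊Int.fract θ / x⌋ * m + ⌊θ⌋)
        (((⌊Int.fract θ / x⌋ : ℤ) : ℝ) * x - Int.fract θ) hpos'' hy0 (by linarith [hyabs])
      exact le_trans h ((div_le_div_iff_of_pos_right hδ).mpr hyabs)
    -- the two integers
    refine ⟨round (((⌊1/x⌋ * k : ℤ) : ℝ) * ψ) - ⌊1/x⌋ * round ((k : ℝ) * ψ),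
            round (((⌊Int.fract θ / x⌋ * k - 1 : ℤ) : ℝ) * ψ) - ⌊Int.fract θ / x⌋ * round ((k : ℝ) * ψ),
            ?_, ?_⟩
    · -- bound on Z
      have hZid : (((round (((⌊1/x⌋ * k : ℤ) : ℝ) * ψ) - ⌊1/x⌋ * round ((k : ℝ) * ψ) : ℤ)) : ℝ)
          = ((⌊1/x⌋ : ℤ) : ℝ) * ff ψ k - ff ψ (⌊1/x⌋ * k) := by
        simp only [ff]
        push_cast
        ring
      rw [hZid]
      have h1 : |((⌊1/x⌋ : ℤ) : ℝ) * ff ψ k| ≤ 1/δ₀ := by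
        rw [abs_mul, abs_of_pos (by linarith : (0:ℝ) < ((⌊1/x⌋ : ℤ) : ℝ))]
        calc ((⌊1/x⌋ : ℤ) : ℝ) * |ff ψ k| ≤ ((⌊1/x⌋ : ℤ) : ℝ) * (x/δ₀) :=
              mul_le_mul_of_nonneg_left hfk (by linarith)
          _ ≤ (1/x) * (x/δ₀) := mul_le_mul_of_nonneg_right ha1le (by positivity)
          _ = 1/δ₀ := by field_simp
      have h2 : |ff ψ (⌊1/x⌋ * k)| ≤ 1 := by
        refine le_trans hfk' ?_
        rw [div_le_one hδ]
        linarith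
      calc |((⌊1/x⌋ : ℤ) : ℝ) * ff ψ k - ff ψ (⌊1/x⌋ * k)|
          ≤ |((⌊1/x⌋ : ℤ) : ℝ) * ff ψ k| + |ff ψ (⌊1/x⌋ * k)| := abs_sub _ _
        _ ≤ 1/δ₀ + 1 := add_le_add h1 h2
    · -- main estimate
      have hZid : (((round (((⌊1/x⌋ * k : ℤ) : ℝ) * ψ) - ⌊1/x⌋ * round ((k : ℝ) * ψ) : ℤ)) : ℝ)
          = ((⌊1/x⌋ : ℤ) : ℝ) * ff ψ k - ff ψ (⌊1/x⌋ * k) := by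
        simp only [ff]
        push_cast
        ring
      have hWid : ψ + (((round (((⌊Int.fract θ / x⌋ * k - 1 : ℤ) : ℝ) * ψ)
              - ⌊Int.fract θ / x⌋ * round ((k : ℝ) * ψ) : ℤ)) : ℝ)
          = ((⌊Int.fract θ / x⌋ : ℤ) : ℝ) * ff ψ k - ff ψ (⌊Int.fract θ / x⌋ * k - 1) := by
        simp only [ff]
        push_cast
        ring
      have hexp : ψ + (((round (((⌊Int.fract θ / x⌋ * k - 1 : ℤ) : ℝ) * ψ)
              - ⌊Int.fract θ / x⌋ * round ((k : ℝ) * ψ) : ℤ)) : ℝ)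
          - Int.fract θ * (((round (((⌊1/x⌋ * k : ℤ) : ℝ) * ψ) - ⌊1/x⌋ * round ((k : ℝ) * ψ) : ℤ)) : ℝ)
          = (((⌊Int.fract θ / x⌋ : ℤ) : ℝ) - Int.fract θ * ((⌊1/x⌋ : ℤ) : ℝ)) * ff ψ k
            - ff ψ (⌊Int.fract θ / x⌋ * k - 1) + Int.fract θ * ff ψ (⌊1/x⌋ * k) := by
        rw [hZid]
        linear_combination hWid
      rw [hexp]
      have hco : |((⌊Int.fract θ / x⌋ : ℤ) : ℝ) - Int.fract θ * ((⌊1/x⌋ : ℤ) : ℝ)| ≤ 1 := by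
        rw [abs_le]
        constructor
        · nlinarith [e1, e2, e3, e4, hθf0, hθf1, hx0]
        · nlinarith [e1, e2, e3, e4, hθf0, hθf1, hx0]
      have hb1 : |(((⌊Int.fract θ / x⌋ : ℤ) : ℝ) - Int.fract θ * ((⌊1/x⌋ : ℤ) : ℝ)) * ff ψ k|
          ≤ x / δ₀ := by
        rw [abs_mul]
        calc |((⌊Int.fract θ / x⌋ : ℤ) : ℝ) - Int.fract θ * ((⌊1/x⌋ : ℤ) : ℝ)| * |ff ψ k|
            ≤ 1 * (x / δ₀) := by
              apply mul_le_mul hco hfk (abs_nonneg _) (by norm_num)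
          _ = x / δ₀ := one_mul _
      have hb3 : |Int.fract θ * ff ψ (⌊1/x⌋ * k)| ≤ x / δ₀ := by
        rw [abs_mul, abs_of_pos hθf0]
        calc Int.fract θ * |ff ψ (⌊1/x⌋ * k)| ≤ 1 * (x / δ₀) := by
              apply mul_le_mul (le_of_lt hθf1) hfk' (abs_nonneg _) (by norm_num)
          _ = x / δ₀ := one_mul _
      calc |(((⌊Int.fract θ / x⌋ : ℤ) : ℝ) - Int.fract θ * ((⌊1/x⌋ : ℤ) : ℝ)) * ff ψ k
            - ff ψ (⌊Int.fract θ / x⌋ * k - 1) + Int.fract θ * ff ψ (⌊1/x⌋ * k)|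
          ≤ |(((⌊Int.fract θ / x⌋ : ℤ) : ℝ) - Int.fract θ * ((⌊1/x⌋ : ℤ) : ℝ)) * ff ψ k|
            + |ff ψ (⌊Int.fract θ / x⌋ * k - 1)| + |Int.fract θ * ff ψ (⌊1/x⌋ * k)| := abs_sub3
        _ ≤ x / δ₀ + x / δ₀ + x / δ₀ := by
            exact add_le_add (add_le_add hb1 hfk'') hb3
        _ ≤ 4 * x / δ₀ := by
            rw [← add_div, ← add_div, div_le_div_iff₀ hδ hδ]
            nlinarith [hx0]
  -- a positive uniform gap for the finitely many relevant Δ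
  have hgap : ∃ μ : ℝ, 0 < μ ∧ ∀ Δ : ℤ, Δ ≠ 0 → |(Δ : ℝ)| ≤ 2/δ₀ + 2 → ∀ w : ℤ,
      μ ≤ |(Δ : ℝ) * Int.fract θ - (w : ℝ)| := by
    have hMR : (2/δ₀ + 2 : ℝ) ≤ (((⌈(2/δ₀ + 2 : ℝ)⌉ : ℤ)) : ℝ) := Int.le_ceil _
    have hM1 : 1 ≤ (⌈(2/δ₀ + 2 : ℝ)⌉ : ℤ) := by
      have h2 : (1 : ℝ) ≤ (((⌈(2/δ₀ + 2 : ℝ)⌉ : ℤ)) : ℝ) := by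
        have : (0:ℝ) < 2/δ₀ := by positivity
        linarith
      exact_mod_cast h2
    have hTne : ((Finset.Icc (-(⌈(2/δ₀ + 2 : ℝ)⌉ : ℤ)) (⌈(2/δ₀ + 2 : ℝ)⌉ : ℤ)).erase 0).Nonempty := by
      refine ⟨1, Finset.mem_erase.mpr ⟨one_ne_zero, Finset.mem_Icc.mpr ⟨by omega, hM1⟩⟩⟩
    refine ⟨((Finset.Icc (-(⌈(2/δ₀ + 2 : ℝ)⌉ : ℤ)) (⌈(2/δ₀ + 2 : ℝ)⌉ : ℤ)).erase 0).inf' hTne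
      (fun Δ => |(Δ : ℝ) * Int.fract θ - (round ((Δ : ℝ) * Int.fract θ) : ℝ)|), ?_, ?_⟩
    · rw [Finset.lt_inf'_iff]
      intro Δ hΔ
      have hΔ0 : Δ ≠ 0 := (Finset.mem_erase.mp hΔ).1
      rw [abs_pos]
      intro h0
      have heq : (Δ : ℝ) * Int.fract θ = ((round ((Δ : ℝ) * Int.fract θ) : ℤ) : ℝ) := by linarith [sub_eq_zero.mp h0]
      exact Int.not_irrational _ (heq ▸ (hirrθf.intCast_mul hΔ0))
    · intro Δ hΔ0 hΔb w
      have hmem : Δ ∈ (Finset.Icc (-(⌈(2/δ₀ + 2 : ℝ)⌉ : ℤ)) (⌈(2/δ₀ + 2 : ℝ)⌉ : ℤ)).erase 0 := by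
        refine Finset.mem_erase.mpr ⟨hΔ0, Finset.mem_Icc.mpr ?_⟩
        have h1 : |(Δ : ℝ)| ≤ (((⌈(2/δ₀ + 2 : ℝ)⌉ : ℤ)) : ℝ) := le_trans hΔb hMR
        obtain ⟨hl, hr⟩ := abs_le.mp h1
        constructor
        · exact_mod_cast hl
        · exact_mod_cast hr
      refine le_trans (Finset.inf'_le _ hmem) (round_le _ w)
  obtain ⟨μ, hμ0, hμle⟩ := hgap
  -- choice of a good threshold
  obtain ⟨β, hβ0, hβ1, hβ2, hβ3, hβ4⟩ : ∃ β : ℝ, 0 < β ∧ β ≤ δ₀/8 ∧ β ≤ Int.fract θ/3 ∧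
      8*β/δ₀ < μ ∧ 8*β/δ₀ < 1 := by
    refine ⟨min (min (δ₀/8) (Int.fract θ/3)) (min (μ*δ₀/9) (δ₀/9)), by positivity, ?_, ?_, ?_, ?_⟩
    · exact le_trans (min_le_left _ _) (min_le_left _ _)
    · exact le_trans (min_le_left _ _) (min_le_right _ _)
    · have h1 : min (min (δ₀/8) (Int.fract θ/3)) (min (μ*δ₀/9) (δ₀/9)) ≤ μ*δ₀/9 :=
        le_trans (min_le_right _ _) (min_le_left _ _)
      rw [div_lt_iff₀ hδ]
      nlinarith
    · have h1 : min (min (δ₀/8) (Int.fract θ/3)) (min (μ*δ₀/9) (δ₀/9)) ≤ δ₀/9 :=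
        le_trans (min_le_right _ _) (min_le_right _ _)
      rw [div_lt_iff₀ hδ]
      nlinarith
  have getx : ∀ β' : ℝ, 0 < β' → ∃ (k m : ℤ) (x : ℝ), x = (m : ℝ) + (k : ℝ)*θ ∧ 0 < x ∧ x ≤ β' := by
    intro β' hβ'
    obtain ⟨m, k, h⟩ := dense_int_add hθ (3*β'/4) (β'/4) (by positivity)
    obtain ⟨hl, hr⟩ := abs_lt.mp h
    exact ⟨k, m, (m : ℝ) + (k : ℝ)*θ, rfl, by linarith, by linarith⟩
  obtain ⟨k₀, m₀, x₀, hx₀, hx₀0, hx₀β⟩ := getx β hβ0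
  obtain ⟨Z₀, W₀, hZ₀b, hr₀⟩ := compute k₀ m₀ x₀ hx₀ hx₀0 (le_trans hx₀β hβ1) (le_trans hx₀β hβ2)
  have hfinal : ψ + (W₀ : ℝ) - Int.fract θ * (Z₀ : ℝ) = 0 := by
    by_contra hne
    have hρ : 0 < |ψ + (W₀ : ℝ) - Int.fract θ * (Z₀ : ℝ)| := abs_pos.mpr hne
    obtain ⟨k₁, m₁, x₁, hx₁, hx₁0, hx₁β⟩ :=
      getx (min β (|ψ + (W₀ : ℝ) - Int.fract θ * (Z₀ : ℝ)| * δ₀/9)) (by positivity)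
    have hx₁β' : x₁ ≤ β := le_trans hx₁β (min_le_left _ _)
    obtain ⟨Z₁, W₁, hZ₁b, hr₁⟩ := compute k₁ m₁ x₁ hx₁ hx₁0 (le_trans hx₁β' hβ1) (le_trans hx₁β' hβ2)
    have hrr : |((W₀ - W₁ : ℤ) : ℝ) - Int.fract θ * ((Z₀ - Z₁ : ℤ) : ℝ)| ≤ 8*β/δ₀ := by
      have e : ((W₀ - W₁ : ℤ) : ℝ) - Int.fract θ * ((Z₀ - Z₁ : ℤ) : ℝ)
          = (ψ + (W₀ : ℝ) - Int.fract θ * (Z₀ : ℝ)) - (ψ + (W₁ : ℝ) - Int.fract θ * (Z₁ : ℝ)) := by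
        push_cast
        ring
      rw [e]
      calc |(ψ + (W₀ : ℝ) - Int.fract θ * (Z₀ : ℝ)) - (ψ + (W₁ : ℝ) - Int.fract θ * (Z₁ : ℝ))|
          ≤ |ψ + (W₀ : ℝ) - Int.fract θ * (Z₀ : ℝ)| + |ψ + (W₁ : ℝ) - Int.fract θ * (Z₁ : ℝ)| :=
            abs_sub _ _
        _ ≤ 4 * x₀ / δ₀ + 4 * x₁ / δ₀ := add_le_add hr₀ hr₁
        _ ≤ 4 * β / δ₀ + 4 * β / δ₀ := by
            apply add_le_add <;> · rw [div_le_div_iff₀ hδ hδ]; nlinarith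
        _ = 8*β/δ₀ := by ring
    have hZeq : Z₀ = Z₁ := by
      by_contra hZne
      have hΔ0 : Z₀ - Z₁ ≠ 0 := sub_ne_zero.mpr hZne
      have hΔb : |((Z₀ - Z₁ : ℤ) : ℝ)| ≤ 2/δ₀ + 2 := by
        push_cast
        calc |(Z₀ : ℝ) - (Z₁ : ℝ)| ≤ |(Z₀ : ℝ)| + |(Z₁ : ℝ)| := abs_sub _ _
          _ ≤ (1/δ₀ + 1) + (1/δ₀ + 1) := add_le_add hZ₀b hZ₁b
          _ = 2/δ₀ + 2 := by ring
      have hge := hμle (Z₀ - Z₁) hΔ0 hΔb (W₀ - W₁)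
      have e2 : |((Z₀ - Z₁ : ℤ) : ℝ) * Int.fract θ - ((W₀ - W₁ : ℤ) : ℝ)|
          = |((W₀ - W₁ : ℤ) : ℝ) - Int.fract θ * ((Z₀ - Z₁ : ℤ) : ℝ)| := by
        rw [abs_sub_comm, mul_comm]
      rw [e2] at hge
      linarith
    have hWeq : W₀ = W₁ := by
      have h0 : W₀ - W₁ = 0 := by
        apply int_zero_of_abs_lt_one
        have e3 : |((W₀ - W₁ : ℤ) : ℝ)|
            = |((W₀ - W₁ : ℤ) : ℝ) - Int.fract θ * ((Z₀ - Z₁ : ℤ) : ℝ)| := by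
          rw [hZeq]
          simp
        rw [e3]
        linarith
      omega
    have hx₁ρ : x₁ ≤ |ψ + (W₀ : ℝ) - Int.fract θ * (Z₀ : ℝ)| * δ₀/9 := le_trans hx₁β (min_le_right _ _)
    have hsm : |ψ + (W₀ : ℝ) - Int.fract θ * (Z₀ : ℝ)| ≤ 4*x₁/δ₀ := by
      rw [hZeq, hWeq]
      exact hr₁
    have h9 : 4*x₁/δ₀ ≤ 4*|ψ + (W₀ : ℝ) - Int.fract θ * (Z₀ : ℝ)|/9 := by
      rw [div_le_div_iff₀ hδ (by norm_num : (0:ℝ) < 9)]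
      nlinarith
    linarith
  refine ⟨Z₀, -Z₀ * ⌊θ⌋ - W₀, ?_⟩
  rw [hθf_def] at hfinal
  push_cast
  nlinarith [hfinal]

private def Ysub (c d : ℝ) : AddSubgroup (ℝ × ℝ) where
  carrier := {p : ℝ × ℝ | ∃ m n k : ℤ, p = ((m : ℝ) + (k : ℝ) * c, (n : ℝ) + (k : ℝ) * d)}
  add_mem' := by
    rintro p q ⟨m, n, k, rfl⟩ ⟨m', n', k', rfl⟩
    refine ⟨m + m', n + n', k + k', ?_⟩
    simp only [Prod.mk_add_mk, Prod.mk.injEq]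
    push_cast
    constructor <;> ring
  zero_mem' := ⟨0, 0, 0, by norm_num; rfl⟩
  neg_mem' := by
    rintro p ⟨m, n, k, rfl⟩
    refine ⟨-m, -n, -k, ?_⟩
    simp only [Prod.neg_mk, Prod.mk.injEq]
    push_cast
    constructor <;> ring

private def Fib (c d : ℝ) : AddSubgroup ℝ where
  carrier := {y : ℝ | ((0 : ℝ), y) ∈ (Ysub c d).topologicalClosure}
  add_mem' := by
    intro y y' hy hy'
    have h := (Ysub c d).topologicalClosure.add_mem hy hy'
    simpa using h
  zero_mem' := by
    exact (Ysub c d).topologicalClosure.zero_mem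
  neg_mem' := by
    intro y hy
    have h := (Ysub c d).topologicalClosure.neg_mem hy
    simpa using h

set_option maxHeartbeats 1000000 in
/-- Kronecker: If `1, c, d` are linearly independent over `ℚ`, then
`Y = { (m + k·c, n + k·d) : m, n, k ∈ ℤ }` is dense in `ℝ²`. -/
theorem dense_kronecker_lattice
    (c d : ℝ) (hli : LinearIndependent ℚ ![(1 : ℝ), c, d]) :
    Dense {p : ℝ × ℝ | ∃ m n k : ℤ,
      p = ((m : ℝ) + (k : ℝ) * c, (n : ℝ) + (k : ℝ) * d)} := by
  have hc : Irrational c := irr_c hli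
  rcases (Fib c d).dense_or_cyclic with hdense | ⟨a, ha⟩
  · -- fiber is dense, hence all of ℝ since it is closed
    have hclosed : IsClosed ((Fib c d) : Set ℝ) := by
      have he : ((Fib c d) : Set ℝ)
          = (fun y : ℝ => ((0 : ℝ), y)) ⁻¹' ((Ysub c d).topologicalClosure : Set (ℝ × ℝ)) := rfl
      rw [he]
      exact ((Ysub c d).isClosed_topologicalClosure).preimage (by continuity)
    have hall : ∀ y : ℝ, ((0 : ℝ), y) ∈ (Ysub c d).topologicalClosure := by
      intro y
      have h1 : closure ((Fib c d) : Set ℝ) = Set.univ := hdense.closure_eq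
      rw [hclosed.closure_eq] at h1
      exact (h1 ▸ Set.mem_univ y : y ∈ ((Fib c d) : Set ℝ))
    rw [Metric.dense_iff]
    intro p r hr
    obtain ⟨m, k, hmk⟩ := dense_int_add hc p.1 (r / 2) (by linarith)
    have hw := hall (p.2 - (k : ℝ) * d)
    have hwc : ((0 : ℝ), p.2 - (k : ℝ) * d) ∈ closure ((Ysub c d) : Set (ℝ × ℝ)) := hw
    rw [Metric.mem_closure_iff] at hwc
    obtain ⟨q, hq, hdq⟩ := hwc (r / 2) (by linarith)
    refine ⟨(((m : ℝ) + (k : ℝ) * c, ((0 : ℤ) : ℝ) + (k : ℝ) * d)) + q, ?_,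
      (Ysub c d).add_mem ⟨m, 0, k, rfl⟩ hq⟩
    rw [Metric.mem_ball, Prod.dist_eq, max_lt_iff]
    have e1 : dist (0 : ℝ) q.1 < r / 2 := by
      refine lt_of_le_of_lt ?_ hdq
      rw [Prod.dist_eq]
      exact le_max_left _ _
    have e2 : dist (p.2 - (k : ℝ) * d) q.2 < r / 2 := by
      refine lt_of_le_of_lt ?_ hdq
      rw [Prod.dist_eq]
      exact le_max_right _ _
    rw [Real.dist_eq] at e1 e2
    obtain ⟨a1, a2⟩ := abs_lt.mp hmk
    obtain ⟨b1, b2⟩ := abs_lt.mp e1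
    obtain ⟨c1, c2⟩ := abs_lt.mp e2
    constructor
    · simp only [Prod.fst_add]
      rw [Real.dist_eq, abs_lt]
      constructor <;> linarith
    · simp only [Prod.snd_add]
      rw [Real.dist_eq, abs_lt]
      push_cast
      constructor <;> linarith
  · -- fiber is cyclic: we derive a contradiction with linear independence
    exfalso
    have h1F : (1 : ℝ) ∈ Fib c d :=
      (Ysub c d).le_topologicalClosure (⟨0, 1, 0, by norm_num⟩ : ((0:ℝ), (1:ℝ)) ∈ Ysub c d)
    rw [ha, AddSubgroup.mem_closure_singleton] at h1F
    obtain ⟨s, hs⟩ := h1F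
    have hs0 : s ≠ 0 := by
      rintro rfl
      simp at hs
    rw [zsmul_eq_mul] at hs
    -- step (*): continuity of the implicit character at 0
    have C1 : ∀ ε : ℝ, 0 < ε → ∃ δ : ℝ, 0 < δ ∧ ∀ k m : ℤ, |(m : ℝ) + (k : ℝ) * c| < δ →
        ∃ j : ℤ, |(k : ℝ) * d - (j : ℝ) * a| < ε := by
      intro ε hε
      by_contra hcon
      push_neg at hcon
      have hseq : ∀ n : ℕ, ∃ k m : ℤ, |(m : ℝ) + (k : ℝ) * c| < 1 / (n + 1) ∧
          ∀ j : ℤ, ε ≤ |(k : ℝ) * d - (j : ℝ) * a| := by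
        intro n
        obtain ⟨k, m, h1, h2⟩ := hcon (1 / (n + 1)) (by positivity)
        exact ⟨k, m, h1, h2⟩
      choose K M hKM hKj using hseq
      have hyIcc : ∀ n, (K n : ℝ) * d - (⌊(K n : ℝ) * d⌋ : ℝ) ∈ Set.Icc (0 : ℝ) 1 := by
        intro n
        constructor
        · linarith [Int.floor_le ((K n : ℝ) * d)]
        · linarith [Int.lt_floor_add_one ((K n : ℝ) * d)]
      obtain ⟨y₀, hy₀, φ, hφ, hconv⟩ := isCompact_Icc.tendsto_subseq hyIcc
      have hmem : ∀ n, (((M n : ℝ) + (K n : ℝ) * c),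
          ((K n : ℝ) * d - (⌊(K n : ℝ) * d⌋ : ℝ))) ∈ Ysub c d := by
        intro n
        refine ⟨M n, -⌊(K n : ℝ) * d⌋, K n, ?_⟩
        simp only [Prod.mk.injEq]
        push_cast
        exact ⟨trivial, by ring⟩
      have hx0 : Filter.Tendsto (fun n => (M (φ n) : ℝ) + (K (φ n) : ℝ) * c) Filter.atTop (nhds 0) := by
        have hb : ∀ n : ℕ, ‖(M (φ n) : ℝ) + (K (φ n) : ℝ) * c‖ ≤ 1 / ((n : ℝ) + 1) := by
          intro n
          rw [Real.norm_eq_abs]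
          have h1 : |(M (φ n) : ℝ) + (K (φ n) : ℝ) * c| < 1 / ((φ n : ℝ) + 1) := hKM (φ n)
          have h2 : (1 : ℝ) / ((φ n : ℝ) + 1) ≤ 1 / ((n : ℝ) + 1) := by
            apply one_div_le_one_div_of_le (by positivity)
            have : (n : ℝ) ≤ (φ n : ℝ) := by exact_mod_cast hφ.le_apply
            linarith
          exact le_trans (le_of_lt h1) h2
        exact squeeze_zero_norm hb tendsto_one_div_add_atTop_nhds_zero_nat
      have hlim : Filter.Tendsto
          (fun n => (((M (φ n) : ℝ) + (K (φ n) : ℝ) * c),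
            ((K (φ n) : ℝ) * d - (⌊(K (φ n) : ℝ) * d⌋ : ℝ)))) Filter.atTop (nhds ((0 : ℝ), y₀)) :=
        hx0.prodMk_nhds hconv
      have hy₀G : ((0 : ℝ), y₀) ∈ (Ysub c d).topologicalClosure :=
        mem_closure_of_tendsto hlim (Filter.Eventually.of_forall fun n => hmem (φ n))
      have hy₀F : y₀ ∈ Fib c d := hy₀G
      rw [ha, AddSubgroup.mem_closure_singleton] at hy₀F
      obtain ⟨j₀, hj₀⟩ := hy₀F
      rw [zsmul_eq_mul] at hj₀
      have hKj' : ∀ n, ε ≤ |((K (φ n) : ℝ) * d - (⌊(K (φ n) : ℝ) * d⌋ : ℝ)) - (j₀ : ℝ) * a| := by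
        intro n
        have h := hKj (φ n) (j₀ + ⌊(K (φ n) : ℝ) * d⌋ * s)
        have e : (K (φ n) : ℝ) * d - ((j₀ + ⌊(K (φ n) : ℝ) * d⌋ * s : ℤ) : ℝ) * a
            = ((K (φ n) : ℝ) * d - (⌊(K (φ n) : ℝ) * d⌋ : ℝ)) - (j₀ : ℝ) * a := by
          push_cast
          linear_combination (-((⌊(K (φ n) : ℝ) * d⌋ : ℤ) : ℝ)) * hs
        rw [e] at h
        exact h
      have hlim2 : Filter.Tendsto
          (fun n => |((K (φ n) : ℝ) * d - (⌊(K (φ n) : ℝ) * d⌋ : ℝ)) - (j₀ : ℝ) * a|)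
          Filter.atTop (nhds |y₀ - (j₀ : ℝ) * a|) :=
        ((hconv.sub tendsto_const_nhds).abs)
      have hε' : ε ≤ |y₀ - (j₀ : ℝ) * a| :=
        ge_of_tendsto hlim2 (Filter.Eventually.of_forall hKj')
      rw [hj₀, sub_self, abs_zero] at hε'
      linarith
    -- build the hypothesis of lemma_L
    obtain ⟨δ, hδ0, hδprop⟩ := C1 (1 / (8 * (|(s : ℝ)| + 1))) (by positivity)
    have habs : (0 : ℝ) < |(s : ℝ)| := by
      rw [abs_pos]
      exact_mod_cast hs0
    have H : ∀ k m : ℤ, |(m : ℝ) + (k : ℝ) * c| < min δ (1 / 2) →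
        ∃ j : ℤ, |(k : ℝ) * ((s : ℝ) * d) - (j : ℝ)| < 1 / 8 := by
      intro k m hkm
      obtain ⟨j₀, hj₀⟩ := hδprop k m (lt_of_lt_of_le hkm (min_le_left _ _))
      refine ⟨j₀, ?_⟩
      have e : (k : ℝ) * ((s : ℝ) * d) - (j₀ : ℝ) = (s : ℝ) * ((k : ℝ) * d - (j₀ : ℝ) * a) := by
        linear_combination (j₀ : ℝ) * hs
      rw [e, abs_mul]
      calc |(s : ℝ)| * |(k : ℝ) * d - (j₀ : ℝ) * a|
          < |(s : ℝ)| * (1 / (8 * (|(s : ℝ)| + 1))) := by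
            exact mul_lt_mul_of_pos_left hj₀ habs
        _ ≤ 1 / 8 := by
            rw [mul_one_div, div_le_div_iff₀ (by positivity) (by norm_num)]
            nlinarith
    obtain ⟨u, v, huv⟩ := lemma_L hc (lt_min hδ0 one_half_pos) (min_le_right _ _) H
    have h0 : ((v : ℤ) : ℝ) + (u : ℝ) * c + ((-s : ℤ) : ℝ) * d = 0 := by
      push_cast
      linarith [huv]
    obtain ⟨-, -, hE⟩ := indep3 hli v u (-s) h0
    exact hs0 (by omega)
end
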